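/- arXiv:1811.04966 — 9 statements merged into one kernel-verified Lean document; each statement's English description precedes it below -/
import Mathlib

section
/- Let F be a hyperfield and c_0,…,c_n ∈ F. For a ∈ F, the following are equivalent: (1) 0 belongs to the hypersum ⊞_{i=0}^n c_i a^i; (2) there exist d_0,…,d_{n-1} ∈ F with c_0 = -a·d_0, c_i ∈ (-a·d_i) ⊞ d_{i-1} for i = 1,…,n-1, and c_n = d_{n-1}. -/
/-- A hyperfield: a set with a multivalued addition `hadd`, multiplication `mul`,
distinguished elements `zero` and `one`, satisfying the hypergroup axioms (HG1)-(HG3)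
and the hyperfield axioms (HF1)-(HF4). -/
structure Hyperfield (F : Type*) where
  hadd : F → F → Set F
  mul : F → F → F
  zero : F
  one : F
  /-- the hyperadditive inverse -/
  neg : F → F
  hadd_nonempty : ∀ a b, (hadd a b).Nonempty
  hadd_comm : ∀ a b, hadd a b = hadd b a
  hadd_assoc : ∀ a b c, (⋃ d ∈ hadd b c, hadd a d) = ⋃ d ∈ hadd a b, hadd d c
  zero_hadd : ∀ a, hadd zero a = {a}
  neg_mem : ∀ a, zero ∈ hadd a (neg a)
  neg_unique : ∀ a b, zero ∈ hadd a b → b = neg a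
  reversible : ∀ a b c, a ∈ hadd b c ↔ neg b ∈ hadd (neg a) c
  mul_comm : ∀ a b, mul a b = mul b a
  mul_assoc : ∀ a b c, mul (mul a b) c = mul a (mul b c)
  one_mul : ∀ a, mul one a = a
  exists_inv : ∀ a, a ≠ zero → ∃ b, mul a b = one
  zero_ne_one : zero ≠ one
  mul_zero : ∀ a, mul a zero = zero
  distrib : ∀ a b c, (fun x => mul a x) '' hadd b c = hadd (mul a b) (mul a c)

/-- The hypersum `⊞_{i=0}^{n} f i`, defined by the recursion
`⊞_{i=0}^{n+1} f i = ⋃_{b ∈ ⊞_{i=0}^{n} f i} b ⊞ f (n+1)`. -/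
def Hyperfield.hsum {F : Type*} (H : Hyperfield F) (f : ℕ → F) : ℕ → Set F
  | 0 => {f 0}
  | n + 1 => ⋃ b ∈ H.hsum f n, H.hadd b (f (n + 1))

/-- Powers in a hyperfield. -/
def Hyperfield.pow {F : Type*} (H : Hyperfield F) (a : F) : ℕ → F
  | 0 => H.one
  | n + 1 => H.mul (H.pow a n) a

/-- `HDivRel H a n c d` expresses `p ∈ (T - a) q`, where `p = Σ_{i=0}^n c_i T^i` and
`q = Σ_{i=0}^{n-1} d_i T^i`: namely `c_0 = (-a)·d_0`, `c_i ∈ (-a)·d_i ⊞ d_{i-1}` for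
`1 ≤ i ≤ n-1`, and `c_n = d_{n-1}`. -/
def HDivRel {F : Type*} (H : Hyperfield F) (a : F) (n : ℕ) (c d : ℕ → F) : Prop :=
  c 0 = H.mul (H.neg a) (d 0) ∧
  (∀ i, 1 ≤ i → i ≤ n - 1 → c i ∈ H.hadd (H.mul (H.neg a) (d i)) (d (i - 1))) ∧
  c n = d (n - 1)

section Aux

variable {F : Type*} (H : Hyperfield F)

lemma hf_neg_zero : H.neg H.zero = H.zero :=
  (H.neg_unique H.zero H.zero (by rw [H.zero_hadd]; rfl)).symm

lemma hf_neg_neg (x : F) : H.neg (H.neg x) = x :=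
  (H.neg_unique (H.neg x) x (by rw [H.hadd_comm]; exact H.neg_mem x)).symm

lemma hf_mul_one (x : F) : H.mul x H.one = x := by rw [H.mul_comm]; exact H.one_mul x

lemma hf_zero_mul (x : F) : H.mul H.zero x = H.zero := by rw [H.mul_comm]; exact H.mul_zero x

lemma hf_neg_mul_right (y x : F) : H.mul y (H.neg x) = H.neg (H.mul y x) := by
  apply H.neg_unique
  have : H.zero ∈ (fun t => H.mul y t) '' H.hadd x (H.neg x) :=
    ⟨H.zero, H.neg_mem x, H.mul_zero y⟩
  rwa [H.distrib] at this

lemma hf_neg_mul_left (y x : F) : H.mul (H.neg y) x = H.neg (H.mul y x) := by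
  rw [H.mul_comm, hf_neg_mul_right, H.mul_comm]

lemma hf_neg_one_mul (x : F) : H.mul (H.neg H.one) x = H.neg x := by
  rw [hf_neg_mul_left, H.one_mul]

lemma hf_mul_mem_hadd (u x y z : F) (h : x ∈ H.hadd y z) :
    H.mul u x ∈ H.hadd (H.mul u y) (H.mul u z) := by
  rw [← H.distrib]; exact ⟨x, h, rfl⟩

lemma hf_mul_cancel (u v x y : F) (huv : H.mul u v = H.one)
    (h : H.mul u x = H.mul u y) : x = y := by
  have e : ∀ t, H.mul v (H.mul u t) = t := fun t => by
    rw [← H.mul_assoc, H.mul_comm v u, huv, H.one_mul]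
  rw [← e x, ← e y, h]

lemma hf_mul_mem_hadd_iff (u v x y z : F) (huv : H.mul u v = H.one) :
    H.mul u x ∈ H.hadd (H.mul u y) (H.mul u z) ↔ x ∈ H.hadd y z := by
  constructor
  · intro h
    have h2 := hf_mul_mem_hadd H v _ _ _ h
    have e : ∀ t, H.mul v (H.mul u t) = t := fun t => by
      rw [← H.mul_assoc, H.mul_comm v u, huv, H.one_mul]
    rwa [e, e, e] at h2
  · exact hf_mul_mem_hadd H u x y z

lemma hf_neg_mem_neg (x y z : F) :
    x ∈ H.hadd y z ↔ H.neg x ∈ H.hadd (H.neg y) (H.neg z) := by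
  constructor
  · intro h
    have := hf_mul_mem_hadd H (H.neg H.one) _ _ _ h
    rwa [hf_neg_one_mul, hf_neg_one_mul, hf_neg_one_mul] at this
  · intro h
    have := hf_mul_mem_hadd H (H.neg H.one) _ _ _ h
    rwa [hf_neg_one_mul, hf_neg_one_mul, hf_neg_one_mul,
      hf_neg_neg, hf_neg_neg, hf_neg_neg] at this

lemma hf_mem_rotate (x y z : F) : x ∈ H.hadd y z ↔ z ∈ H.hadd (H.neg y) x :=
  calc x ∈ H.hadd y z ↔ H.neg x ∈ H.hadd (H.neg y) (H.neg z) := hf_neg_mem_neg H x y z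
    _ ↔ y ∈ H.hadd x (H.neg z) := (H.reversible y x (H.neg z)).symm
    _ ↔ y ∈ H.hadd (H.neg z) x := by rw [H.hadd_comm]
    _ ↔ H.neg (H.neg z) ∈ H.hadd (H.neg y) x := H.reversible y (H.neg z) x
    _ ↔ z ∈ H.hadd (H.neg y) x := by rw [hf_neg_neg]

lemma hf_pow_one (a : F) : H.pow a 1 = a := by
  show H.mul (H.pow a 0) a = a
  show H.mul H.one a = a
  exact H.one_mul a

lemma hf_mul_mul_mul_comm (x y z w : F) :
    H.mul (H.mul x y) (H.mul z w) = H.mul (H.mul x z) (H.mul y w) := by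
  rw [H.mul_assoc x y (H.mul z w), ← H.mul_assoc y z w, H.mul_comm y z,
    H.mul_assoc z y w, ← H.mul_assoc x z (H.mul y w)]

lemma hf_pow_mul_pow (a b : F) (hab : H.mul a b = H.one) :
    ∀ k, H.mul (H.pow a k) (H.pow b k) = H.one
  | 0 => H.one_mul H.one
  | k + 1 => by
      show H.mul (H.mul (H.pow a k) a) (H.mul (H.pow b k) b) = H.one
      rw [hf_mul_mul_mul_comm, hf_pow_mul_pow a b hab k, hab, H.one_mul]

lemma hf_hsum_of (f e : ℕ → F) (h0 : e 0 = f 0) :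
    ∀ n, (∀ k, k < n → e (k + 1) ∈ H.hadd (e k) (f (k + 1))) → e n ∈ H.hsum f n
  | 0, _ => by simp [Hyperfield.hsum, h0]
  | n + 1, h => by
      have hn := hf_hsum_of f e h0 n (fun k hk => h k (Nat.lt_succ_of_lt hk))
      show e (n + 1) ∈ ⋃ b ∈ H.hsum f n, H.hadd b (f (n + 1))
      exact Set.mem_biUnion hn (h n (Nat.lt_succ_self n))

lemma hf_exists_of_hsum (f : ℕ → F) :
    ∀ n x, x ∈ H.hsum f n → ∃ e : ℕ → F, e 0 = f 0 ∧
      (∀ k, k < n → e (k + 1) ∈ H.hadd (e k) (f (k + 1))) ∧ e n = x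
  | 0, x, hx => by
      have : x = f 0 := by simpa [Hyperfield.hsum] using hx
      exact ⟨fun _ => x, this, fun k hk => absurd hk (Nat.not_lt_zero k), rfl⟩
  | n + 1, x, hx => by
      have hx' : ∃ b ∈ H.hsum f n, x ∈ H.hadd b (f (n + 1)) := by
        simpa [Hyperfield.hsum, Set.mem_iUnion] using hx
      obtain ⟨b, hb, hxb⟩ := hx'
      obtain ⟨e, he0, hestep, heb⟩ := hf_exists_of_hsum f n b hb
      refine ⟨fun k => if k = n + 1 then x else e k, by simp [he0], ?_, by simp⟩
      intro k hk
      rcases Nat.lt_succ_iff_lt_or_eq.mp hk with hk' | rfl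
      · have h1 : k + 1 ≠ n + 1 := by omega
        have h2 : k ≠ n + 1 := by omega
        simpa [h1, h2, show k ≠ n by omega] using hestep k hk'
      · have h2 : k ≠ k + 1 := by omega
        simpa [h2, heb] using hxb

end Aux

/-- Lemma A (roots): for a polynomial `p = Σ_{i=0}^n c_i T^i` over a hyperfield `F` and
`a ∈ F`, we have `0 ∈ ⊞ c_i a^i` if and only if there exist `d_0, …, d_{n-1}` with
`c_0 = -a·d_0`, `c_i ∈ (-a·d_i) ⊞ d_{i-1}` for `i = 1, …, n-1`, and `c_n = d_{n-1}`. -/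
theorem hyperfield_root_iff {F : Type*} (H : Hyperfield F) (n : ℕ) (hn : 1 ≤ n)
    (c : ℕ → F) (a : F) :
    H.zero ∈ H.hsum (fun i => H.mul (c i) (H.pow a i)) n ↔
      ∃ d : ℕ → F, HDivRel H a n c d := by
  set f : ℕ → F := fun i => H.mul (c i) (H.pow a i) with hf
  have hf0 : f 0 = c 0 := by
    show H.mul (c 0) (H.pow a 0) = c 0
    show H.mul (c 0) H.one = c 0
    exact hf_mul_one H (c 0)
  by_cases ha : a = H.zero
  · subst ha
    have hfs : ∀ i, f (i + 1) = H.zero := fun i => by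
      show H.mul (c (i + 1)) (H.mul (H.pow H.zero i) H.zero) = H.zero
      rw [H.mul_zero, H.mul_zero]
    have hsum_eq : ∀ m, H.hsum f m = {c 0} := by
      intro m; induction m with
      | zero => simp [Hyperfield.hsum, hf0]
      | succ m ih =>
        show (⋃ b ∈ H.hsum f m, H.hadd b (f (m + 1))) = {c 0}
        rw [ih, Set.biUnion_singleton, hfs, H.hadd_comm, H.zero_hadd]
    rw [hsum_eq n]
    simp only [Set.mem_singleton_iff]
    have hneg0 := hf_neg_zero H
    constructor
    · intro h0
      refine ⟨fun i => c (i + 1), ?_, ?_, ?_⟩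
      · rw [hneg0, hf_zero_mul]; exact h0.symm
      · intro i h1 h2
        rw [hneg0, hf_zero_mul, H.zero_hadd]
        have hi : i - 1 + 1 = i := Nat.succ_pred_eq_of_pos h1
        show c i ∈ ({c (i - 1 + 1)} : Set F)
        rw [hi]; rfl
      · have hn1 : n - 1 + 1 = n := Nat.succ_pred_eq_of_pos hn
        show c n = c (n - 1 + 1)
        rw [hn1]
    · rintro ⟨d, hd0, _, _⟩
      rw [hneg0, hf_zero_mul] at hd0
      exact hd0.symm
  · obtain ⟨b, hab⟩ := H.exists_inv a ha
    have hpow : ∀ k, H.mul (H.pow a k) (H.pow b k) = H.one := hf_pow_mul_pow H a b hab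
    constructor
    · intro h0
      obtain ⟨e, he0, hestep, hen⟩ := hf_exists_of_hsum H f n H.zero h0
      set d : ℕ → F := fun i => H.mul (H.neg (e i)) (H.pow b (i + 1)) with hd
      have key : ∀ i, H.mul (H.pow a (i + 1)) (d i) = H.neg (e i) := by
        intro i
        show H.mul (H.pow a (i + 1)) (H.mul (H.neg (e i)) (H.pow b (i + 1))) = _
        rw [H.mul_comm (H.neg (e i)) _, ← H.mul_assoc, hpow, H.one_mul]
      refine ⟨d, ?_, ?_, ?_⟩
      · rw [hf_neg_mul_left]
        have hk0 : H.mul a (d 0) = H.neg (e 0) := by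
          have := key 0; rwa [hf_pow_one] at this
        rw [hk0, hf_neg_neg, he0, hf0]
      · intro i h1 h2
        have hi : i - 1 + 1 = i := Nat.succ_pred_eq_of_pos h1
        have hstep := hestep (i - 1) (by omega)
        rw [hi] at hstep
        have s1 := (H.reversible _ _ _).mp hstep
        rw [← key (i - 1), ← key i, hi] at s1
        have e1 : H.mul (H.pow a (i + 1)) (d i) = H.mul (H.pow a i) (H.mul a (d i)) := by
          show H.mul (H.mul (H.pow a i) a) (d i) = _
          rw [H.mul_assoc]
        have e2 : f i = H.mul (H.pow a i) (c i) := H.mul_comm _ _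
        rw [e1, e2] at s1
        have s2 : d (i - 1) ∈ H.hadd (H.mul a (d i)) (c i) :=
          (hf_mul_mem_hadd_iff H (H.pow a i) (H.pow b i) _ _ _ (hpow i)).mp s1
        rw [hf_neg_mul_left]
        exact (hf_mem_rotate H _ _ _).mp s2
      · have hn1 : n - 1 + 1 = n := Nat.succ_pred_eq_of_pos hn
        have hstep := hestep (n - 1) (by omega)
        rw [hn1, hen] at hstep
        have huniq := H.neg_unique _ _ hstep
        rw [← key (n - 1), hn1] at huniq
        have heq : H.mul (H.pow a n) (c n) = H.mul (H.pow a n) (d (n - 1)) := by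
          rw [← huniq]
          exact (H.mul_comm _ _).symm ▸ (H.mul_comm (H.pow a n) (c n))
        exact hf_mul_cancel H (H.pow a n) (H.pow b n) _ _ (hpow n) heq
    · rintro ⟨d, hd0, hdmid, hdn⟩
      set e : ℕ → F := fun i => if i = n then H.zero else H.neg (H.mul (H.pow a (i + 1)) (d i)) with he
      have hen : e n = H.zero := by simp [he]
      have hene : ∀ i, i ≠ n → e i = H.neg (H.mul (H.pow a (i + 1)) (d i)) := fun i h => by
        simp [he, h]
      have h0 : e 0 = f 0 := by
        rw [hene 0 (by omega), hf0, hf_pow_one, ← hf_neg_mul_left, ← hd0]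
      have hstep : ∀ k, k < n → e (k + 1) ∈ H.hadd (e k) (f (k + 1)) := by
        intro k hk
        rcases eq_or_lt_of_le (Nat.succ_le_of_lt hk) with heq | hlt
        · have hk' : e k = H.neg (f (k + 1)) := by
            rw [hene k (by omega)]
            congr 1
            have hkn : k = n - 1 := by omega
            calc H.mul (H.pow a (k + 1)) (d k)
                = H.mul (H.pow a (k + 1)) (c n) := by rw [hkn, ← hdn]
              _ = H.mul (c n) (H.pow a (k + 1)) := H.mul_comm _ _
              _ = f (k + 1) := by rw [show k + 1 = n from heq]
          have : e (k + 1) = H.zero := by rw [show k + 1 = n from heq, hen]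
          rw [this, hk', H.hadd_comm]
          exact H.neg_mem _
        · have hmid := hdmid (k + 1) (by omega) (by omega)
          simp only [Nat.add_sub_cancel] at hmid
          rw [hf_neg_mul_left] at hmid
          have s2 : d k ∈ H.hadd (H.mul a (d (k + 1))) (c (k + 1)) :=
            (hf_mem_rotate H _ _ _).mpr hmid
          have s1 := hf_mul_mem_hadd H (H.pow a (k + 1)) _ _ _ s2
          rw [hene (k + 1) (by omega), hene k (by omega)]
          have e1 : H.mul (H.pow a (k + 1 + 1)) (d (k + 1))
              = H.mul (H.pow a (k + 1)) (H.mul a (d (k + 1))) := by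
            show H.mul (H.mul (H.pow a (k + 1)) a) (d (k + 1)) = _
            rw [H.mul_assoc]
          have e2 : f (k + 1) = H.mul (H.pow a (k + 1)) (c (k + 1)) := H.mul_comm _ _
          rw [e1, e2]
          exact (H.reversible _ _ _).mp s1
      have := hf_hsum_of H f e h0 n hstep
      rwa [hen] at this
end

section
/- Let K be a field, F a hyperfield, and f : K → F a hyperfield homomorphism. Let p = Σ c_i T^i ∈ K[T] and let p̄ = Σ f(c_i) T^i be the induced polynomial over F. Then for every b ∈ F, mult_b(p̄) ≥ Σ_{a ∈ f^{-1}(b)} mult_a(p), where mult_a(p) is the usual multiplicity of a as a root of p in K and mult_b(p̄) is the hyperfield root multiplicity. -/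
/-- `HMultGe H a n c m` says that the multiplicity of `a` as a root of the polynomial
`p = Σ_{i=0}^n c_i T^i` over the hyperfield `F` is at least `m`, following the recursive
definition `mult_a(p) = 1 + max { mult_a(q) : p ∈ (T-a)q }` (and `mult_a(p) = 0` if `a` is
not a root of `p`). -/
inductive HMultGe {F : Type*} (H : Hyperfield F) (a : F) : ℕ → (ℕ → F) → ℕ → Prop
  | zero (n : ℕ) (c : ℕ → F) : HMultGe H a n c 0
  | succ (n : ℕ) (c d : ℕ → F) (m : ℕ) (hn : 1 ≤ n) (hdiv : HDivRel H a n c d)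
      (hq : HMultGe H a (n - 1) d m) : HMultGe H a n c (m + 1)

open Classical in
/-- Proposition A: if `f : K → F` is a homomorphism from a field `K` to a hyperfield `F`
and `p ∈ K[T]` is nonzero with image `p̄ = Σ f(c_i) T^i`, then for every `b ∈ F`,
`mult_b(p̄) ≥ Σ_{a ∈ f⁻¹(b)} mult_a(p)`. -/
theorem hyperfield_hom_mult_ge {K F : Type*} [Field K] (H : Hyperfield F) (f : K → F)
    (hf0 : f 0 = H.zero) (hf1 : f 1 = H.one)
    (hfmul : ∀ a b : K, f (a * b) = H.mul (f a) (f b))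
    (hfadd : ∀ a b : K, f (a + b) ∈ H.hadd (f a) (f b))
    (p : Polynomial K) (hp : p ≠ 0) (b : F) :
    HMultGe H b p.natDegree (fun i => f (p.coeff i))
      (p.roots.filter (fun a => f a = b)).card := by

  have fneg : ∀ x : K, f (-x) = H.neg (f x) := by
    intro x
    apply H.neg_unique
    have h := hfadd x (-x)
    rw [add_neg_cancel, hf0] at h
    exact h
  suffices h : ∀ m (p : Polynomial K), p ≠ 0 →
      ((p.roots.filter (fun a => f a = b)).card = m) →
      HMultGe H b p.natDegree (fun i => f (p.coeff i)) m from h _ p hp rfl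
  intro m
  induction m with
  | zero => intro p hp _; exact HMultGe.zero _ _
  | succ m ih =>
    intro p hp hcard
    obtain ⟨a, ha⟩ : ∃ a, a ∈ p.roots.filter (fun x => f x = b) := by
      apply Multiset.exists_mem_of_ne_zero
      intro h0; rw [h0] at hcard; simp at hcard
    rw [Multiset.mem_filter] at ha
    obtain ⟨haroot, hab⟩ := ha
    have hroot : p.IsRoot a := (Polynomial.mem_roots hp).1 haroot
    obtain ⟨q, hpq⟩ := Polynomial.dvd_iff_isRoot.2 hroot
    have hq0 : q ≠ 0 := by rintro rfl; rw [mul_zero] at hpq; exact hp hpq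
    have hX : (Polynomial.X - Polynomial.C a) ≠ (0 : Polynomial K) :=
      Polynomial.X_sub_C_ne_zero a
    have hdeg : p.natDegree = q.natDegree + 1 := by
      rw [hpq, Polynomial.natDegree_mul hX hq0, Polynomial.natDegree_X_sub_C]
      ring
    have hroots : p.roots = a ::ₘ q.roots := by
      rw [hpq, Polynomial.roots_mul (hpq ▸ hp), Polynomial.roots_X_sub_C,
        Multiset.singleton_add]
    have hcard' : (q.roots.filter (fun x => f x = b)).card = m := by
      rw [hroots, Multiset.filter_cons, if_pos hab, Multiset.singleton_add,
        Multiset.card_cons] at hcard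
      omega
    have hc0 : p.coeff 0 = (-a) * q.coeff 0 := by
      rw [hpq, Polynomial.mul_coeff_zero]
      simp
    have hci : ∀ i, 1 ≤ i → p.coeff i = (-a) * q.coeff i + q.coeff (i - 1) := by
      intro i hi
      obtain ⟨j, rfl⟩ : ∃ j, i = j + 1 := ⟨i - 1, by omega⟩
      rw [hpq, sub_mul, Polynomial.coeff_sub, Polynomial.coeff_C_mul,
        Polynomial.coeff_X_mul]
      simp
      ring
    have hcn : p.coeff p.natDegree = q.coeff (p.natDegree - 1) := by
      rw [hci p.natDegree (by omega)]
      have : q.coeff p.natDegree = 0 :=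
        Polynomial.coeff_eq_zero_of_natDegree_lt (by omega)
      rw [this, mul_zero, zero_add]
    have hdiv : HDivRel H b p.natDegree (fun i => f (p.coeff i)) (fun i => f (q.coeff i)) := by
      refine ⟨?_, ?_, ?_⟩
      · show f (p.coeff 0) = _
        rw [hc0, hfmul, fneg, hab]
      · intro i hi _
        show f (p.coeff i) ∈ _
        rw [hci i hi]
        have := hfadd ((-a) * q.coeff i) (q.coeff (i - 1))
        rwa [hfmul, fneg, hab] at this
      · show f (p.coeff p.natDegree) = _
        rw [hcn]
    have hrec : HMultGe H b (p.natDegree - 1) (fun i => f (q.coeff i)) m := by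
      have := ih q hq0 hcard'
      rwa [show q.natDegree = p.natDegree - 1 by omega] at this
    exact HMultGe.succ _ _ _ _ (by omega) hdiv hrec
end

section
/- For every polynomial p over the sign hyperfield S, mult_1(p) + mult_{-1}(p) + mult_0(p) ≤ deg(p). -/
/-- Hyperaddition of the sign hyperfield `S = {0, 1, -1}`:
`x ⊞ 0 = {x}`, `1 ⊞ 1 = {1}`, `(-1) ⊞ (-1) = {-1}`, `1 ⊞ (-1) = {0,1,-1}`. -/
def shadd (a b : SignType) : Set SignType :=
  if a = 0 then {b} else if b = 0 then {a} else if a = b then {a} else Set.univ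

/-- The hypersum `⊞_{i=0}^n f i` in the sign hyperfield. -/
def ssum (f : ℕ → SignType) : ℕ → Set SignType
  | 0 => {f 0}
  | n + 1 => ⋃ b ∈ ssum f n, shadd b (f (n + 1))

/-- `SDivRel a n c d` expresses `p ∈ (T - a) q` over the sign hyperfield, where
`p = Σ_{i=0}^n c_i T^i` and `q = Σ_{i=0}^{n-1} d_i T^i`. -/
def SDivRel (a : SignType) (n : ℕ) (c d : ℕ → SignType) : Prop :=
  c 0 = -a * d 0 ∧
  (∀ i, 1 ≤ i → i ≤ n - 1 → c i ∈ shadd (-a * d i) (d (i - 1))) ∧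
  c n = d (n - 1)

/-- `SMultGe a n c m`: the multiplicity of `a` as a root of `p = Σ_{i=0}^n c_i T^i` over
the sign hyperfield is at least `m` (recursively, `mult_a(p) = 0` if `a` is not a root and
`mult_a(p) = 1 + max { mult_a(q) : p ∈ (T-a)q }` otherwise). -/
inductive SMultGe (a : SignType) : ℕ → (ℕ → SignType) → ℕ → Prop
  | zero (n : ℕ) (c : ℕ → SignType) : SMultGe a n c 0
  | succ (n : ℕ) (c d : ℕ → SignType) (m : ℕ) (hn : 1 ≤ n) (hdiv : SDivRel a n c d)
      (hq : SMultGe a (n - 1) d m) : SMultGe a n c (m + 1)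

/-! ### Auxiliary machinery -/

def shaddP (a b x : SignType) : Prop :=
  if a = 0 then x = b else if b = 0 then x = a else if a = b then x = a else True

instance : ∀ a b x : SignType, Decidable (shaddP a b x) := fun a b x => by
  unfold shaddP; infer_instance

lemma mem_shadd {x a b : SignType} : x ∈ shadd a b ↔ shaddP a b x := by
  unfold shadd shaddP; split_ifs <;> simp

lemma shaddP_neg {a b x : SignType} (h : shaddP a b x) : shaddP (-a) (-b) (-x) := by
  revert h; revert a b x; decide

/-- Last nonzero sign among `c 0, ..., c k` (or `0`). -/
def lastSign (c : ℕ → SignType) : ℕ → SignType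
  | 0 => c 0
  | k + 1 => if c (k + 1) = 0 then lastSign c k else c (k + 1)

/-- Number of sign changes in `c 0, ..., c k`. -/
def sgc (c : ℕ → SignType) : ℕ → ℕ
  | 0 => 0
  | k + 1 => sgc c k + (if c (k + 1) ≠ 0 ∧ c (k + 1) = -(lastSign c k) then 1 else 0)

lemma lastSign_eq_self {c : ℕ → SignType} {k : ℕ} (h : c k ≠ 0) : lastSign c k = c k := by
  cases k with
  | zero => rfl
  | succ k => simp [lastSign, h]

lemma lastSign_zero {c : ℕ → SignType} {k : ℕ} (h : ∀ i, i ≤ k → c i = 0) :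
    lastSign c k = 0 := by
  induction k with
  | zero => exact h 0 le_rfl
  | succ k ih =>
    show (if c (k+1) = 0 then lastSign c k else c (k+1)) = 0
    rw [if_pos (h (k+1) le_rfl)]
    exact ih fun i hi => h i (by omega)

lemma lastSign_stable {c : ℕ → SignType} {j k : ℕ} (hjk : j ≤ k)
    (h : ∀ i, j < i → i ≤ k → c i = 0) : lastSign c k = lastSign c j := by
  induction k with
  | zero =>
    have : j = 0 := by omega
    rw [this]
  | succ k ih =>
    rcases Nat.lt_or_ge j (k+1) with hlt | hge
    · have : c (k+1) = 0 := h (k+1) hlt le_rfl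
      simp only [lastSign, this, if_pos rfl]
      exact ih (by omega) fun i h1 h2 => h i h1 (by omega)
    · have : j = k + 1 := by omega
      subst this; rfl

/-- Pure sign-level step lemma, "case B" of the key invariant. -/
lemma stepB : ∀ s t x Lc Ld : SignType, shaddP (-s) t x → (t ≠ 0 → Ld = t) → Lc = -Ld →
    (((s ≠ 0 ∧ s = -Ld) → (x ≠ 0 ∧ x = -Lc)) ∧
      ((if x = 0 then Lc else x) = -(if s = 0 then Ld else s) ∨
        ((x ≠ 0 ∧ x = -Lc) ∧ ¬(s ≠ 0 ∧ s = -Ld)))) := by decide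

/-- Pure sign-level step lemma, "case A" of the key invariant. -/
lemma stepA : ∀ s t x Lc Ld : SignType, shaddP (-s) t x → (t ≠ 0 → Ld = t) →
    (((s ≠ 0 ∧ s = -Ld) → (x ≠ 0 ∧ x = -Lc)) ∨
      (if x = 0 then Lc else x) = -(if s = 0 then Ld else s)) := by decide

/-- Key lemma: dividing by `T - 1` removes at least one sign change. -/
lemma sdiv_one_sgc {n : ℕ} (hn : 1 ≤ n) {c d : ℕ → SignType} (h : SDivRel 1 n c d)
    (hc : c n ≠ 0) : sgc d (n - 1) + 1 ≤ sgc c n := by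
  obtain ⟨h0, hmid, htop⟩ := h
  have hneg1 : ∀ x : SignType, (-1 : SignType) * x = -x := by decide
  have inv : ∀ k, k ≤ n - 1 →
      (sgc d k + 1 ≤ sgc c k) ∨ (sgc d k ≤ sgc c k ∧ lastSign c k = -(lastSign d k)) := by
    intro k
    induction k with
    | zero =>
      intro _
      right
      refine ⟨le_rfl, ?_⟩
      show c 0 = -(d 0)
      rw [h0, hneg1]
    | succ k ih =>
      intro hk
      have hx : shaddP (-(d (k+1))) (d k) (c (k+1)) := by
        have := hmid (k+1) (by omega) hk
        rw [hneg1] at this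
        simpa [mem_shadd] using this
      have hld : d k ≠ 0 → lastSign d k = d k := fun h => lastSign_eq_self h
      have hsgc : sgc c (k+1) = sgc c k +
          (if c (k+1) ≠ 0 ∧ c (k+1) = -(lastSign c k) then 1 else 0) := rfl
      have hsgd : sgc d (k+1) = sgc d k +
          (if d (k+1) ≠ 0 ∧ d (k+1) = -(lastSign d k) then 1 else 0) := rfl
      have hlc : lastSign c (k+1) = if c (k+1) = 0 then lastSign c k else c (k+1) := rfl
      have hldn : lastSign d (k+1) = if d (k+1) = 0 then lastSign d k else d (k+1) := rfl
      rcases ih (by omega) with hA | ⟨hB1, hB2⟩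
      · rcases stepA (d (k+1)) (d k) (c (k+1)) (lastSign c k) (lastSign d k) hx hld with
          hδ | hL
        · left
          rw [hsgc, hsgd]
          by_cases hdc : d (k+1) ≠ 0 ∧ d (k+1) = -(lastSign d k)
          · rw [if_pos hdc, if_pos (hδ hdc)]; omega
          · rw [if_neg hdc]; split_ifs <;> omega
        · right
          constructor
          · rw [hsgc, hsgd]; split_ifs <;> omega
          · rw [hlc, hldn]; exact hL
      · rcases stepB (d (k+1)) (d k) (c (k+1)) (lastSign c k) (lastSign d k) hx hld hB2 with
          ⟨hδ, hL | ⟨hδc, hδd⟩⟩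
        · right
          constructor
          · rw [hsgc, hsgd]
            by_cases hdc : d (k+1) ≠ 0 ∧ d (k+1) = -(lastSign d k)
            · rw [if_pos hdc, if_pos (hδ hdc)]; omega
            · rw [if_neg hdc]; split_ifs <;> omega
          · rw [hlc, hldn]; exact hL
        · left
          rw [hsgc, hsgd, if_pos hδc, if_neg hδd]; omega
  rcases inv (n-1) le_rfl with hA | ⟨hB1, hB2⟩
  · have : sgc c (n-1) ≤ sgc c n := by
      obtain ⟨j, hj⟩ : ∃ j, n = j + 1 := ⟨n - 1, by omega⟩
      subst hj
      simp only [Nat.add_sub_cancel]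
      show sgc c j ≤ sgc c j + _
      omega
    omega
  · have hd : d (n-1) ≠ 0 := by rw [← htop]; exact hc
    have hld : lastSign d (n-1) = d (n-1) := lastSign_eq_self hd
    obtain ⟨j, hj⟩ : ∃ j, n = j + 1 := ⟨n - 1, by omega⟩
    subst hj
    simp only [Nat.add_sub_cancel] at hB1 hB2 hld htop hd ⊢
    have hcond : c (j+1) ≠ 0 ∧ c (j+1) = -(lastSign c j) := by
      refine ⟨hc, ?_⟩
      rw [hB2, neg_neg, hld, htop]
    show sgc d j + 1 ≤ sgc c j + _
    rw [if_pos hcond]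
    omega

/-- Multiplicity at `1` is at most the number of sign changes. -/
lemma mult_one_le {n : ℕ} {c : ℕ → SignType} {m : ℕ} (h : SMultGe 1 n c m) :
    c n ≠ 0 → m ≤ sgc c n := by
  induction h with
  | zero n c => intro _; exact Nat.zero_le _
  | succ n c d m hn hdiv hq ih =>
    intro hc
    have hd : d (n-1) ≠ 0 := by rw [← hdiv.2.2]; exact hc
    have := sdiv_one_sgc hn hdiv hc
    have := ih hd
    omega

/-- Negating all coefficients preserves multiplicities. -/
lemma smultge_neg {a : SignType} {n : ℕ} {c : ℕ → SignType} {m : ℕ} (h : SMultGe a n c m) :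
    SMultGe a n (fun i => -(c i)) m := by
  induction h with
  | zero n c => exact SMultGe.zero n _
  | succ n c d m hn hdiv hq ih =>
    refine SMultGe.succ n _ (fun i => -(d i)) m hn ⟨?_, ?_, ?_⟩ ih
    · show -(c 0) = -a * -(d 0)
      have : ∀ u v : SignType, u * -v = -(u * v) := by decide
      rw [this, hdiv.1]
    · intro i h1 h2
      show -(c i) ∈ shadd (-a * -(d i)) (-(d (i-1)))
      have : ∀ u v : SignType, u * -v = -(u * v) := by decide
      rw [this, mem_shadd]
      exact shaddP_neg (mem_shadd.mp (hdiv.2.1 i h1 h2))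
    · show -(c n) = -(d (n-1))
      rw [hdiv.2.2]

def altc (c : ℕ → SignType) (i : ℕ) : SignType := if Even i then c i else -(c i)

/-- Multiplicity at `-1` equals multiplicity of the alternated polynomial at `1`. -/
lemma smultge_alt {n : ℕ} {c : ℕ → SignType} {m : ℕ} (h : SMultGe (-1) n c m) :
    SMultGe 1 n (altc c) m := by
  induction h with
  | zero n c => exact SMultGe.zero n _
  | succ n c d m hn hdiv hq ih =>
    refine SMultGe.succ n _ (fun i => -(altc d i)) m hn ⟨?_, ?_, ?_⟩ (smultge_neg ih)
    · show altc c 0 = -1 * -(altc d 0)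
      have h1 : ∀ x : SignType, (-1 : SignType) * -x = x := by decide
      have h2 : ∀ x : SignType, (-(-1) : SignType) * x = x := by decide
      rw [h1]
      show (if Even 0 then c 0 else -(c 0)) = (if Even 0 then d 0 else -(d 0))
      simp only [if_pos (Even.zero)]
      rw [hdiv.1, h2]
    · intro i h1 h2
      show altc c i ∈ shadd (-1 * -(altc d i)) (-(altc d (i-1)))
      have hm1 : ∀ x : SignType, (-1 : SignType) * -x = x := by decide
      have hm2 : ∀ x : SignType, (-(-1) : SignType) * x = x := by decide
      rw [hm1]
      have hmid := hdiv.2.1 i h1 h2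
      rw [hm2] at hmid
      obtain ⟨j, rfl⟩ : ∃ j, i = j + 1 := ⟨i - 1, by omega⟩
      simp only [Nat.add_sub_cancel] at hmid ⊢
      by_cases hev : Even (j + 1)
      · have hoj : ¬ Even j := by simpa [Nat.even_add_one] using hev
        simp only [altc, if_pos hev, if_neg hoj, neg_neg]
        exact hmid
      · have hoj : Even j := by
          by_contra hh; exact hev ((Nat.even_add_one).mpr hh)
        simp only [altc, if_neg hev, if_pos hoj]
        rw [mem_shadd]
        exact shaddP_neg (mem_shadd.mp hmid)
    · show altc c n = -(altc d (n-1))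
      obtain ⟨j, rfl⟩ : ∃ j, n = j + 1 := ⟨n - 1, by omega⟩
      simp only [Nat.add_sub_cancel]
      have htop : c (j+1) = d j := hdiv.2.2
      by_cases hev : Even (j + 1)
      · have hoj : ¬ Even j := by simpa [Nat.even_add_one] using hev
        simp only [altc, if_pos hev, if_neg hoj, neg_neg]
        exact htop
      · have hoj : Even j := by
          by_contra hh; exact hev ((Nat.even_add_one).mpr hh)
        simp only [altc, if_neg hev, if_pos hoj]
        rw [htop]

/-- Multiplicity at `0` bounds: the low coefficients vanish. -/
lemma mult_zero_le {n : ℕ} {c : ℕ → SignType} {m : ℕ} (h : SMultGe 0 n c m) :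
    c n ≠ 0 → m ≤ n ∧ ∀ i, i < m → c i = 0 := by
  induction h with
  | zero n c => intro _; exact ⟨Nat.zero_le _, fun i hi => absurd hi (Nat.not_lt_zero i)⟩
  | succ n c d m hn hdiv hq ih =>
    intro hc
    have hz : ∀ x : SignType, (-0 : SignType) * x = 0 := by decide
    have hd : d (n-1) ≠ 0 := by rw [← hdiv.2.2]; exact hc
    obtain ⟨hmn, hdz⟩ := ih hd
    have hmid : ∀ i, 1 ≤ i → i ≤ n - 1 → c i = d (i-1) := by
      intro i h1 h2
      have := hdiv.2.1 i h1 h2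
      rw [hz, mem_shadd] at this
      revert this
      show shaddP 0 (d (i-1)) (c i) → _
      unfold shaddP
      simp
    refine ⟨by omega, ?_⟩
    intro i hi
    cases i with
    | zero => rw [hdiv.1, hz]
    | succ j =>
      have hj : j < m := by omega
      rw [hmid (j+1) (by omega) (by omega), Nat.add_sub_cancel]
      exact hdz j hj

lemma altc_ne_zero {c : ℕ → SignType} {i : ℕ} (h : c i ≠ 0) : altc c i ≠ 0 := by
  unfold altc; split_ifs
  · exact h
  · have hneg : ∀ x : SignType, -x = 0 → x = 0 := by decide
    exact fun hh => h (hneg _ hh)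

lemma altc_eq_zero {c : ℕ → SignType} {i : ℕ} (h : c i = 0) : altc c i = 0 := by
  unfold altc; split_ifs <;> simp [h]

/-- The combinatorial heart: sign changes of `c` and of the alternation of `c`,
plus the number of vanishing low coefficients, are at most `n`. -/
lemma sgc_add_le (n z : ℕ) (c : ℕ → SignType) (hc : c n ≠ 0)
    (hz : ∀ i, i < z → c i = 0) : sgc c n + sgc (altc c) n + z ≤ n := by
  have key : ∀ k, ((∀ i, i ≤ k → c i = 0) ∧ sgc c k = 0 ∧ sgc (altc c) k = 0) ∨
      (∃ j, j ≤ k ∧ c j ≠ 0 ∧ (∀ i, j < i → i ≤ k → c i = 0) ∧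
        sgc c k + sgc (altc c) k + z ≤ j) := by
    intro k
    induction k with
    | zero =>
      by_cases h0 : c 0 = 0
      · left
        exact ⟨fun i hi => by rwa [Nat.le_zero.mp hi], rfl, rfl⟩
      · right
        refine ⟨0, le_rfl, h0, fun i h1 h2 => by omega, ?_⟩
        have : z = 0 := by
          by_contra hzz
          exact h0 (hz 0 (by omega))
        simp [sgc, this]
    | succ k ih =>
      have hsgc : sgc c (k+1) = sgc c k +
          (if c (k+1) ≠ 0 ∧ c (k+1) = -(lastSign c k) then 1 else 0) := rfl
      have hsga : sgc (altc c) (k+1) = sgc (altc c) k +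
          (if altc c (k+1) ≠ 0 ∧ altc c (k+1) = -(lastSign (altc c) k) then 1 else 0) := rfl
      by_cases h0 : c (k+1) = 0
      · have hδc : ¬(c (k+1) ≠ 0 ∧ c (k+1) = -(lastSign c k)) := fun h => h.1 h0
        have hδa : ¬(altc c (k+1) ≠ 0 ∧ altc c (k+1) = -(lastSign (altc c) k)) :=
          fun h => h.1 (altc_eq_zero h0)
        rw [hsgc, hsga, if_neg hδc, if_neg hδa]
        rcases ih with ⟨hall, e1, e2⟩ | ⟨j, hj1, hj2, hj3, hj4⟩
        · left
          refine ⟨fun i hi => ?_, by omega, by omega⟩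
          rcases Nat.lt_or_ge i (k+1) with h | h
          · exact hall i (by omega)
          · have : i = k + 1 := by omega
            rw [this]; exact h0
        · right
          refine ⟨j, by omega, hj2, fun i h1 h2 => ?_, by omega⟩
          rcases Nat.lt_or_ge i (k+1) with h | h
          · exact hj3 i h1 (by omega)
          · have : i = k + 1 := by omega
            rw [this]; exact h0
      · rcases ih with ⟨hall, e1, e2⟩ | ⟨j, hj1, hj2, hj3, hj4⟩
        · -- first nonzero coefficient appears at k+1
          have hlz : lastSign c k = 0 := lastSign_zero hall
          have hlza : lastSign (altc c) k = 0 :=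
            lastSign_zero fun i hi => altc_eq_zero (hall i hi)
          have hδc : ¬(c (k+1) ≠ 0 ∧ c (k+1) = -(lastSign c k)) := by
            rw [hlz, neg_zero]; rintro ⟨h1, h2⟩; exact h1 h2
          have hδa : ¬(altc c (k+1) ≠ 0 ∧ altc c (k+1) = -(lastSign (altc c) k)) := by
            rw [hlza, neg_zero]; rintro ⟨h1, h2⟩; exact h1 h2
          right
          refine ⟨k+1, le_rfl, h0, fun i h1 h2 => by omega, ?_⟩
          rw [hsgc, hsga, if_neg hδc, if_neg hδa]
          have hzk : z ≤ k + 1 := by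
            by_contra hh
            exact h0 (hz (k+1) (by omega))
          omega
        · -- previous nonzero at j, new one at k+1
          have hlc : lastSign c k = c j := by
            rw [lastSign_stable hj1 hj3, lastSign_eq_self hj2]
          have hla : lastSign (altc c) k = altc c j := by
            rw [lastSign_stable hj1 (fun i h1 h2 => altc_eq_zero (hj3 i h1 h2)),
              lastSign_eq_self (altc_ne_zero hj2)]
          right
          refine ⟨k+1, le_rfl, h0, fun i h1 h2 => by omega, ?_⟩
          rw [hsgc, hsga]
          rcases Nat.lt_or_ge j k with hjk | hjk
          · -- gap ≥ 2, both increments are fine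
            split_ifs <;> omega
          · -- j = k : not both increments
            have hjek : j = k := by omega
            subst hjek
            have hnotboth : ¬((c (j+1) ≠ 0 ∧ c (j+1) = -(lastSign c j)) ∧
                (altc c (j+1) ≠ 0 ∧ altc c (j+1) = -(lastSign (altc c) j))) := by
              rw [hlc, hla]
              rintro ⟨⟨-, e1⟩, ⟨-, e2⟩⟩
              have hx0 : ∀ x : SignType, x = -x → x = 0 := by decide
              by_cases hev : Even (j + 1)
              · have hoj : ¬ Even j := by simpa [Nat.even_add_one] using hev
                rw [show altc c (j+1) = c (j+1) from if_pos hev,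
                  show altc c j = -(c j) from if_neg hoj, neg_neg] at e2
                rw [e2] at e1
                exact hj2 (hx0 _ e1)
              · have hoj : Even j := by
                  by_contra hh; exact hev ((Nat.even_add_one).mpr hh)
                rw [show altc c (j+1) = -(c (j+1)) from if_neg hev,
                  show altc c j = c j from if_pos hoj] at e2
                have e2' : c (j+1) = c j := by
                  have := congrArg Neg.neg e2
                  rwa [neg_neg, neg_neg] at this
                rw [e2'] at e1
                exact hj2 (hx0 _ e1)
            split_ifs with hA hB hB
            · exact absurd ⟨hA, hB⟩ hnotboth
            · omega
            · omega
            · omega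
  rcases key n with ⟨hall, _, _⟩ | ⟨j, hj1, _, _, hj4⟩
  · exact absurd (hall n le_rfl) hc
  · omega

/-- For every polynomial `p = Σ_{i=0}^n c_i T^i` of degree `n` over the sign hyperfield,
`mult_1(p) + mult_{-1}(p) + mult_0(p) ≤ deg p`. -/
theorem sum_mult_le_deg (n : ℕ) (c : ℕ → SignType) (hc : c n ≠ 0) :
    ∀ m₁ m₂ m₀ : ℕ, SMultGe 1 n c m₁ → SMultGe (-1) n c m₂ → SMultGe 0 n c m₀ →
      m₁ + m₂ + m₀ ≤ n := by
  intro m₁ m₂ m₀ h1 h2 h0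
  have hm1 : m₁ ≤ sgc c n := mult_one_le h1 hc
  have hm2 : m₂ ≤ sgc (altc c) n := mult_one_le (smultge_alt h2) (altc_ne_zero hc)
  obtain ⟨hm0, hzz⟩ := mult_zero_le h0 hc
  have := sgc_add_le n m₀ c hc hzz
  omega
end

section
/- Let p(T) = T^2 + T + 1 be a polynomial over the weak sign hyperfield W. Then both 1 and -1 are roots of p of multiplicity exactly 2; in particular the sum of multiplicities of roots of p exceeds its degree. -/
/-- Hyperaddition of the weak sign hyperfield `W = {0, 1, -1}`:
`x ⊞ 0 = {x}`, `1 ⊞ 1 = (-1) ⊞ (-1) = {1,-1}`, `1 ⊞ (-1) = {0,1,-1}`. -/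
def whadd (a b : SignType) : Set SignType :=
  if a = 0 then {b} else if b = 0 then {a} else if a = b then {1, -1} else Set.univ

/-- `WDivRel a n c d` expresses `p ∈ (T - a) q` over the weak sign hyperfield. -/
def WDivRel (a : SignType) (n : ℕ) (c d : ℕ → SignType) : Prop :=
  c 0 = -a * d 0 ∧
  (∀ i, 1 ≤ i → i ≤ n - 1 → c i ∈ whadd (-a * d i) (d (i - 1))) ∧
  c n = d (n - 1)

/-- `WMultGe a n c m`: the multiplicity of `a` as a root of `p = Σ_{i=0}^n c_i T^i` over the
weak sign hyperfield is at least `m`. -/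
inductive WMultGe (a : SignType) : ℕ → (ℕ → SignType) → ℕ → Prop
  | zero (n : ℕ) (c : ℕ → SignType) : WMultGe a n c 0
  | succ (n : ℕ) (c d : ℕ → SignType) (m : ℕ) (hn : 1 ≤ n) (hdiv : WDivRel a n c d)
      (hq : WMultGe a (n - 1) d m) : WMultGe a n c (m + 1)

lemma mult_le (a : SignType) (n : ℕ) (c : ℕ → SignType) (m : ℕ) (h : WMultGe a n c m) :
    m ≤ n := by
  induction h with
  | zero => omega
  | succ n c d m hn' hdiv hq ih => omega

lemma not_three (a : SignType) (n : ℕ) (hn : n ≤ 2) (c : ℕ → SignType) (m : ℕ) (hm : 3 ≤ m) :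
    ¬ WMultGe a n c m := fun h => by have := mult_le a n c m h; omega

/-- Over the weak sign hyperfield, both `1` and `-1` are roots of `p(T) = T² + T + 1` of
multiplicity exactly `2`; in particular the sum of the multiplicities of the roots of `p`
exceeds its degree `2`. -/
theorem weak_sign_pathology :
    (WMultGe 1 2 (fun i => if i ≤ 2 then 1 else 0) 2 ∧
      ¬ WMultGe 1 2 (fun i => if i ≤ 2 then 1 else 0) 3) ∧
    (WMultGe (-1) 2 (fun i => if i ≤ 2 then 1 else 0) 2 ∧
      ¬ WMultGe (-1) 2 (fun i => if i ≤ 2 then 1 else 0) 3) ∧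
    2 + 2 > 2 := by
  refine ⟨⟨?_, not_three 1 2 le_rfl _ 3 le_rfl⟩,
    ⟨?_, not_three (-1) 2 le_rfl _ 3 le_rfl⟩, by omega⟩
  · refine WMultGe.succ 2 _ (fun i => if i = 0 then -1 else 1) 1 (by omega) ?_ ?_
    · refine ⟨by decide, ?_, by decide⟩
      intro i h1 h2
      have : i = 1 := by omega
      subst this
      simp [whadd]
    · refine WMultGe.succ 1 _ (fun _ => 1) 0 le_rfl ⟨by decide, ?_, by decide⟩ (WMultGe.zero _ _)
      intro i h1 h2; omega
  · refine WMultGe.succ 2 _ (fun _ => 1) 1 (by omega) ?_ ?_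
    · refine ⟨by decide, ?_, by decide⟩
      intro i h1 h2
      have : i = 1 := by omega
      subst this
      simp [whadd]
    · refine WMultGe.succ 1 _ (fun _ => 1) 0 le_rfl ⟨by decide, ?_, by decide⟩ (WMultGe.zero _ _)
      intro i h1 h2; omega
end

section
/- Let p(T) = c_r T^r + c_{r+1}T^{r+1} + ⋯ + c_n T^n be a polynomial over the Krasner hyperfield K with c_r ≠ 0 and c_n ≠ 0. Then mult_0(p) = r and mult_1(p) = n - r. -/
/-- Hyperaddition of the Krasner hyperfield `K = {0, 1}` (realized as `Bool`, with
`false = 0` and `true = 1`): `0 ⊞ x = x ⊞ 0 = {x}` and `1 ⊞ 1 = {0, 1}`. -/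
def khadd (a b : Bool) : Set Bool :=
  if a = false then {b} else if b = false then {a} else {false, true}

/-- Powers in the Krasner hyperfield (multiplication is `Bool.and`). -/
def kpow (a : Bool) : ℕ → Bool
  | 0 => true
  | n + 1 => kpow a n && a

/-- The hypersum `⊞_{i=0}^n f i` in the Krasner hyperfield. -/
def ksum (f : ℕ → Bool) : ℕ → Set Bool
  | 0 => {f 0}
  | n + 1 => ⋃ b ∈ ksum f n, khadd b (f (n + 1))

/-- `KDivRel a n c d` expresses `p ∈ (T - a) q` over the Krasner hyperfield (here
`-x = x`). -/
def KDivRel (a : Bool) (n : ℕ) (c d : ℕ → Bool) : Prop :=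
  c 0 = (a && d 0) ∧
  (∀ i, 1 ≤ i → i ≤ n - 1 → c i ∈ khadd (a && d i) (d (i - 1))) ∧
  c n = d (n - 1)

/-- `KMultGe a n c m`: the multiplicity of `a` as a root of `p = Σ_{i=0}^n c_i T^i` over
the Krasner hyperfield is at least `m`. -/
inductive KMultGe (a : Bool) : ℕ → (ℕ → Bool) → ℕ → Prop
  | zero (n : ℕ) (c : ℕ → Bool) : KMultGe a n c 0
  | succ (n : ℕ) (c d : ℕ → Bool) (m : ℕ) (hn : 1 ≤ n) (hdiv : KDivRel a n c d)
      (hq : KMultGe a (n - 1) d m) : KMultGe a n c (m + 1)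

lemma khadd_false (a : Bool) : khadd a false = {a} := by
  cases a <;> simp [khadd]

lemma kmult_false_low {n : ℕ} {c : ℕ → Bool} {m : ℕ} (h : KMultGe false n c m) :
    m ≤ n ∧ ∀ i, i < m → c i = false := by
  induction h with
  | zero n c => exact ⟨Nat.zero_le _, fun i hi => absurd hi (by omega)⟩
  | succ n c d m hn hdiv hq ih =>
    obtain ⟨hmn, hd⟩ := ih
    refine ⟨by omega, fun i hi => ?_⟩
    rcases Nat.eq_zero_or_pos i with rfl | hi1
    · simpa using hdiv.1
    · have hik : i ≤ n - 1 := by omega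
      have hm := hdiv.2.1 i hi1 hik
      simp only [Bool.false_and, khadd, if_pos rfl, Set.mem_singleton_iff] at hm
      rw [hm]
      exact hd (i - 1) (by omega)

lemma kmult_false_ge : ∀ (r n : ℕ) (c : ℕ → Bool), r ≤ n →
    (∀ i, i < r → c i = false) → KMultGe false n c r := by
  intro r
  induction r with
  | zero => intro n c _ _; exact KMultGe.zero n c
  | succ s ih =>
    intro n c hrn hlow
    refine KMultGe.succ n c (fun i => c (i + 1)) s (by omega) ⟨?_, ?_, ?_⟩ ?_
    · simp [hlow 0 (by omega)]
    · intro i h1 h2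
      have e : i - 1 + 1 = i := by omega
      simp [khadd, e]
    · have e : n - 1 + 1 = n := by omega
      simp [e]
    · exact ih (n - 1) _ (by omega) (fun i hi => hlow (i + 1) (by omega))

lemma kmult_true_ge : ∀ (k n r : ℕ) (c : ℕ → Bool), n = r + k →
    (∀ i, i < r → c i = false) → c r = true → c n = true → KMultGe true n c k := by
  intro k
  induction k with
  | zero => intro n r c _ _ _ _; exact KMultGe.zero n c
  | succ k ih =>
    intro n r c hn hlow hcr hcn
    set d : ℕ → Bool := fun i => decide (r ≤ i) && decide (i ≤ n - 1) with hd
    have dlow : ∀ i, i < r → d i = false := by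
      intro i hi; simp only [hd, Bool.and_eq_false_iff, decide_eq_false_iff_not]; omega
    have dr : d r = true := by
      simp only [hd, Bool.and_eq_true, decide_eq_true_iff]; omega
    have dtop : d (n - 1) = true := by
      simp only [hd, Bool.and_eq_true, decide_eq_true_iff]; omega
    refine KMultGe.succ n c d k (by omega) ⟨?_, ?_, ?_⟩ ?_
    · simp only [Bool.true_and]
      rcases Nat.eq_zero_or_pos r with rfl | hr
      · rw [dr]; exact hcr
      · rw [dlow 0 hr]; exact hlow 0 hr
    · intro i h1 h2
      simp only [Bool.true_and]
      rcases lt_trichotomy i r with h | rfl | h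
      · rw [dlow i h, dlow (i - 1) (by omega), khadd_false]
        exact hlow i h
      · rw [dr, dlow (i - 1) (by omega)]
        simp [khadd, hcr]
      · have e1 : d i = true := by
          simp only [hd, Bool.and_eq_true, decide_eq_true_iff]; omega
        have e2 : d (i - 1) = true := by
          simp only [hd, Bool.and_eq_true, decide_eq_true_iff]; omega
        rw [e1, e2]
        cases c i <;> simp [khadd]
    · rw [dtop]; exact hcn
    · exact ih (n - 1) r d (by omega) dlow dr dtop

lemma kmult_true_le {n : ℕ} {c : ℕ → Bool} {m : ℕ} (h : KMultGe true n c m) :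
    ∀ r, r ≤ n → (∀ i, i < r → c i = false) → c r = true → m ≤ n - r := by
  induction h with
  | zero => intros; exact Nat.zero_le _
  | succ n c d m hn hdiv hq ih =>
    intro r hrn hlow hcr
    have key : ∀ i, i ≤ n - 1 → i < r ∨ i = r → d i = c i := by
      intro i
      induction i with
      | zero =>
        intro _ _
        have h0 := hdiv.1
        simp only [Bool.true_and] at h0
        exact h0.symm
      | succ i ihi =>
        intro h1 h2
        have e : d i = false := by
          rw [ihi (by omega) (by omega)]
          exact hlow i (by omega)
        have hm := hdiv.2.1 (i + 1) (by omega) h1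
        simp only [Bool.true_and, Nat.add_sub_cancel, e, khadd_false,
          Set.mem_singleton_iff] at hm
        exact hm.symm
    rcases Nat.lt_or_ge r n with hlt | hge
    · have hdr : d r = true := by rw [key r (by omega) (Or.inr rfl)]; exact hcr
      have := ih r (by omega) (fun i hi => by
        rw [key i (by omega) (Or.inl hi)]; exact hlow i hi) hdr
      omega
    · have hd1 : d (n - 1) = false := by
        rw [key (n - 1) le_rfl (Or.inl (by omega))]
        exact hlow (n - 1) (by omega)
      have h2 := hdiv.2.2
      rw [hd1] at h2
      have hrn' : r = n := by omega
      rw [hrn', h2] at hcr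
      exact absurd hcr (by simp)

/-- For a polynomial `p = c_r T^r + ⋯ + c_n T^n` over the Krasner hyperfield with
`c_r ≠ 0` and `c_n ≠ 0`, we have `mult_0(p) = r` and `mult_1(p) = n - r`. -/
theorem krasner_mult (r n : ℕ) (hrn : r ≤ n) (c : ℕ → Bool)
    (hcr : c r = true) (hcn : c n = true) (hlow : ∀ i, i < r → c i = false) :
    (KMultGe false n c r ∧ ¬ KMultGe false n c (r + 1)) ∧
    (KMultGe true n c (n - r) ∧ ¬ KMultGe true n c (n - r + 1)) := by
  refine ⟨⟨kmult_false_ge r n c hrn hlow, fun h => ?_⟩,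
    ⟨kmult_true_ge (n - r) n r c (by omega) hlow hcr hcn, fun h => ?_⟩⟩
  · have := (kmult_false_low h).2 r (by omega)
    rw [this] at hcr; exact absurd hcr (by simp)
  · have := kmult_true_le h r hrn hlow hcr
    omega
end

section
/- Descartes' rule of signs: Let p = Σ c_i T^i be a nonzero real polynomial. Then the number of positive real roots of p, counted with multiplicity, is at most the number of sign changes in the sequence of nonzero coefficients c_0, c_1, …, c_n. Moreover equality holds if p splits into linear factors over ℝ. -/
open Polynomial

/-- The number of sign changes in the coefficient sequence of a real polynomial:
the number of indices `i` such that `c_i` and the next nonzero coefficient `c_{i+k}`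
have opposite signs. -/
noncomputable def realSignChanges (p : Polynomial ℝ) : ℕ :=
  Nat.card {i : ℕ | ∃ k, 1 ≤ k ∧ p.coeff i * p.coeff (i + k) < 0 ∧
    ∀ j, i < j → j < i + k → p.coeff j = 0}

open Finset


def scSet (p : ℝ[X]) : Set ℕ :=
  {i : ℕ | ∃ k, 1 ≤ k ∧ p.coeff i * p.coeff (i + k) < 0 ∧
    ∀ j, i < j → j < i + k → p.coeff j = 0}

lemma sgn_trans {a b c : ℝ} (h1 : 0 < a * b) (h2 : 0 < b * c) : 0 < a * c := by
  nlinarith [mul_pos h1 h2, sq_nonneg b, sq_nonneg (a*c)]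
lemma sgn_trans' {a b c : ℝ} (h1 : a * b < 0) (h2 : 0 < b * c) : a * c < 0 := by
  nlinarith [mul_pos (neg_pos.mpr h1) h2, sq_nonneg b, sq_nonneg (a*c)]

lemma exists_sc_between (p : ℝ[X]) : ∀ d x y, y - x = d → x < y →
    p.coeff x * p.coeff y < 0 → ∃ e ∈ scSet p, x ≤ e ∧ e < y := by
  intro d
  induction d using Nat.strong_induction_on with
  | _ d ih =>
    intro x y hd hxy hsgn
    have hx : p.coeff x ≠ 0 := fun h => by simp [h] at hsgn
    have hy : p.coeff y ≠ 0 := fun h => by simp [h] at hsgn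
    by_cases hm : ∃ j, x < j ∧ j < y ∧ p.coeff j ≠ 0
    · obtain ⟨j, hxj, hjy, hj⟩ := hm
      by_cases hs : p.coeff x * p.coeff j < 0
      · obtain ⟨e, he, h1, h2⟩ := ih (j - x) (by omega) x j rfl hxj hs
        exact ⟨e, he, h1, by omega⟩
      · have hpos : 0 < p.coeff x * p.coeff j :=
          lt_of_le_of_ne (not_lt.mp hs) (Ne.symm (mul_ne_zero hx hj))
        have hs2 : p.coeff j * p.coeff y < 0 := by
          have hyx : p.coeff y * p.coeff x < 0 := by rw [mul_comm]; exact hsgn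
          have h := sgn_trans' hyx hpos
          rw [mul_comm]; exact h
        obtain ⟨e, he, h1, h2⟩ := ih (y - j) (by omega) j y rfl hjy hs2
        exact ⟨e, he, by omega, h2⟩
    · push_neg at hm
      refine ⟨x, ⟨y - x, by omega, ?_, ?_⟩, le_refl x, hxy⟩
      · have : x + (y - x) = y := by omega
        rw [this]; exact hsgn
      · intro j h1 h2
        by_contra hne
        exact hne (hm j h1 (by omega))

lemma pos_of_no_sc (p : ℝ[X]) : ∀ d x y, y - x = d → x < y →
    p.coeff x ≠ 0 → p.coeff y ≠ 0 → (∀ e ∈ scSet p, ¬(x ≤ e ∧ e < y)) →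
    0 < p.coeff x * p.coeff y := by
  intro d
  induction d using Nat.strong_induction_on with
  | _ d ih =>
    intro x y hd hxy hx hy hno
    by_cases hm : ∃ j, x < j ∧ j < y ∧ p.coeff j ≠ 0
    · obtain ⟨j, hxj, hjy, hj⟩ := hm
      have h1 : 0 < p.coeff x * p.coeff j := by
        by_contra hs
        have hs' : p.coeff x * p.coeff j < 0 :=
          lt_of_le_of_ne (not_lt.mp hs) (mul_ne_zero hx hj)
        obtain ⟨e, he, ha, hb⟩ := exists_sc_between p (j - x) x j rfl hxj hs'
        exact hno e he ⟨ha, by omega⟩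
      have h2 : 0 < p.coeff j * p.coeff y := by
        refine ih (y - j) (by omega) j y rfl hjy hj hy ?_
        intro e he ⟨ha, hb⟩; exact hno e he ⟨by omega, hb⟩
      exact sgn_trans h1 h2
    · push_neg at hm
      by_contra hs
      have hs' : p.coeff x * p.coeff y < 0 :=
        lt_of_le_of_ne (not_lt.mp hs) (mul_ne_zero hx hy)
      refine hno x ⟨y - x, by omega, ?_, ?_⟩ ⟨le_refl x, hxy⟩
      · have : x + (y - x) = y := by omega
        rw [this]; exact hs'
      · intro j hj1 hj2
        by_contra hne
        exact hne (hm j hj1 (by omega))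

lemma coeff_ne_zero_of_mem {p : ℝ[X]} {i : ℕ} (h : i ∈ scSet p) : p.coeff i ≠ 0 := by
  obtain ⟨k, _, hlt, _⟩ := h
  intro h0; rw [h0, zero_mul] at hlt; exact lt_irrefl 0 hlt

lemma lt_natDegree_of_mem {p : ℝ[X]} {i : ℕ} (h : i ∈ scSet p) : i < p.natDegree := by
  obtain ⟨k, hk, hlt, _⟩ := h
  have h2 : p.coeff (i + k) ≠ 0 := by
    intro h0; rw [h0, mul_zero] at hlt; exact lt_irrefl 0 hlt
  have := le_natDegree_of_ne_zero h2
  omega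

lemma scSet_finite (p : ℝ[X]) : (scSet p).Finite :=
  (Set.finite_Iio p.natDegree).subset fun _ h => lt_natDegree_of_mem h

noncomputable def scF (p : ℝ[X]) : Finset ℕ := (scSet_finite p).toFinset

lemma mem_scF {p : ℝ[X]} {i : ℕ} : i ∈ scF p ↔ i ∈ scSet p := Set.Finite.mem_toFinset _

def PR (p : ℝ[X]) (x y : ℕ) : Prop := x < y ∧ p.coeff x * p.coeff y < 0

open Classical in
lemma chain_le (p : ℝ[X]) : ∀ (l : List ℕ) (j : ℕ), List.Chain (PR p) j l →
    l.length ≤ ((scF p).filter (fun e => j ≤ e)).card := by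
  intro l
  induction l with
  | nil => intro j _; simp
  | cons a t ih =>
    intro j hch
    rw [List.Chain, List.chain_cons] at hch
    obtain ⟨⟨hja, hsgn⟩, hch⟩ := hch
    obtain ⟨e, he, h1, h2⟩ := exists_sc_between p (a - j) j a rfl hja hsgn
    have hsub : insert e ((scF p).filter (fun x => a ≤ x)) ⊆
        (scF p).filter (fun x => j ≤ x) := by
      intro x hx
      rcases Finset.mem_insert.mp hx with rfl | hx
      · exact Finset.mem_filter.mpr ⟨mem_scF.mpr he, h1⟩
      · obtain ⟨hx1, hx2⟩ := Finset.mem_filter.mp hx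
        exact Finset.mem_filter.mpr ⟨hx1, by omega⟩
    have hnot : e ∉ (scF p).filter (fun x => a ≤ x) := by
      intro hx; have := (Finset.mem_filter.mp hx).2; omega
    calc (a :: t).length = t.length + 1 := rfl
      _ ≤ ((scF p).filter (fun x => a ≤ x)).card + 1 := by
          have := ih a hch; omega
      _ = (insert e ((scF p).filter (fun x => a ≤ x))).card := by
          rw [Finset.card_insert_of_notMem hnot]
      _ ≤ _ := Finset.card_le_card hsub

lemma chain_card_le (p : ℝ[X]) (l : List ℕ) (j : ℕ) (h : List.Chain (PR p) j l) :
    l.length ≤ (scF p).card :=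
  le_trans (chain_le p l j h) (Finset.card_le_card (Finset.filter_subset _ _))

open Classical in
lemma exists_chain_from (p : ℝ[X]) : ∀ (n : ℕ) (e : ℕ), e ∈ scSet p →
    ((scF p).filter (fun x => e < x)).card = n →
    ∃ l, List.Chain (PR p) e l ∧ l.length = n + 1 := by
  intro n
  induction n with
  | zero =>
    intro e he _
    obtain ⟨k, hk, hsgn, _⟩ := he
    exact ⟨[e + k], List.chain_cons.mpr ⟨⟨by omega, hsgn⟩, List.Chain.nil⟩, rfl⟩
  | succ n ih =>
    intro e he hcard
    have hne : ((scF p).filter (fun x => e < x)).Nonempty := by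
      rw [← Finset.card_pos, hcard]; omega
    set e' := ((scF p).filter (fun x => e < x)).min' hne with he'def
    have he'mem := ((scF p).filter (fun x => e < x)).min'_mem hne
    obtain ⟨he'sc, hee'⟩ := Finset.mem_filter.mp he'mem
    have he'sc' : e' ∈ scSet p := mem_scF.mp he'sc
    have hmin : ∀ x ∈ (scF p).filter (fun y => e < y), e' ≤ x :=
      fun x hx => Finset.min'_le _ x hx
    have hsplit : (scF p).filter (fun x => e < x) =
        insert e' ((scF p).filter (fun x => e' < x)) := by
      ext x
      simp only [Finset.mem_filter, Finset.mem_insert]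
      constructor
      · rintro ⟨h1, h2⟩
        have := hmin x (Finset.mem_filter.mpr ⟨h1, h2⟩)
        rcases eq_or_lt_of_le this with h | h
        · exact Or.inl h.symm
        · exact Or.inr ⟨h1, h⟩
      · rintro (rfl | ⟨h1, h2⟩)
        · exact ⟨he'sc, hee'⟩
        · exact ⟨h1, by omega⟩
    have hnotmem : e' ∉ (scF p).filter (fun x => e' < x) := by
      intro h; have := (Finset.mem_filter.mp h).2; omega
    have hcard' : ((scF p).filter (fun x => e' < x)).card = n := by
      rw [hsplit, Finset.card_insert_of_notMem hnotmem] at hcard; omega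
    obtain ⟨l, hch, hlen⟩ := ih e' he'sc' hcard'
    -- show sign change between e and e'
    obtain ⟨k, hk, hsgn, hzero⟩ := he
    have hke' : e + k ≤ e' := by
      by_contra h
      push_neg at h
      have : p.coeff e' = 0 := hzero e' hee' h
      exact coeff_ne_zero_of_mem he'sc' this
    have hsgn' : p.coeff e * p.coeff e' < 0 := by
      rcases eq_or_lt_of_le hke' with h | h
      · rw [← h]; exact hsgn
      · have hno : ∀ x ∈ scSet p, ¬(e + k ≤ x ∧ x < e') := by
          rintro x hx ⟨ha, hb⟩
          have : x ∈ (scF p).filter (fun y => e < y) :=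
            Finset.mem_filter.mpr ⟨mem_scF.mpr hx, by omega⟩
          have := hmin x this; omega
        have hek : p.coeff (e + k) ≠ 0 := by
          intro h0; rw [h0, mul_zero] at hsgn; exact lt_irrefl 0 hsgn
        have hpos := pos_of_no_sc p (e' - (e+k)) (e+k) e' rfl h hek
          (coeff_ne_zero_of_mem he'sc') hno
        exact sgn_trans' hsgn hpos
    exact ⟨e' :: l, List.chain_cons.mpr ⟨⟨hee', hsgn'⟩, hch⟩, by simp [hlen]⟩

open Classical in
lemma exists_max_chain (p : ℝ[X]) (hp : p ≠ 0) :
    ∃ j l, p.coeff j ≠ 0 ∧ List.Chain (PR p) j l ∧ l.length = (scF p).card := by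
  rcases Nat.eq_zero_or_pos (scF p).card with h0 | hpos
  · exact ⟨p.natDegree, [], by simpa using leadingCoeff_ne_zero.mpr hp,
      List.Chain.nil, by simp [h0]⟩
  · have hne : (scF p).Nonempty := Finset.card_pos.mp hpos
    set e := (scF p).min' hne with hedef
    have hemem := (scF p).min'_mem hne
    have hesc : e ∈ scSet p := mem_scF.mp hemem
    have hcard : ((scF p).filter (fun x => e < x)).card = (scF p).card - 1 := by
      have : (scF p).filter (fun x => e < x) = (scF p).erase e := by
        ext x
        simp only [Finset.mem_filter, Finset.mem_erase]
        constructor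
        · rintro ⟨h1, h2⟩; exact ⟨by omega, h1⟩
        · rintro ⟨h1, h2⟩
          have := Finset.min'_le _ x h2
          exact ⟨h2, lt_of_le_of_ne this (Ne.symm h1)⟩
      rw [this, Finset.card_erase_of_mem hemem]
    obtain ⟨l, hch, hlen⟩ := exists_chain_from p ((scF p).card - 1) e hesc hcard
    exact ⟨e, l, coeff_ne_zero_of_mem hesc, hch, by omega⟩

section Key
variable {q : ℝ[X]} {a : ℝ}

lemma coeff_zero_eq (q : ℝ[X]) (a : ℝ) : ((X - C a) * q).coeff 0 = -(a * q.coeff 0) := by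
  rw [mul_coeff_zero]
  simp

lemma coeff_succ_eq (q : ℝ[X]) (a : ℝ) (j : ℕ) :
    ((X - C a) * q).coeff (j + 1) = q.coeff j - a * q.coeff (j + 1) := by
  rw [sub_mul, coeff_sub, coeff_X_mul, coeff_C_mul]

lemma Fsum (q : ℝ[X]) (a : ℝ) (j : ℕ) :
    ∑ i ∈ range (j + 1), ((X - C a) * q).coeff i * a ^ i = -(a ^ (j + 1) * q.coeff j) := by
  induction j with
  | zero => simp [coeff_zero_eq]
  | succ j ih =>
    rw [Finset.sum_range_succ, ih, coeff_succ_eq]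
    ring

lemma Tsum (q : ℝ[X]) (a : ℝ) (j N : ℕ) (hjN : j ≤ N) (hN : ((X - C a) * q).natDegree ≤ N) :
    ∑ i ∈ Ico (j + 1) (N + 1), ((X - C a) * q).coeff i * a ^ i = a ^ (j + 1) * q.coeff j := by
  have heval : ((X - C a) * q).eval a = 0 := by simp
  have hsum : ∑ i ∈ range (N + 1), ((X - C a) * q).coeff i * a ^ i = 0 := by
    rw [← eval_eq_sum_range' (by omega)]
    exact heval
  have hsplit : ∑ i ∈ range (j + 1), ((X - C a) * q).coeff i * a ^ i
      + ∑ i ∈ Ico (j + 1) (N + 1), ((X - C a) * q).coeff i * a ^ i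
      = ∑ i ∈ range (N + 1), ((X - C a) * q).coeff i * a ^ i := by
    rw [Finset.range_eq_Ico, Finset.range_eq_Ico]
    exact Finset.sum_Ico_consecutive (M := ℝ) (n := j + 1) (k := N + 1) _ (Nat.zero_le _) (by omega)
  rw [hsum, Fsum q a j] at hsplit
  linarith

lemma exists_pos_term (p : ℝ[X]) {a : ℝ} (ha : 0 < a) (s : Finset ℕ) (t : ℝ)
    (h : 0 < (∑ i ∈ s, p.coeff i * a ^ i) * t) : ∃ i ∈ s, 0 < p.coeff i * t := by
  by_contra hc
  push_neg at hc
  have : (∑ i ∈ s, p.coeff i * a ^ i) * t = ∑ i ∈ s, (p.coeff i * t) * a ^ i := by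
    rw [Finset.sum_mul]; apply Finset.sum_congr rfl; intros; ring
  rw [this] at h
  have : ∑ i ∈ s, (p.coeff i * t) * a ^ i ≤ 0 :=
    Finset.sum_nonpos fun i hi =>
      mul_nonpos_of_nonpos_of_nonneg (hc i hi) (pow_nonneg ha.le i)
  linarith
end Key

lemma sgn_helper {a b c d : ℝ} (h1 : 0 < a * b) (h2 : 0 < c * d) (h3 : b * d < 0) :
    a * c < 0 := by nlinarith [mul_pos h1 h2, sq_nonneg (b*d), sq_nonneg (a*c)]

lemma key_aux {a : ℝ} (ha : 0 < a) (q : ℝ[X]) :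
    ∀ (l : List ℕ) (j : ℕ), List.Chain (PR q) j l → q.coeff j ≠ 0 →
    ∃ (l' : List ℕ) (k : ℕ), List.Chain (PR ((X - C a) * q)) k l' ∧
      l'.length = l.length ∧ j < k ∧ 0 < ((X - C a) * q).coeff k * q.coeff j := by
  intro l
  induction l with
  | nil =>
    intro j _ hj
    set p := (X - C a) * q with hp
    set N := max p.natDegree j with hN
    have hsum := Tsum q a j N (le_max_right _ _) (le_max_left _ _)
    have hpos : 0 < (∑ i ∈ Ico (j + 1) (N + 1), p.coeff i * a ^ i) * q.coeff j := by
      rw [hsum]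
      have : a ^ (j + 1) * q.coeff j * q.coeff j = a ^ (j + 1) * (q.coeff j * q.coeff j) := by
        ring
      rw [this]
      exact mul_pos (pow_pos ha _) (mul_self_pos.mpr hj)
    obtain ⟨i, hi, hipos⟩ := exists_pos_term p ha _ _ hpos
    obtain ⟨hi1, _⟩ := Finset.mem_Ico.mp hi
    exact ⟨[], i, List.Chain.nil, rfl, by omega, hipos⟩
  | cons j' t ih =>
    intro j hch hj
    rw [List.Chain, List.chain_cons] at hch
    obtain ⟨⟨hjj', hsgn⟩, hch⟩ := hch
    have hj' : q.coeff j' ≠ 0 := by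
      intro h0; rw [h0, mul_zero] at hsgn; exact lt_irrefl 0 hsgn
    obtain ⟨l'', k', hch', hlen', hjk', hsgn'⟩ := ih j' hch hj'
    set p := (X - C a) * q with hp
    -- middle sum over Ico (j+1) (j'+1)
    have hmid : ∑ i ∈ Ico (j + 1) (j' + 1), p.coeff i * a ^ i
        = a ^ (j + 1) * q.coeff j - a ^ (j' + 1) * q.coeff j' := by
      have hsplit : ∑ i ∈ range (j + 1), p.coeff i * a ^ i
          + ∑ i ∈ Ico (j + 1) (j' + 1), p.coeff i * a ^ i
          = ∑ i ∈ range (j' + 1), p.coeff i * a ^ i := by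
        rw [Finset.range_eq_Ico, Finset.range_eq_Ico]
        exact Finset.sum_Ico_consecutive (M := ℝ) (n := j + 1) (k := j' + 1) _ (Nat.zero_le _) (by omega)
      rw [Fsum q a j, Fsum q a j'] at hsplit
      linarith
    have hpos : 0 < (∑ i ∈ Ico (j + 1) (j' + 1), p.coeff i * a ^ i) * q.coeff j := by
      rw [hmid]
      have h1 : 0 < a ^ (j + 1) * (q.coeff j * q.coeff j) :=
        mul_pos (pow_pos ha _) (mul_self_pos.mpr hj)
      have h2 : 0 < -(a ^ (j' + 1) * (q.coeff j' * q.coeff j)) := by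
        have := mul_pos (pow_pos ha (j' + 1)) (neg_pos.mpr hsgn)
        have hcomm : q.coeff j' * q.coeff j < 0 := by rw [mul_comm]; exact hsgn
        nlinarith [pow_pos ha (j' + 1)]
      nlinarith
    obtain ⟨i, hi, hipos⟩ := exists_pos_term p ha _ _ hpos
    obtain ⟨hi1, hi2⟩ := Finset.mem_Ico.mp hi
    refine ⟨k' :: l'', i, ?_, by simp [hlen'], by omega, hipos⟩
    rw [List.Chain, List.chain_cons]
    refine ⟨⟨by omega, ?_⟩, hch'⟩
    exact sgn_helper hipos hsgn' hsgn

lemma key {a : ℝ} (ha : 0 < a) (q : ℝ[X]) (j : ℕ) (l : List ℕ)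
    (hch : List.Chain (PR q) j l) (hj : q.coeff j ≠ 0) :
    ∃ j' l', List.Chain (PR ((X - C a) * q)) j' l' ∧ l'.length = l.length + 1 := by
  obtain ⟨l', k, hch', hlen, hjk, hsgn⟩ := key_aux ha q l j hch hj
  set p := (X - C a) * q with hp
  -- bottom: find i ≤ j with p.coeff i * q.coeff j < 0
  have hpos : 0 < (∑ i ∈ range (j + 1), p.coeff i * a ^ i) * (-(q.coeff j)) := by
    rw [Fsum q a j]
    have : -(a ^ (j + 1) * q.coeff j) * -q.coeff j
        = a ^ (j + 1) * (q.coeff j * q.coeff j) := by ring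
    rw [this]
    exact mul_pos (pow_pos ha _) (mul_self_pos.mpr hj)
  obtain ⟨i, hi, hipos⟩ := exists_pos_term p ha _ _ hpos
  have hij : i ≤ j := by have := Finset.mem_range.mp hi; omega
  refine ⟨i, k :: l', ?_, by simp [hlen]⟩
  rw [List.Chain, List.chain_cons]
  refine ⟨⟨by omega, ?_⟩, hch'⟩
  have h1 : 0 < p.coeff i * (-(q.coeff j)) := hipos
  nlinarith [sq_nonneg (q.coeff j), mul_pos h1 hsgn, sq_nonneg (p.coeff i * p.coeff k)]

lemma part1_aux : ∀ (n : ℕ) (p : ℝ[X]), p ≠ 0 → p.natDegree ≤ n →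
    Multiset.card (p.roots.filter (fun a => 0 < a)) ≤ (scF p).card := by
  intro n
  induction n with
  | zero =>
    intro p hp hdeg
    have : p.roots = 0 := by
      have := Polynomial.roots_C (p.coeff 0)
      rwa [← Polynomial.eq_C_of_natDegree_eq_zero (Nat.le_zero.mp hdeg)] at this
    simp [this]
  | succ n ih =>
    intro p hp hdeg
    rcases Nat.eq_zero_or_pos (Multiset.card (p.roots.filter (fun a => 0 < a))) with h0 | hpos
    · omega
    · have hne : ∃ a, a ∈ p.roots.filter (fun a => 0 < a) :=
        Multiset.card_pos_iff_exists_mem.mp hpos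
      obtain ⟨b, hb⟩ := hne
      rw [Multiset.mem_filter] at hb
      obtain ⟨hbroot, hbpos⟩ := hb
      have hdvd : X - C b ∣ p := dvd_iff_isRoot.mpr (isRoot_of_mem_roots hbroot)
      obtain ⟨q, hq⟩ := hdvd
      have hq0 : q ≠ 0 := by rintro rfl; simp at hq; exact hp hq
      have hXb : (X - C b) ≠ (0 : ℝ[X]) := X_sub_C_ne_zero b
      have hdegq : p.natDegree = q.natDegree + 1 := by
        rw [hq, natDegree_mul hXb hq0, natDegree_X_sub_C]; omega
      have hroots : p.roots = {b} + q.roots := by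
        rw [hq, roots_mul (hq ▸ hp), roots_X_sub_C]
      have hcard : Multiset.card (p.roots.filter (fun a => 0 < a))
          = Multiset.card (q.roots.filter (fun a => 0 < a)) + 1 := by
        rw [hroots, Multiset.filter_add]
        simp [Multiset.filter_singleton, hbpos]
      have ihq := ih q hq0 (by omega)
      obtain ⟨j, l, hj, hch, hlen⟩ := exists_max_chain q hq0
      obtain ⟨j', l', hch', hlen'⟩ := key hbpos q j l hch hj
      have := chain_card_le ((X - C b) * q) l' j' hch'
      rw [← hq] at this
      omega

lemma part1 (p : ℝ[X]) (hp : p ≠ 0) :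
    Multiset.card (p.roots.filter (fun a => 0 < a)) ≤ (scF p).card :=
  part1_aux p.natDegree p hp le_rfl

open Classical in
noncomputable def nxt (p : ℝ[X]) (e : ℕ) : ℕ :=
  if h : e ∈ scSet p then e + h.choose else e + 1

lemma nxt_spec {p : ℝ[X]} {e : ℕ} (h : e ∈ scSet p) :
    e < nxt p e ∧ p.coeff e * p.coeff (nxt p e) < 0 ∧
    ∀ j, e < j → j < nxt p e → p.coeff j = 0 := by
  rw [nxt, dif_pos h]
  obtain ⟨h1, h2, h3⟩ := h.choose_spec
  exact ⟨by omega, h2, h3⟩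

lemma nxt_coeff_ne_zero {p : ℝ[X]} {e : ℕ} (h : e ∈ scSet p) : p.coeff (nxt p e) ≠ 0 := by
  obtain ⟨_, h2, _⟩ := nxt_spec h
  intro h0; rw [h0, mul_zero] at h2; exact lt_irrefl 0 h2

open Classical in
lemma gap_lemma {p pt : ℝ[X]} (hpne : p ≠ 0)
    (hrel : ∀ i, pt.coeff i = (-1 : ℝ) ^ i * p.coeff i) :
    (scF p).card + (scF pt).card ≤ p.natDegree := by
  have hsupp : ∀ i, pt.coeff i = 0 ↔ p.coeff i = 0 := by
    intro i
    rw [hrel i]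
    constructor
    · intro h
      rcases mul_eq_zero.mp h with h | h
      · exact absurd h (pow_ne_zero i (by norm_num))
      · exact h
    · intro h; rw [h, mul_zero]
  set ψ : ℕ → ℕ := fun e => nxt pt e - 1 with hψ
  have hψe : ∀ e, ψ e = nxt pt e - 1 := fun _ => rfl
  -- images are below natDegree p
  have himg : ∀ e ∈ scSet pt, e ≤ ψ e ∧ ψ e < p.natDegree ∧ ψ e + 1 = nxt pt e := by
    intro e he
    obtain ⟨h1, _, _⟩ := nxt_spec he
    have hnz : p.coeff (nxt pt e) ≠ 0 := fun h => nxt_coeff_ne_zero he ((hsupp _).mpr h)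
    have h2 := le_natDegree_of_ne_zero hnz
    have h3 := hψe e
    exact ⟨by omega, by omega, by omega⟩
  -- ψ is injective on scF pt
  have hinj : Set.InjOn ψ (scF pt : Set ℕ) := by
    have hmono : ∀ e1 e2, e1 ∈ scSet pt → e2 ∈ scSet pt → e1 < e2 → ψ e1 < ψ e2 := by
      intro e1 e2 he1 he2 hlt
      obtain ⟨ha1, _, hz1⟩ := nxt_spec he1
      obtain ⟨ha2, _, _⟩ := nxt_spec he2
      have hle : nxt pt e1 ≤ e2 := by
        by_contra h
        push_neg at h
        exact coeff_ne_zero_of_mem he2 (hz1 e2 hlt h)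
      have h3 := hψe e1; have h4 := hψe e2
      omega
    intro e1 h1 e2 h2 heq
    have h1' : e1 ∈ scSet pt := mem_scF.mp (by simpa using h1)
    have h2' : e2 ∈ scSet pt := mem_scF.mp (by simpa using h2)
    rcases lt_trichotomy e1 e2 with h | h | h
    · exact absurd heq (Nat.ne_of_lt (hmono _ _ h1' h2' h))
    · exact h
    · exact absurd heq.symm (Nat.ne_of_lt (hmono _ _ h2' h1' h))
  -- disjointness of scF p and image
  have hdisj : ∀ e ∈ scSet p, ∀ e' ∈ scSet pt, ψ e' ≠ e := by
    intro e he e' he' heq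
    obtain ⟨ha', hs', hz'⟩ := nxt_spec he'
    have hψ' := hψe e'
    rcases Nat.lt_or_ge (e' + 1) (nxt pt e') with hgt | hle
    · -- nxt pt e' ≥ e' + 2, so e = nxt pt e' - 1 is strictly between
      have h1 : e' < e := by omega
      have h2 : e < nxt pt e' := by omega
      have : pt.coeff e = 0 := hz' e h1 h2
      exact coeff_ne_zero_of_mem he ((hsupp e).mp this)
    · -- nxt pt e' = e' + 1, so e = e'
      have hnn : nxt pt e' = e' + 1 := by omega
      have hee : e = e' := by omega
      subst hee
      rw [hnn] at hs'
      obtain ⟨hb, hsp, hzp⟩ := nxt_spec he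
      have hco : p.coeff (e + 1) ≠ 0 := by
        intro h
        exact nxt_coeff_ne_zero he' (by rw [hnn]; exact (hsupp _).mpr h)
      have hn1 : nxt p e = e + 1 := by
        by_contra h
        have : e + 1 < nxt p e := by omega
        exact hco (hzp (e + 1) (by omega) this)
      rw [hn1] at hsp
      have hparity : pt.coeff e * pt.coeff (e + 1) = -(p.coeff e * p.coeff (e + 1)) := by
        rw [hrel e, hrel (e + 1)]
        have : (-1 : ℝ) ^ e * (-1 : ℝ) ^ (e + 1) = -1 := by
          rw [← pow_add]
          exact Odd.neg_one_pow ⟨e, by ring⟩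
        nlinarith [this]
      rw [hparity] at hs'
      linarith
  -- now count
  have hcard : ((scF p) ∪ (scF pt).image ψ).card ≤ p.natDegree := by
    apply le_trans (Finset.card_le_card
      (show (scF p) ∪ (scF pt).image ψ ⊆ range p.natDegree from ?_))
    · simp
    · intro x hx
      rcases Finset.mem_union.mp hx with hx | hx
      · exact Finset.mem_range.mpr (lt_natDegree_of_mem (mem_scF.mp hx))
      · obtain ⟨e, he, rfl⟩ := Finset.mem_image.mp hx
        exact Finset.mem_range.mpr (himg e (mem_scF.mp he)).2.1
  have hdisj2 : Disjoint (scF p) ((scF pt).image ψ) := by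
    rw [Finset.disjoint_right]
    intro x hx hx2
    obtain ⟨e, he, rfl⟩ := Finset.mem_image.mp hx
    exact hdisj (ψ e) (mem_scF.mp hx2) e (mem_scF.mp he) rfl
  have h1 : ((scF pt).image ψ).card = (scF pt).card := Finset.card_image_of_injOn hinj
  have h2 := Finset.card_union_of_disjoint hdisj2
  omega

lemma coeff_comp_neg (p : ℝ[X]) (i : ℕ) :
    (p.comp (-X)).coeff i = (-1 : ℝ) ^ i * p.coeff i := by
  induction p using Polynomial.induction_on' with
  | add f g hf hg => simp [add_comp, hf, hg]; ring
  | monomial n a =>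
    rw [monomial_comp, neg_pow,
      show (C a * ((-1 : ℝ[X]) ^ n * X ^ n)) = C ((-1) ^ n * a) * X ^ n by
        rw [map_mul, map_pow, map_neg, map_one]; ring]
    rw [coeff_C_mul, coeff_X_pow, coeff_monomial]
    by_cases h : i = n
    · subst h; simp
    · simp [h, Ne.symm h]

lemma comp_neg_dvd (r : ℝ[X]) (b : ℝ) (m : ℕ) (hd : (X - C b) ^ m ∣ r) :
    (X - C (-b)) ^ m ∣ r.comp (-X) := by
  have h1 : ((X - C b) ^ m).comp (-X) ∣ r.comp (-X) := by
    obtain ⟨c, hc⟩ := hd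
    exact ⟨c.comp (-X), by rw [hc, mul_comp]⟩
  have h2 : ((X - C b) ^ m).comp (-X) = (-1) ^ m * (X - C (-b)) ^ m := by
    rw [pow_comp, sub_comp, X_comp, C_comp]
    rw [show (-X - C b : ℝ[X]) = -1 * (X - C (-b)) by rw [map_neg]; ring]
    rw [mul_pow]
  refine dvd_trans ?_ h1
  rw [h2]
  exact dvd_mul_left _ _

open Classical in
lemma negRoots_le (r : ℝ[X]) (hr : r ≠ 0) (hrt : r.comp (-X) ≠ 0) :
    Multiset.card (r.roots.filter (fun x => x < 0)) ≤
    Multiset.card ((r.comp (-X)).roots.filter (fun x => 0 < x)) := by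
  have hle : (r.roots.filter (fun x => x < 0)).map (fun x => -x) ≤
      (r.comp (-X)).roots.filter (fun x => 0 < x) := by
    rw [Multiset.le_iff_count]
    intro b
    rw [show (fun x : ℝ => -x) = Neg.neg from rfl]
    have hcm := Multiset.count_map_eq_count' Neg.neg
      (Multiset.filter (fun x : ℝ => x < 0) r.roots) neg_injective (-b)
    rw [neg_neg] at hcm
    rw [hcm]
    rw [Multiset.count_filter, Multiset.count_filter]
    by_cases hb : 0 < b
    · rw [if_pos (by linarith : -b < 0), if_pos hb, count_roots, count_roots]
      rw [le_rootMultiplicity_iff hrt]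
      have := comp_neg_dvd r (-b) (rootMultiplicity (-b) r) (pow_rootMultiplicity_dvd r (-b))
      rwa [neg_neg] at this
    · rw [if_neg (by intro h; exact hb (by linarith) : ¬(-b < 0)), if_neg hb]
  have := Multiset.card_le_card hle
  rwa [Multiset.card_map] at this

lemma scSet_shift (r : ℝ[X]) (m : ℕ) :
    ∀ e, e ∈ scSet (r * X ^ m) ↔ ∃ i ∈ scSet r, i + m = e := by
  have hc : ∀ d, (r * X ^ m).coeff d = if m ≤ d then r.coeff (d - m) else 0 :=
    fun d => coeff_mul_X_pow' r m d
  intro e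
  constructor
  · rintro ⟨k, hk, hsgn, hz⟩
    have he : m ≤ e := by
      by_contra h
      rw [hc e, if_neg h, zero_mul] at hsgn
      exact lt_irrefl 0 hsgn
    refine ⟨e - m, ⟨k, hk, ?_, ?_⟩, by omega⟩
    · have h1 : (r * X ^ m).coeff e = r.coeff (e - m) := by rw [hc e, if_pos he]
      have h2 : (r * X ^ m).coeff (e + k) = r.coeff (e - m + k) := by
        rw [hc (e + k), if_pos (by omega)]
        congr 1; omega
      rw [h1, h2] at hsgn; exact hsgn
    · intro j h1 h2
      have := hz (j + m) (by omega) (by omega)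
      rw [hc (j + m), if_pos (by omega)] at this
      simpa using this
  · rintro ⟨i, ⟨k, hk, hsgn, hz⟩, rfl⟩
    refine ⟨k, hk, ?_, ?_⟩
    · have h1 : (r * X ^ m).coeff (i + m) = r.coeff i := by
        rw [hc (i + m), if_pos (by omega)]; congr 1; omega
      have h2 : (r * X ^ m).coeff (i + m + k) = r.coeff (i + k) := by
        rw [hc (i + m + k), if_pos (by omega)]; congr 1; omega
      rw [h1, h2]; exact hsgn
    · intro j h1 h2
      rw [hc j, if_pos (by omega)]
      have := hz (j - m) (by omega) (by omega)
      exact this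

lemma scF_shift (r : ℝ[X]) (m : ℕ) : (scF (r * X ^ m)).card = (scF r).card := by
  have : scF (r * X ^ m) = (scF r).image (· + m) := by
    ext e
    rw [mem_scF, scSet_shift]
    simp only [Finset.mem_image, mem_scF]
  rw [this, Finset.card_image_of_injective _ (add_left_injective m)]

lemma posRoots_shift (r : ℝ[X]) (hr : r ≠ 0) (m : ℕ) :
    Multiset.card ((r * X ^ m).roots.filter (fun a => 0 < a)) =
    Multiset.card (r.roots.filter (fun a => 0 < a)) := by
  have hne : r * X ^ m ≠ 0 := mul_ne_zero hr (pow_ne_zero m X_ne_zero)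
  rw [roots_mul hne, Multiset.filter_add]
  have : (X ^ m : ℝ[X]).roots.filter (fun a => 0 < a) = 0 := by
    rw [Multiset.filter_eq_nil]
    intro a ha
    rw [roots_pow, roots_X, Multiset.nsmul_singleton] at ha
    have := Multiset.eq_of_mem_replicate ha
    simp [this]
  rw [this]
  simp


lemma realSignChanges_eq (p : ℝ[X]) : realSignChanges p = (scF p).card :=
  (Nat.card_coe_set_eq _).trans (Set.ncard_eq_toFinset_card _ (scSet_finite p))

/-- Descartes' rule of signs: the number of positive real roots of a nonzero real
polynomial `p`, counted with multiplicity, is at most the number of sign changes in its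
coefficient sequence, with equality if `p` splits into linear factors over `ℝ`. -/
theorem descartes_rule_of_signs (p : Polynomial ℝ) (hp : p ≠ 0) :
    (p.roots.filter (fun a => 0 < a)).card ≤ realSignChanges p ∧
    (p.Splits →
      (p.roots.filter (fun a => 0 < a)).card = realSignChanges p) := by
  rw [realSignChanges_eq]
  refine ⟨part1 p hp, ?_⟩
  intro hsplit
  -- strip off the power of X
  obtain ⟨q, hpq, hnd⟩ := p.exists_eq_pow_rootMultiplicity_mul_and_not_dvd hp 0
  rw [show X - C (0:ℝ) = X from by simp] at hpq hnd
  set m := rootMultiplicity 0 p with hm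
  have hpq' : p = q * X ^ m := by rw [hpq, mul_comm]
  have hq0 : q.coeff 0 ≠ 0 := fun h => hnd (X_dvd_iff.mpr h)
  have hqne : q ≠ 0 := fun h => hq0 (by rw [h]; simp)
  set qt := q.comp (-X) with hqt
  have hqt0 : qt.coeff 0 ≠ 0 := by
    rw [hqt, coeff_comp_neg]; simpa using hq0
  have hqtne : qt ≠ 0 := fun h => hqt0 (by rw [h]; simp)
  have hsplitq : q.Splits := by
    rw [hpq'] at hsplit hp
    exact (splits_mul'.mp hsplit).1.resolve_right (pow_ne_zero m X_ne_zero)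
  have hcardroots : Multiset.card q.roots = q.natDegree := splits_iff_card_roots.mp hsplitq
  have hnz : ∀ x ∈ q.roots, x ≠ 0 := by
    intro x hx h0
    subst h0
    have := isRoot_of_mem_roots hx
    rw [IsRoot, ← coeff_zero_eq_eval_zero] at this
    exact hq0 this
  have hfilters : Multiset.card (q.roots.filter (fun a => 0 < a)) +
      Multiset.card (q.roots.filter (fun a => a < 0)) = Multiset.card q.roots := by
    classical
    have h1 := Multiset.filter_add_not (fun a : ℝ => 0 < a) q.roots
    have h2 : q.roots.filter (fun a => ¬ 0 < a) = q.roots.filter (fun a => a < 0) := by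
      apply Multiset.filter_congr
      intro x hx
      constructor
      · intro h; exact lt_of_le_of_ne (not_lt.mp h) (hnz x hx)
      · intro h; linarith
    rw [h2] at h1
    have := congrArg Multiset.card h1
    rwa [Multiset.card_add] at this
  have hgap : (scF q).card + (scF qt).card ≤ q.natDegree :=
    gap_lemma hqne (coeff_comp_neg q)
  have hle1 := part1 q hqne
  have hle2 := part1 qt hqtne
  have hle3 := negRoots_le q hqne hqtne
  rw [← hqt] at hle3
  have heq : Multiset.card (q.roots.filter (fun a => 0 < a)) = (scF q).card := by omega
  rw [hpq', posRoots_shift q hqne m, scF_shift q m]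
  exact heq
end

section
/- Newton's polygon rule: Let K be a field with valuation v : K → ℝ ∪ {∞}, and let p = Σ_{i=0}^n c_i T^i ∈ K[T] with c_0 ≠ 0 and c_n ≠ 0. For s ∈ ℝ, the number of roots a ∈ K of p with v(a) = s, counted with multiplicity, is at most ν_s(p̄), the length of the projection to the x-axis of the segment of slope -s of the Newton polygon of p (or 0 if no such segment exists). Equality holds if p splits into linear factors over K. -/
open Polynomial

open Classical in
/-- `nuSlope v p s` is `ν_s(p̄)`: the horizontal length of the segment of slope `-s` of
the Newton polygon of `p` (and `0` if there is no such segment).  Concretely, it is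
`max I - min I` where `I` is the set of indices `i` at which `min_j (v(c_j) + j·s)` is
attained. -/
noncomputable def nuSlope {K : Type*} [Field K] (v : K → WithTop ℝ) (p : Polynomial K)
    (s : ℝ) : ℕ :=
  let f : ℕ → WithTop ℝ := fun i => v (p.coeff i) + (((i : ℝ) * s : ℝ) : WithTop ℝ)
  let m := (Finset.range (p.natDegree + 1)).inf f
  let I := (Finset.range (p.natDegree + 1)).filter (fun i => f i = m)
  (WithBot.unbotD 0 I.max) - (WithTop.untopD 0 I.min)

noncomputable def nF {K : Type*} [Field K] (v : K → WithTop ℝ) (p : Polynomial K) (s : ℝ)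
    (i : ℕ) : WithTop ℝ :=
  v (p.coeff i) + (((i : ℝ) * s : ℝ) : WithTop ℝ)

open Classical in
lemma nuSlope_def {K : Type*} [Field K] (v : K → WithTop ℝ) (p : Polynomial K) (s : ℝ) :
    nuSlope v p s =
      ((WithBot.unbotD 0 ((Finset.range (p.natDegree + 1)).filter
        (fun i => nF v p s i = (Finset.range (p.natDegree + 1)).inf (nF v p s))).max) -
      (WithTop.untopD 0 ((Finset.range (p.natDegree + 1)).filter
        (fun i => nF v p s i = (Finset.range (p.natDegree + 1)).inf (nF v p s))).min)) := rfl

section Val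
variable {K : Type*} [Field K] {v : K → WithTop ℝ}

lemma v_one (hv0 : ∀ a : K, v a = ⊤ ↔ a = 0) (hvmul : ∀ a b : K, v (a * b) = v a + v b) :
    v (1 : K) = 0 := by
  have h := hvmul 1 1
  rw [mul_one] at h
  rcases hh : v (1 : K) with _ | r
  · exact absurd ((hv0 1).mp hh) one_ne_zero
  · rw [WithTop.some_eq_coe] at hh
    rw [hh, ← WithTop.coe_add] at h
    have h' : r = r + r := WithTop.coe_eq_coe.mp h
    have : r = 0 := by linarith
    rw [WithTop.some_eq_coe, this, WithTop.coe_zero]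

lemma v_neg (hv0 : ∀ a : K, v a = ⊤ ↔ a = 0) (hvmul : ∀ a b : K, v (a * b) = v a + v b)
    (x : K) : v (-x) = v x := by
  have hm1 : v (-1 : K) = 0 := by
    have h := hvmul (-1) (-1)
    rw [neg_mul_neg, one_mul, v_one hv0 hvmul] at h
    rcases hh : v (-1 : K) with _ | r
    · exact absurd ((hv0 (-1)).mp hh) (by norm_num)
    · rw [WithTop.some_eq_coe] at hh
      rw [hh, ← WithTop.coe_add, ← WithTop.coe_zero] at h
      have h' : (0 : ℝ) = r + r := WithTop.coe_eq_coe.mp h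
      have : r = 0 := by linarith
      rw [WithTop.some_eq_coe, this, WithTop.coe_zero]
  calc v (-x) = v ((-1) * x) := by rw [neg_one_mul]
    _ = v (-1 : K) + v x := hvmul _ _
    _ = v x := by rw [hm1, zero_add]

lemma v_sub_le (hv0 : ∀ a : K, v a = ⊤ ↔ a = 0) (hvmul : ∀ a b : K, v (a * b) = v a + v b)
    (hvadd : ∀ a b : K, min (v a) (v b) ≤ v (a + b)) (x y : K) :
    min (v x) (v y) ≤ v (x - y) := by
  have := hvadd x (-y)
  rwa [v_neg hv0 hvmul, ← sub_eq_add_neg] at this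

lemma v_sub_eq (hv0 : ∀ a : K, v a = ⊤ ↔ a = 0) (hvmul : ∀ a b : K, v (a * b) = v a + v b)
    (hvadd : ∀ a b : K, min (v a) (v b) ≤ v (a + b)) {x y : K} (h : v x ≠ v y) :
    v (x - y) = min (v x) (v y) := by
  refine le_antisymm ?_ (v_sub_le hv0 hvmul hvadd x y)
  rcases lt_or_gt_of_ne h with hlt | hlt
  · rw [min_eq_left hlt.le]
    by_contra hc
    push_neg at hc
    have h2 := hvadd (x - y) y
    rw [sub_add_cancel] at h2
    exact absurd h2 (not_le.mpr (lt_min hc hlt))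
  · rw [min_eq_right hlt.le]
    by_contra hc
    push_neg at hc
    have h2 := v_sub_le hv0 hvmul hvadd x (x - y)
    rw [sub_sub_cancel] at h2
    exact absurd h2 (not_le.mpr (lt_min hlt hc))
end Val
section Char
variable {K : Type*} [Field K] {v : K → WithTop ℝ}

open Classical in
lemma nuSlope_eq_of (hv0 : ∀ a : K, v a = ⊤ ↔ a = 0) (p : Polynomial K) (s : ℝ)
    (m : WithTop ℝ) (B A : ℕ) (hBA : B ≤ A) (hm : m ≠ ⊤)
    (hfB : nF v p s B = m) (hfA : nF v p s A = m)
    (hmin : ∀ i, m ≤ nF v p s i)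
    (hlo : ∀ i, i < B → m < nF v p s i)
    (hhi : ∀ i, A < i → m < nF v p s i) :
    nuSlope v p s = A - B := by
  have hAdeg : A ≤ p.natDegree := by
    by_contra hA
    push_neg at hA
    have hz : p.coeff A = 0 := p.coeff_eq_zero_of_natDegree_lt hA
    rw [nF, hz, (hv0 0).mpr rfl, top_add] at hfA
    exact hm hfA.symm
  have hinf : (Finset.range (p.natDegree + 1)).inf (nF v p s) = m := by
    apply le_antisymm
    · exact hfA ▸ Finset.inf_le (Finset.mem_range.mpr (by omega))
    · exact Finset.le_inf fun i _ => hmin i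
  rw [nuSlope_def, hinf]
  have hAI : A ∈ (Finset.range (p.natDegree + 1)).filter (fun i => nF v p s i = m) :=
    Finset.mem_filter.mpr ⟨Finset.mem_range.mpr (by omega), hfA⟩
  have hBI : B ∈ (Finset.range (p.natDegree + 1)).filter (fun i => nF v p s i = m) :=
    Finset.mem_filter.mpr ⟨Finset.mem_range.mpr (by omega), hfB⟩
  have hmax : ((Finset.range (p.natDegree + 1)).filter (fun i => nF v p s i = m)).max
      = (A : WithBot ℕ) := by
    refine le_antisymm (Finset.max_le fun b hb => ?_) (Finset.le_max hAI)
    rcases Finset.mem_filter.mp hb with ⟨_, hb2⟩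
    by_contra hc
    push_neg at hc
    have hAb : A < b := WithBot.coe_lt_coe.mp hc
    exact (hhi b hAb).ne' hb2
  have hminI : ((Finset.range (p.natDegree + 1)).filter (fun i => nF v p s i = m)).min
      = (B : ℕ∞) := by
    refine le_antisymm (Finset.min_le hBI) (Finset.le_min fun b hb => ?_)
    rcases Finset.mem_filter.mp hb with ⟨_, hb2⟩
    by_contra hc
    have hbB : b < B := by have := not_le.mp hc; exact WithTop.coe_lt_coe.mp this
    exact (hlo b hbB).ne' hb2
  rw [hmax, hminI]; rfl

open Classical in
lemma nuSlope_spec (hv0 : ∀ a : K, v a = ⊤ ↔ a = 0) (p : Polynomial K) (s : ℝ) (hp : p ≠ 0) :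
    ∃ (m : WithTop ℝ) (B A : ℕ), B ≤ A ∧ m ≠ ⊤ ∧ nF v p s B = m ∧ nF v p s A = m ∧
      (∀ i, m ≤ nF v p s i) ∧ (∀ i, i < B → m < nF v p s i) ∧ (∀ i, A < i → m < nF v p s i) ∧
      nuSlope v p s = A - B := by
  set m := (Finset.range (p.natDegree + 1)).inf (nF v p s) with hm
  have htop : ∀ i, p.natDegree < i → nF v p s i = ⊤ := fun i hi => by
    rw [nF, p.coeff_eq_zero_of_natDegree_lt hi, (hv0 0).mpr rfl, top_add]
  have hmin : ∀ i, m ≤ nF v p s i := fun i => by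
    rcases le_or_gt i p.natDegree with hi | hi
    · exact Finset.inf_le (Finset.mem_range.mpr (by omega))
    · rw [htop i hi]; exact le_top
  have hmne : m ≠ ⊤ := by
    intro hc
    have h1 := hmin p.natDegree
    rw [hc, top_le_iff, nF, WithTop.add_eq_top] at h1
    rcases h1 with h1 | h1
    · exact hp (leadingCoeff_eq_zero.mp ((hv0 _).mp h1))
    · exact WithTop.coe_ne_top h1
  set I := (Finset.range (p.natDegree + 1)).filter (fun i => nF v p s i = m) with hI
  have hne : I.Nonempty := by
    obtain ⟨i, hi, hieq⟩ := Finset.exists_mem_eq_inf (Finset.range (p.natDegree + 1))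
      ⟨0, Finset.mem_range.mpr (by omega)⟩ (nF v p s)
    exact ⟨i, Finset.mem_filter.mpr ⟨hi, hieq.symm⟩⟩
  refine ⟨m, I.min' hne, I.max' hne, I.min'_le _ (I.max'_mem hne), hmne,
    (Finset.mem_filter.mp (I.min'_mem hne)).2, (Finset.mem_filter.mp (I.max'_mem hne)).2,
    hmin, ?_, ?_, ?_⟩
  · intro i hi
    refine lt_of_le_of_ne (hmin i) fun hc => ?_
    have : i ∈ I := Finset.mem_filter.mpr ⟨Finset.mem_range.mpr
      (by have := Finset.mem_range.mp (Finset.mem_filter.mp (I.min'_mem hne)).1; omega), hc.symm⟩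
    exact absurd (I.min'_le i this) (by omega)
  · intro i hi
    rcases le_or_gt i p.natDegree with hid | hid
    · refine lt_of_le_of_ne (hmin i) fun hc => ?_
      have : i ∈ I := Finset.mem_filter.mpr ⟨Finset.mem_range.mpr (by omega), hc.symm⟩
      exact absurd (I.le_max' i this) (by omega)
    · rw [htop i hid]; exact hmne.lt_top
  · refine nuSlope_eq_of hv0 p s m _ _ (I.min'_le _ (I.max'_mem hne)) hmne
      (Finset.mem_filter.mp (I.min'_mem hne)).2 (Finset.mem_filter.mp (I.max'_mem hne)).2
      hmin ?_ ?_
    · intro i hi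
      refine lt_of_le_of_ne (hmin i) fun hc => ?_
      have : i ∈ I := Finset.mem_filter.mpr ⟨Finset.mem_range.mpr
        (by have := Finset.mem_range.mp (Finset.mem_filter.mp (I.min'_mem hne)).1; omega), hc.symm⟩
      exact absurd (I.min'_le i this) (by omega)
    · intro i hi
      rcases le_or_gt i p.natDegree with hid | hid
      · refine lt_of_le_of_ne (hmin i) fun hc => ?_
        have : i ∈ I := Finset.mem_filter.mpr ⟨Finset.mem_range.mpr (by omega), hc.symm⟩
        exact absurd (I.le_max' i this) (by omega)
      · rw [htop i hid]; exact hmne.lt_top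
end Char

section Key
variable {K : Type*} [Field K] {v : K → WithTop ℝ}

lemma cast_succ_mul (i : ℕ) (s : ℝ) : ((((i + 1 : ℕ) : ℝ) * s : ℝ) : WithTop ℝ)
    = (((i : ℝ) * s : ℝ) : WithTop ℝ) + ((s : ℝ) : WithTop ℝ) := by
  have h : ((i + 1 : ℕ) : ℝ) * s = (i : ℝ) * s + s := by push_cast; ring
  rw [h, WithTop.coe_add]

lemma master0 (hv0 : ∀ a : K, v a = ⊤ ↔ a = 0) (hvmul : ∀ a b : K, v (a * b) = v a + v b)
    (a : K) (q : Polynomial K) (s : ℝ) :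
    nF v ((X - C a) * q) s 0 = v a + nF v q s 0 := by
  have hc : ((X - C a) * q).coeff 0 = -(a * q.coeff 0) := by
    rw [sub_mul, coeff_sub, coeff_C_mul, mul_coeff_zero, coeff_X_zero, zero_mul, zero_sub]
  rw [nF, nF, hc, v_neg hv0 hvmul, hvmul, add_assoc]

lemma masterLB (hv0 : ∀ a : K, v a = ⊤ ↔ a = 0) (hvmul : ∀ a b : K, v (a * b) = v a + v b)
    (hvadd : ∀ a b : K, min (v a) (v b) ≤ v (a + b))
    (a : K) (q : Polynomial K) (s : ℝ) (i : ℕ) :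
    min (nF v q s i + ((s : ℝ) : WithTop ℝ)) (v a + nF v q s (i + 1))
      ≤ nF v ((X - C a) * q) s (i + 1) := by
  have hc : ((X - C a) * q).coeff (i + 1) = q.coeff i - a * q.coeff (i + 1) := by
    rw [sub_mul, coeff_sub, coeff_X_mul, coeff_C_mul]
  have h := v_sub_le hv0 hvmul hvadd (q.coeff i) (a * q.coeff (i + 1))
  rw [hvmul] at h
  rw [nF, nF, nF, hc, cast_succ_mul]
  calc min (v (q.coeff i) + ((((i : ℝ) * s : ℝ) : WithTop ℝ)) + ((s:ℝ) : WithTop ℝ))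
        (v a + (v (q.coeff (i+1)) + (((((i : ℝ) * s : ℝ)) : WithTop ℝ) + ((s:ℝ) : WithTop ℝ))))
      = min (v (q.coeff i)) (v a + v (q.coeff (i+1)))
          + (((((i : ℝ) * s : ℝ)) : WithTop ℝ) + ((s:ℝ) : WithTop ℝ)) := by
        rw [← min_add_add_right, add_assoc, add_assoc]
    _ ≤ v (q.coeff i - a * q.coeff (i + 1))
          + (((((i : ℝ) * s : ℝ)) : WithTop ℝ) + ((s:ℝ) : WithTop ℝ)) := add_le_add_left h _

lemma masterEQ (hv0 : ∀ a : K, v a = ⊤ ↔ a = 0) (hvmul : ∀ a b : K, v (a * b) = v a + v b)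
    (hvadd : ∀ a b : K, min (v a) (v b) ≤ v (a + b))
    (a : K) (q : Polynomial K) (s : ℝ) (i : ℕ)
    (hne : nF v q s i + ((s : ℝ) : WithTop ℝ) ≠ v a + nF v q s (i + 1)) :
    nF v ((X - C a) * q) s (i + 1)
      = min (nF v q s i + ((s : ℝ) : WithTop ℝ)) (v a + nF v q s (i + 1)) := by
  have hc : ((X - C a) * q).coeff (i + 1) = q.coeff i - a * q.coeff (i + 1) := by
    rw [sub_mul, coeff_sub, coeff_X_mul, coeff_C_mul]
  have hraw : v (q.coeff i) ≠ v a + v (q.coeff (i + 1)) := by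
    intro hcon
    apply hne
    rw [nF, nF, cast_succ_mul, hcon, add_assoc, add_assoc]
  have h := v_sub_eq hv0 hvmul hvadd (x := q.coeff i) (y := a * q.coeff (i + 1))
    (by rw [hvmul]; exact hraw)
  rw [hvmul] at h
  rw [nF, nF, nF, hc, cast_succ_mul, h, ← min_add_add_right, add_assoc, add_assoc]


lemma nuSlope_linear_mul (hv0 : ∀ a : K, v a = ⊤ ↔ a = 0)
    (hvmul : ∀ a b : K, v (a * b) = v a + v b)
    (hvadd : ∀ a b : K, min (v a) (v b) ≤ v (a + b))
    (a : K) (q : Polynomial K) (s : ℝ) (hq : q ≠ 0) :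
    nuSlope v ((X - C a) * q) s
      = nuSlope v q s + (if v a = ((s : ℝ) : WithTop ℝ) then 1 else 0) := by
  obtain ⟨m, B, A, hBA, hm, hfB, hfA, hmin, hlo, hhi, hval⟩ := nuSlope_spec hv0 q s hq
  have hs : ((s : ℝ) : WithTop ℝ) ≠ ⊤ := WithTop.coe_ne_top
  have LB := masterLB hv0 hvmul hvadd a q s
  have EQ := masterEQ hv0 hvmul hvadd a q s
  have Z := master0 hv0 hvmul a q s
  rcases lt_trichotomy (v a) ((s : ℝ) : WithTop ℝ) with hlt | heq | hgt
  · -- v a < s : same B, A, m' = m + v a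
    have ht : v a ≠ ⊤ := hlt.ne_top
    have hmt : m + v a ≠ ⊤ := WithTop.add_ne_top.mpr ⟨hm, ht⟩
    have hsm : ∀ i, m + v a < nF v q s i + ((s:ℝ) : WithTop ℝ) := fun i =>
      lt_of_lt_of_le (WithTop.add_lt_add_left hm hlt) (add_le_add_left (hmin i) _)
    have key : nuSlope v ((X - C a) * q) s = A - B := by
      refine nuSlope_eq_of hv0 _ s (m + v a) B A hBA hmt ?_ ?_ ?_ ?_ ?_
      · cases B with
        | zero => rw [Z, hfB, add_comm]
        | succ j =>
          rw [EQ j (ne_of_gt (by rw [hfB, add_comm (v a) m]; exact hsm j)),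
            min_eq_right (by rw [hfB, add_comm (v a) m]; exact (hsm j).le), hfB, add_comm]
      · rcases Nat.eq_zero_or_pos A with hA0 | hApos
        · subst hA0
          rw [Z, hfA, add_comm]
        · obtain ⟨j, rfl⟩ : ∃ j, A = j + 1 := ⟨A - 1, by omega⟩
          rw [EQ j (ne_of_gt (by rw [hfA, add_comm (v a) m]; exact hsm j)),
            min_eq_right (by rw [hfA, add_comm (v a) m]; exact (hsm j).le), hfA, add_comm]
      · intro i
        cases i with
        | zero =>
          rw [Z, add_comm m (v a)]
          exact add_le_add_right (hmin 0) _
        | succ j =>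
          refine le_trans (le_min ((hsm j).le) ?_) (LB j)
          rw [add_comm m (v a)]
          exact add_le_add_right (hmin (j+1)) _
      · intro i hi
        cases i with
        | zero =>
          rw [Z, add_comm m (v a)]
          exact WithTop.add_lt_add_left ht (hlo 0 hi)
        | succ j =>
          refine lt_of_lt_of_le (lt_min (hsm j) ?_) (LB j)
          rw [add_comm m (v a)]
          exact WithTop.add_lt_add_left ht (hlo (j+1) hi)
      · intro i hi
        have hi1 : 1 ≤ i := by omega
        obtain ⟨j, rfl⟩ : ∃ j, i = j + 1 := ⟨i - 1, by omega⟩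
        refine lt_of_lt_of_le (lt_min (hsm j) ?_) (LB j)
        rw [add_comm m (v a)]
        exact WithTop.add_lt_add_left ht (hhi (j+1) hi)
    rw [key, hval, if_neg (ne_of_lt hlt), add_zero]
  · -- v a = s : B' = B, A' = A + 1, m' = m + s
    have hmt : m + ((s:ℝ) : WithTop ℝ) ≠ ⊤ := WithTop.add_ne_top.mpr ⟨hm, hs⟩
    have key : nuSlope v ((X - C a) * q) s = (A + 1) - B := by
      refine nuSlope_eq_of hv0 _ s (m + ((s:ℝ) : WithTop ℝ)) B (A+1) (by omega) hmt ?_ ?_ ?_ ?_ ?_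
      · cases B with
        | zero => rw [Z, heq, hfB, add_comm]
        | succ j =>
          have hstrict : v a + nF v q s (j+1) < nF v q s j + ((s:ℝ) : WithTop ℝ) := by
            rw [heq, hfB, add_comm]
            exact WithTop.add_lt_add_right hs (hlo j (by omega))
          rw [EQ j (ne_of_gt hstrict), min_eq_right hstrict.le, heq, hfB, add_comm]
      · have hstrict : nF v q s A + ((s:ℝ) : WithTop ℝ) < v a + nF v q s (A+1) := by
          rw [heq, hfA, add_comm ((s:ℝ) : WithTop ℝ) (nF v q s (A+1))]
          exact WithTop.add_lt_add_right hs (hhi (A+1) (by omega))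
        rw [EQ A (ne_of_lt hstrict), min_eq_left hstrict.le, hfA]
      · intro i
        cases i with
        | zero =>
          rw [Z, heq, add_comm m ((s:ℝ) : WithTop ℝ)]
          exact add_le_add_right (hmin 0) _
        | succ j =>
          refine le_trans (le_min (add_le_add_left (hmin j) _) ?_) (LB j)
          rw [heq, add_comm m ((s:ℝ) : WithTop ℝ)]
          exact add_le_add_right (hmin (j+1)) _
      · intro i hi
        cases i with
        | zero =>
          rw [Z, heq, add_comm m ((s:ℝ) : WithTop ℝ)]
          exact WithTop.add_lt_add_left hs (hlo 0 hi)
        | succ j =>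
          refine lt_of_lt_of_le (lt_min (WithTop.add_lt_add_right hs (hlo j (by omega))) ?_) (LB j)
          rw [heq, add_comm m ((s:ℝ) : WithTop ℝ)]
          exact WithTop.add_lt_add_left hs (hlo (j+1) hi)
      · intro i hi
        obtain ⟨j, rfl⟩ : ∃ j, i = j + 1 := ⟨i - 1, by omega⟩
        refine lt_of_lt_of_le (lt_min (WithTop.add_lt_add_right hs (hhi j (by omega))) ?_) (LB j)
        rw [heq, add_comm m ((s:ℝ) : WithTop ℝ)]
        exact WithTop.add_lt_add_left hs (hhi (j+1) (by omega))
    rw [key, hval, if_pos heq]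
    omega
  · -- v a > s : B' = B + 1, A' = A + 1, m' = m + s
    have hmt : m + ((s:ℝ) : WithTop ℝ) ≠ ⊤ := WithTop.add_ne_top.mpr ⟨hm, hs⟩
    have hvm : ∀ i, m + ((s:ℝ) : WithTop ℝ) < v a + nF v q s i := fun i => by
      calc m + ((s:ℝ) : WithTop ℝ) = ((s:ℝ) : WithTop ℝ) + m := add_comm _ _
        _ < v a + m := WithTop.add_lt_add_right hm hgt
        _ ≤ v a + nF v q s i := add_le_add_right (hmin i) _
    have key : nuSlope v ((X - C a) * q) s = (A + 1) - (B + 1) := by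
      refine nuSlope_eq_of hv0 _ s (m + ((s:ℝ) : WithTop ℝ)) (B+1) (A+1) (by omega) hmt ?_ ?_ ?_ ?_ ?_
      · have hstrict : nF v q s B + ((s:ℝ) : WithTop ℝ) < v a + nF v q s (B+1) := by
          rw [hfB]; exact hvm (B+1)
        rw [EQ B (ne_of_lt hstrict), min_eq_left hstrict.le, hfB]
      · have hstrict : nF v q s A + ((s:ℝ) : WithTop ℝ) < v a + nF v q s (A+1) := by
          rw [hfA]; exact hvm (A+1)
        rw [EQ A (ne_of_lt hstrict), min_eq_left hstrict.le, hfA]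
      · intro i
        cases i with
        | zero => rw [Z]; exact (hvm 0).le
        | succ j =>
          exact le_trans (le_min (add_le_add_left (hmin j) _) (hvm (j+1)).le) (LB j)
      · intro i hi
        cases i with
        | zero => rw [Z]; exact hvm 0
        | succ j =>
          refine lt_of_lt_of_le (lt_min (WithTop.add_lt_add_right hs (hlo j (by omega)))
            (hvm (j+1))) (LB j)
      · intro i hi
        obtain ⟨j, rfl⟩ : ∃ j, i = j + 1 := ⟨i - 1, by omega⟩
        refine lt_of_lt_of_le (lt_min (WithTop.add_lt_add_right hs (hhi j (by omega)))
          (hvm (j+1))) (LB j)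
    rw [key, hval, if_neg (ne_of_gt hgt)]
    omega
end Key

section Final
variable {K : Type*} [Field K] {v : K → WithTop ℝ}

lemma nuSlope_C (hv0 : ∀ a : K, v a = ⊤ ↔ a = 0) (c : K) (hc : c ≠ 0) (s : ℝ) :
    nuSlope v (C c) s = 0 := by
  have hm : nF v (C c) s 0 ≠ ⊤ := by
    rw [nF, coeff_C_zero]
    exact WithTop.add_ne_top.mpr ⟨fun h => hc ((hv0 c).mp h), WithTop.coe_ne_top⟩
  have htop : ∀ i : ℕ, 0 < i → nF v (C c) s i = ⊤ := fun i hi => by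
    rw [nF, coeff_C, if_neg (by omega), (hv0 0).mpr rfl, top_add]
  have := nuSlope_eq_of hv0 (C c) s (nF v (C c) s 0) 0 0 le_rfl hm rfl rfl
    (fun i => by
      rcases Nat.eq_zero_or_pos i with h | h
      · subst h; exact le_rfl
      · rw [htop i h]; exact le_top)
    (fun i hi => by omega)
    (fun i hi => by rw [htop i hi]; exact hm.lt_top)
  simpa using this

open Classical in
lemma nuSlope_prod (hv0 : ∀ a : K, v a = ⊤ ↔ a = 0)
    (hvmul : ∀ a b : K, v (a * b) = v a + v b)
    (hvadd : ∀ a b : K, min (v a) (v b) ≤ v (a + b))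
    (t : Multiset K) (q : Polynomial K) (hq : q ≠ 0) (s : ℝ) :
    nuSlope v ((t.map (fun a => X - C a)).prod * q) s
      = nuSlope v q s + (t.filter (fun a => v a = ((s : ℝ) : WithTop ℝ))).card := by
  induction t using Multiset.induction_on with
  | empty => simp
  | cons a t ih =>
    have hne : (t.map (fun a => X - C a)).prod * q ≠ 0 := by
      apply mul_ne_zero _ hq
      apply Multiset.prod_ne_zero
      intro h
      obtain ⟨b, _, hb⟩ := Multiset.mem_map.mp h
      exact X_sub_C_ne_zero b hb
    rw [Multiset.map_cons, Multiset.prod_cons, mul_assoc,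
      nuSlope_linear_mul hv0 hvmul hvadd a _ s hne, ih]
    by_cases hva : v a = ((s : ℝ) : WithTop ℝ) <;> simp [Multiset.filter_cons, hva] <;> omega
end Final

open Classical in
/-- Newton's polygon rule: if `v` is a valuation on a field `K` and
`p = Σ_{i=0}^n c_i T^i ∈ K[T]` with `c_0 ≠ 0` and `p ≠ 0`, then for every `s ∈ ℝ` the
number of roots `a ∈ K` of `p` with `v(a) = s`, counted with multiplicity, is at most
`ν_s(p̄)`, with equality if `p` splits into linear factors over `K`. -/
theorem newton_polygon_rule {K : Type*} [Field K] (v : K → WithTop ℝ)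
    (hv0 : ∀ a : K, v a = ⊤ ↔ a = 0)
    (hvmul : ∀ a b : K, v (a * b) = v a + v b)
    (hvadd : ∀ a b : K, min (v a) (v b) ≤ v (a + b))
    (p : Polynomial K) (hp : p ≠ 0) (hc0 : p.coeff 0 ≠ 0) (s : ℝ) :
    (p.roots.filter (fun a => v a = (s : WithTop ℝ))).card ≤ nuSlope v p s ∧
    ((p.map (RingHom.id K)).Splits →
      (p.roots.filter (fun a => v a = (s : WithTop ℝ))).card = nuSlope v p s) := by
  constructor
  · obtain ⟨q, hq⟩ := prod_multiset_X_sub_C_dvd p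
    have hq0 : q ≠ 0 := by
      rintro rfl
      rw [mul_zero] at hq
      exact hp hq
    calc (p.roots.filter (fun a => v a = (s : WithTop ℝ))).card
        ≤ nuSlope v q s + (p.roots.filter (fun a => v a = (s : WithTop ℝ))).card :=
          Nat.le_add_left _ _
      _ = nuSlope v ((p.roots.map (fun a => X - C a)).prod * q) s :=
          (nuSlope_prod hv0 hvmul hvadd _ _ hq0 s).symm
      _ = nuSlope v p s := by rw [← hq]
  · intro hsplit
    have hlc : p.leadingCoeff ≠ 0 := leadingCoeff_ne_zero.mpr hp
    have heq := Splits.eq_prod_roots (by rwa [Polynomial.map_id] at hsplit)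
    have : nuSlope v p s = nuSlope v ((p.roots.map (fun a => X - C a)).prod * C p.leadingCoeff) s := by
      rw [mul_comm, ← heq]
    rw [this, nuSlope_prod hv0 hvmul hvadd _ _ (fun h => hlc (by
      have := C_eq_zero.mp h
      exact this)) s, nuSlope_C hv0 _ hlc, zero_add]
end

section
/- Let p be a monic polynomial of degree n over the tropical hyperfield T and a_1,…,a_n ∈ T. Then p ∈ ∏(T + a_i) if and only if the associated tropical polynomial functions agree: for all b ∈ ℝ, min_{0≤i≤n}(c_i + i·b) = Σ_{i=1}^n min(b, a_i), where p = Σ c_i T^i and arithmetic on the right is ordinary (extended) real arithmetic. -/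
open Finset

/-- Hyperaddition of the tropical hyperfield `T = ℝ ∪ {∞}`:
`a ⊞ b = {min a b}` if `a ≠ b`, and `a ⊞ a = {c : a ≤ c}`.  Tropical multiplication is
addition of extended reals. -/
noncomputable def thadd (a b : WithTop ℝ) : Set (WithTop ℝ) :=
  if a = b then {c | a ≤ c} else {min a b}

/-- The hypersum of a list of elements of the tropical hyperfield, defined recursively. -/
noncomputable def thsum : List (WithTop ℝ) → Set (WithTop ℝ)
  | [] => {⊤}
  | [x] => {x}
  | x :: y :: l => ⋃ b ∈ thsum (y :: l), thadd b x

lemma foldr_min_le (l : List (WithTop ℝ)) {z} (hz : z ∈ l) : l.foldr min ⊤ ≤ z := by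
  induction l with
  | nil => simp at hz
  | cons x l ih =>
    rcases List.mem_cons.1 hz with h | h
    · subst h; exact min_le_left _ _
    · exact le_trans (min_le_right _ _) (ih h)

lemma foldr_min_mem (l : List (WithTop ℝ)) (h : l ≠ []) : l.foldr min ⊤ ∈ l := by
  induction l with
  | nil => simp at h
  | cons x l ih =>
    rcases eq_or_ne l [] with rfl | hl
    · simp
    · show min x (l.foldr min ⊤) ∈ _
      rcases min_cases x (l.foldr min ⊤) with ⟨h1, _⟩ | ⟨h1, _⟩
      · rw [h1]; exact List.mem_cons_self
      · rw [h1]; exact List.mem_cons_of_mem _ (ih hl)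

lemma mem_thsum_iff (l : List (WithTop ℝ)) (y : WithTop ℝ) :
    y ∈ thsum l ↔ l.foldr min ⊤ ≤ y ∧
      (y = l.foldr min ⊤ ∨ 2 ≤ l.count (l.foldr min ⊤)) := by
  induction l generalizing y with
  | nil =>
    show y ∈ ({⊤} : Set _) ↔ _
    simp only [Set.mem_singleton_iff, List.foldr_nil, List.count_nil]
    constructor
    · rintro rfl; exact ⟨le_refl _, Or.inl rfl⟩
    · rintro ⟨h1, rfl | h2⟩
      · rfl
      · omega
  | cons x l ih =>
    rcases eq_or_ne l [] with rfl | hl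
    · show y ∈ ({x} : Set _) ↔ _
      have hf : [x].foldr min ⊤ = x := min_eq_left le_top
      rw [hf]
      simp only [Set.mem_singleton_iff, List.count_singleton]
      constructor
      · rintro rfl; exact ⟨le_refl _, Or.inl rfl⟩
      · rintro ⟨h1, rfl | h2⟩
        · rfl
        · simp at h2
    · obtain ⟨z, l', rfl⟩ := List.exists_cons_of_ne_nil hl
      have hthsum : thsum (x :: z :: l') = ⋃ b ∈ thsum (z :: l'), thadd b x := rfl
      set m' := (z :: l').foldr min ⊤ with hm'
      have hm'mem : m' ∈ z :: l' := foldr_min_mem _ (by simp)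
      have hm'cnt : 1 ≤ (z :: l').count m' := List.one_le_count_iff.2 hm'mem
      have hfold : (x :: z :: l').foldr min ⊤ = min x m' := rfl
      rw [hthsum, hfold]
      simp only [Set.mem_iUnion, exists_prop]
      constructor
      · rintro ⟨b, hb, hyb⟩
        rw [ih] at hb
        obtain ⟨hm'b, hb2⟩ := hb
        unfold thadd at hyb
        split_ifs at hyb with hbx
        · rw [hbx] at hm'b hb2 hyb
          simp only [Set.mem_setOf_eq] at hyb
          have hxm : min x m' = m' := min_eq_right hm'b
          rw [hxm]
          refine ⟨le_trans hm'b hyb, Or.inr ?_⟩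
          have hc : (x :: z :: l').count m' = (z :: l').count m' + if x = m' then 1 else 0 := by
            simp [List.count_cons]
          rw [hc]
          rcases hb2 with h2 | h2
          · rw [if_pos h2]; omega
          · rcases eq_or_lt_of_le hm'b with heq | hlt
            · rw [if_pos heq.symm]; omega
            · rw [if_neg (ne_of_gt hlt)]; omega
        · simp only [Set.mem_singleton_iff] at hyb
          subst hyb
          rcases hb2 with rfl | h2
          · exact ⟨by rw [min_comm], Or.inl (min_comm _ _)⟩
          · rcases le_or_gt x m' with hxm | hxm
            · have hmm : min x m' = x := min_eq_left hxm
              rw [hmm]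
              have hxb : x ≤ b := le_trans hxm hm'b
              have hbx' : min b x = x := min_eq_right hxb
              rw [hbx']
              exact ⟨le_refl x, Or.inl rfl⟩
            · have hmm : min x m' = m' := min_eq_right hxm.le
              rw [hmm]
              refine ⟨le_min hm'b hxm.le, Or.inr ?_⟩
              have hc : (x :: z :: l').count m' = (z :: l').count m' + if x = m' then 1 else 0 := by
                simp [List.count_cons]
              rw [hc, if_neg (ne_of_gt hxm)]
              omega
      · rintro ⟨hmy, hy⟩
        rcases le_or_gt x m' with hxm | hxm
        · have hmm : min x m' = x := min_eq_left hxm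
          rw [hmm] at hmy hy
          rcases eq_or_lt_of_le hxm with heq | hlt
          · refine ⟨m', ?_, ?_⟩
            · rw [ih]; exact ⟨le_refl _, Or.inl rfl⟩
            · unfold thadd
              rw [if_pos heq.symm]
              simp only [Set.mem_setOf_eq]
              exact heq ▸ hmy
          · have hcnt0 : (z :: l').count x = 0 := by
              rw [List.count_eq_zero]
              intro hx
              exact absurd (foldr_min_le _ hx) (not_le.2 hlt)
            have hyx : y = x := by
              rcases hy with h | h
              · exact h
              · have hc : (x :: z :: l').count x = (z :: l').count x + if x = x then 1 else 0 := by
                  simp [List.count_cons]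
                rw [hc, if_pos rfl, hcnt0] at h; omega
            refine ⟨m', ?_, ?_⟩
            · rw [ih]; exact ⟨le_refl _, Or.inl rfl⟩
            · unfold thadd
              rw [if_neg (ne_of_gt hlt)]
              simp only [Set.mem_singleton_iff]
              rw [hyx, min_eq_right hlt.le]
        · have hmm : min x m' = m' := min_eq_right hxm.le
          rw [hmm] at hmy hy
          have hcnt : (x :: z :: l').count m' = (z :: l').count m' := by
            have hc : (x :: z :: l').count m' = (z :: l').count m' + if x = m' then 1 else 0 := by
              simp [List.count_cons]
            rw [hc, if_neg (ne_of_gt hxm)]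
            omega
          rcases hy with h | h2
          · subst h
            refine ⟨m', ?_, ?_⟩
            · rw [ih]; exact ⟨le_refl _, Or.inl rfl⟩
            · unfold thadd
              rw [if_neg (ne_of_lt hxm)]
              simp only [Set.mem_singleton_iff]
              rw [min_eq_left hxm.le]
          · rw [hcnt] at h2
            rcases le_or_gt x y with hxy | hxy
            · refine ⟨x, ?_, ?_⟩
              · rw [ih]; exact ⟨hxm.le, Or.inr h2⟩
              · have : thadd x x = {c | x ≤ c} := if_pos rfl
                rw [this]
                exact hxy
            · refine ⟨y, ?_, ?_⟩
              · rw [ih]; exact ⟨hmy, Or.inr h2⟩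
              · unfold thadd
                rw [if_neg (ne_of_lt hxy)]
                simp only [Set.mem_singleton_iff]
                rw [min_eq_left hxy.le]

lemma two_le_count_map {σ : Type*} [DecidableEq σ] (f : σ → WithTop ℝ) (y : WithTop ℝ) :
    ∀ (l : List σ), l.Nodup →
      (2 ≤ (l.map f).count y ↔ ∃ u ∈ l, ∃ v ∈ l, u ≠ v ∧ f u = y ∧ f v = y) := by
  intro l
  induction l with
  | nil => simp
  | cons x l ih =>
    intro hnd
    obtain ⟨hx, hl⟩ := List.nodup_cons.1 hnd
    have hc : ((x :: l).map f).count y = (l.map f).count y + if f x = y then 1 else 0 := by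
      simp [List.count_cons]
    rw [hc]
    by_cases hfx : f x = y
    · rw [if_pos hfx]
      constructor
      · intro h
        have h1 : 1 ≤ (l.map f).count y := by omega
        obtain ⟨v, hv, hfvy⟩ := List.mem_map.1 (List.one_le_count_iff.1 h1)
        exact ⟨x, List.mem_cons_self, v, List.mem_cons_of_mem _ hv,
          fun h => hx (h ▸ hv), hfx, hfvy⟩
      · rintro ⟨u, hu, v, hv, huv, hfu, hfv⟩
        have : ∃ w ∈ l, f w = y := by
          rcases List.mem_cons.1 hu with rfl | hu'
          · rcases List.mem_cons.1 hv with rfl | hv'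
            · exact absurd rfl huv
            · exact ⟨v, hv', hfv⟩
          · exact ⟨u, hu', hfu⟩
        obtain ⟨w, hw, hfw⟩ := this
        have : 1 ≤ (l.map f).count y :=
          List.one_le_count_iff.2 (List.mem_map.2 ⟨w, hw, hfw⟩)
        omega
    · rw [if_neg hfx]
      rw [add_zero, ih hl]
      constructor
      · rintro ⟨u, hu, v, hv, huv, hfu, hfv⟩
        exact ⟨u, List.mem_cons_of_mem _ hu, v, List.mem_cons_of_mem _ hv, huv, hfu, hfv⟩
      · rintro ⟨u, hu, v, hv, huv, hfu, hfv⟩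
        rcases List.mem_cons.1 hu with rfl | hu'
        · exact absurd hfu hfx
        rcases List.mem_cons.1 hv with rfl | hv'
        · exact absurd hfv hfx
        exact ⟨u, hu', v, hv', huv, hfu, hfv⟩

lemma two_le_count_map_toList {σ : Type*} [DecidableEq σ] (s : Finset σ)
    (f : σ → WithTop ℝ) (y : WithTop ℝ) :
    2 ≤ (s.toList.map f).count y ↔ ∃ u ∈ s, ∃ v ∈ s, u ≠ v ∧ f u = y ∧ f v = y := by
  rw [two_le_count_map f y s.toList s.nodup_toList]
  simp [Finset.mem_toList]

lemma foldr_map_inf {σ : Type*} (s : Finset σ) (f : σ → WithTop ℝ) :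
    (s.toList.map f).foldr min ⊤ = s.inf f := by
  apply le_antisymm
  · apply Finset.le_inf
    intro x hx
    exact foldr_min_le _ (List.mem_map_of_mem (f := f) (Finset.mem_toList.2 hx))
  · rcases eq_or_ne (s.toList.map f) [] with h | h
    · rw [h]; exact le_top
    · obtain ⟨x, hx, hfx⟩ := List.mem_map.1 (foldr_min_mem _ h)
      rw [← hfx]
      exact Finset.inf_le (Finset.mem_toList.1 hx)

section TropAux
open scoped Classical

variable (n : ℕ) (a : ℕ → WithTop ℝ)

noncomputable def wsum (S : Finset ℕ) : WithTop ℝ := ∑ e ∈ S, a e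

noncomputable def Mmin (i : ℕ) : WithTop ℝ :=
  ((Finset.range n).powersetCard i).inf (wsum a)

variable {n a}

lemma Mmin_zero : Mmin n a 0 = 0 := by
  rw [Mmin, Finset.powersetCard_zero, Finset.inf_singleton, wsum, Finset.sum_empty]

lemma Mmin_le {i : ℕ} {S : Finset ℕ} (hS : S ∈ (Finset.range n).powersetCard i) :
    Mmin n a i ≤ wsum a S := Finset.inf_le hS

lemma Mmin_exists {i : ℕ} (hin : i ≤ n) :
    ∃ S ∈ (Finset.range n).powersetCard i, wsum a S = Mmin n a i := by
  obtain ⟨S, hS, hw⟩ := Finset.exists_mem_eq_inf ((Finset.range n).powersetCard i)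
    (Finset.powersetCard_nonempty.2 (by simpa using hin)) (wsum a)
  exact ⟨S, hS, hw.symm⟩

lemma smul_coe (j : ℕ) (b : ℝ) : (j : ℕ) • ((b : WithTop ℝ)) = ((j * b : ℝ) : WithTop ℝ) := by
  rw [← WithTop.coe_nsmul, nsmul_eq_mul]

/-- lower-side comparison -/
lemma Mmin_low {i k : ℕ} (hin : i ≤ n) (hk : k ≤ i) {S : Finset ℕ} (β : WithTop ℝ)
    (hS : S ∈ (Finset.range n).powersetCard i) (hβ : ∀ e ∈ S, a e ≤ β) :
    Mmin n a i ≤ Mmin n a k + (i - k) • β := by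
  obtain ⟨T, hT, hTw⟩ := Mmin_exists (a := a) (le_trans hk hin)
  obtain ⟨hTsub, hTcard⟩ := Finset.mem_powersetCard.1 hT
  obtain ⟨hSsub, hScard⟩ := Finset.mem_powersetCard.1 hS
  obtain ⟨X, hX, hXcard⟩ := Finset.exists_subset_card_eq
    (show i - k ≤ (S \ T).card from le_trans (by rw [hTcard, hScard])
      (Finset.le_card_sdiff T S))
  have hdisj : Disjoint T X := by
    rw [Finset.disjoint_right]
    intro e heX heT
    exact (Finset.mem_sdiff.1 (hX heX)).2 heT
  have hU : T ∪ X ∈ (Finset.range n).powersetCard i := by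
    rw [Finset.mem_powersetCard]
    constructor
    · exact Finset.union_subset hTsub (le_trans hX (Finset.sdiff_subset) |>.trans hSsub)
    · rw [Finset.card_union_of_disjoint hdisj, hTcard, hXcard]
      omega
  calc Mmin n a i ≤ wsum a (T ∪ X) := Mmin_le hU
    _ = wsum a T + wsum a X := Finset.sum_union hdisj
    _ ≤ Mmin n a k + (i - k) • β := by
        refine add_le_add (le_of_eq hTw) ?_
        calc wsum a X ≤ ∑ _e ∈ X, β := Finset.sum_le_sum
              (fun e he => hβ e ((Finset.mem_sdiff.1 (hX he)).1))
          _ = (i - k) • β := by rw [Finset.sum_const, hXcard]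

/-- higher-side comparison -/
lemma Mmin_high {i k : ℕ} (hkn : k ≤ n) (hik : i ≤ k) {S : Finset ℕ} (δ : WithTop ℝ)
    (hS : S ∈ (Finset.range n).powersetCard i)
    (hδ : ∀ e ∈ Finset.range n, e ∉ S → δ ≤ a e) :
    Mmin n a i + (k - i) • δ ≤ Mmin n a k := by
  obtain ⟨T, hT, hTw⟩ := Mmin_exists (a := a) hkn
  obtain ⟨hTsub, hTcard⟩ := Finset.mem_powersetCard.1 hT
  obtain ⟨hSsub, hScard⟩ := Finset.mem_powersetCard.1 hS
  obtain ⟨Y, hY, hYcard⟩ := Finset.exists_subset_card_eq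
    (show k - i ≤ (T \ S).card from le_trans (by rw [hTcard, hScard])
      (Finset.le_card_sdiff S T))
  have hYT : Y ⊆ T := le_trans hY Finset.sdiff_subset
  have hU : T \ Y ∈ (Finset.range n).powersetCard i := by
    rw [Finset.mem_powersetCard]
    constructor
    · exact le_trans Finset.sdiff_subset hTsub
    · rw [Finset.card_sdiff_of_subset hYT, hTcard, hYcard]
      omega
  have hsplit : wsum a (T \ Y) + wsum a Y = wsum a T := Finset.sum_sdiff hYT
  calc Mmin n a i + (k - i) • δ ≤ wsum a (T \ Y) + wsum a Y := by
        refine add_le_add (Mmin_le hU) ?_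
        calc (k - i) • δ = ∑ _e ∈ Y, δ := by rw [Finset.sum_const, hYcard]
          _ ≤ wsum a Y := Finset.sum_le_sum (fun e he => by
              obtain ⟨heT, heS⟩ := Finset.mem_sdiff.1 (hY he)
              exact hδ e (hTsub heT) heS)
    _ = wsum a T := hsplit
    _ = Mmin n a k := hTw

/-- exchange of a maximal element of a minimizer -/
lemma Mmin_exchange {i : ℕ} {S : Finset ℕ} (hS : S ∈ (Finset.range n).powersetCard i)
    (hSw : wsum a S = Mmin n a i) (htop : Mmin n a i ≠ ⊤) {e₀ e : ℕ}
    (he₀ : e₀ ∈ S) (he : e ∈ Finset.range n) (heS : e ∉ S) (hle : a e ≤ a e₀) :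
    a e = a e₀ ∧ insert e (S.erase e₀) ∈ (Finset.range n).powersetCard i ∧
      wsum a (insert e (S.erase e₀)) = Mmin n a i := by
  obtain ⟨hSsub, hScard⟩ := Finset.mem_powersetCard.1 hS
  have heer : e ∉ S.erase e₀ := fun h => heS (Finset.mem_of_mem_erase h)
  have hT : insert e (S.erase e₀) ∈ (Finset.range n).powersetCard i := by
    rw [Finset.mem_powersetCard]
    constructor
    · intro x hx
      rcases Finset.mem_insert.1 hx with rfl | hx'
      · exact he
      · exact hSsub (Finset.mem_of_mem_erase hx')
    · rw [Finset.card_insert_of_notMem heer, Finset.card_erase_of_mem he₀]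
      have : 1 ≤ S.card := Finset.card_pos.2 ⟨e₀, he₀⟩
      omega
  have hsplit : a e₀ + wsum a (S.erase e₀) = wsum a S := Finset.add_sum_erase S a he₀
  have hins : wsum a (insert e (S.erase e₀)) = a e + wsum a (S.erase e₀) :=
    Finset.sum_insert heer
  have hertop : wsum a (S.erase e₀) ≠ ⊤ := by
    intro h
    apply htop
    rw [← hSw, ← hsplit, h, add_top]
  have h1 : Mmin n a i ≤ a e + wsum a (S.erase e₀) := by
    rw [← hins]; exact Mmin_le hT
  have h2 : a e + wsum a (S.erase e₀) ≤ a e₀ + wsum a (S.erase e₀) :=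
    add_le_add hle le_rfl
  have h3 : a e₀ + wsum a (S.erase e₀) = Mmin n a i := by rw [hsplit, hSw]
  have heq1 : a e + wsum a (S.erase e₀) = a e₀ + wsum a (S.erase e₀) :=
    le_antisymm h2 (by rw [h3]; exact h1)
  have haea : a e = a e₀ := by
    have := heq1
    rw [add_comm (a e) _, add_comm (a e₀) _] at this
    exact WithTop.add_left_cancel hertop this
  exact ⟨haea, hT, by rw [hins, haea, h3]⟩

lemma coe_untop' {x : WithTop ℝ} (h : x ≠ ⊤) : ((WithTop.untopD 0 x : ℝ) : WithTop ℝ) = x := by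
  cases x with
  | top => exact absurd rfl h
  | coe r => rfl

lemma gsum_card_le (b : ℝ) :
    ((Finset.range n).filter (fun e => a e < (b : WithTop ℝ))).card ≤ n := by
  simpa using Finset.card_filter_le (Finset.range n) _

lemma gsum_eq (b : ℝ) :
    ∑ e ∈ Finset.range n, min (b : WithTop ℝ) (a e) =
      wsum a ((Finset.range n).filter (fun e => a e < (b : WithTop ℝ))) +
        (n - ((Finset.range n).filter (fun e => a e < (b : WithTop ℝ))).card) •
          ((b : WithTop ℝ)) := by
  set S₀ := (Finset.range n).filter (fun e => a e < (b : WithTop ℝ)) with hS₀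
  rw [← Finset.sum_filter_add_sum_filter_not (Finset.range n)
    (fun e => a e < (b : WithTop ℝ)) (fun e => min (b : WithTop ℝ) (a e))]
  have h1 : ∑ e ∈ S₀, min (b : WithTop ℝ) (a e) = wsum a S₀ :=
    Finset.sum_congr rfl (fun e he => min_eq_right (le_of_lt (Finset.mem_filter.1 he).2))
  have h2 : ∑ e ∈ (Finset.range n).filter (fun e => ¬ a e < (b : WithTop ℝ)),
      min (b : WithTop ℝ) (a e) =
      ((Finset.range n).filter (fun e => ¬ a e < (b : WithTop ℝ))).card • (b : WithTop ℝ) := by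
    rw [← Finset.sum_const]
    exact Finset.sum_congr rfl (fun e he => min_eq_left (not_lt.1 (Finset.mem_filter.1 he).2))
  have h3 : ((Finset.range n).filter (fun e => ¬ a e < (b : WithTop ℝ))).card = n - S₀.card := by
    rw [Finset.filter_not, Finset.card_sdiff_of_subset (Finset.filter_subset _ _), Finset.card_range]
  rw [h1, h2, h3]

lemma gsum_min (b : ℝ) {T : Finset ℕ}
    (hT : T ∈ (Finset.range n).powersetCard
      ((Finset.range n).filter (fun e => a e < (b : WithTop ℝ))).card) :
    wsum a ((Finset.range n).filter (fun e => a e < (b : WithTop ℝ))) ≤ wsum a T := by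
  set S₀ := (Finset.range n).filter (fun e => a e < (b : WithTop ℝ)) with hS₀
  obtain ⟨hTsub, hTcard⟩ := Finset.mem_powersetCard.1 hT
  have e1 : ∑ e ∈ S₀ \ T, a e + ∑ e ∈ S₀ ∩ T, a e = wsum a S₀ := by
    rw [← Finset.sdiff_inter_self_left S₀ T]
    exact Finset.sum_sdiff Finset.inter_subset_left
  have e2 : ∑ e ∈ T \ S₀, a e + ∑ e ∈ T ∩ S₀, a e = wsum a T := by
    rw [← Finset.sdiff_inter_self_left T S₀]
    exact Finset.sum_sdiff Finset.inter_subset_left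
  have hcard : (S₀ \ T).card = (T \ S₀).card := by
    have h1 : (S₀ \ T).card = S₀.card - (S₀ ∩ T).card := by
      rw [← Finset.sdiff_inter_self_left S₀ T]
      exact Finset.card_sdiff_of_subset Finset.inter_subset_left
    have h2 : (T \ S₀).card = T.card - (T ∩ S₀).card := by
      rw [← Finset.sdiff_inter_self_left T S₀]
      exact Finset.card_sdiff_of_subset Finset.inter_subset_left
    have h3 : (S₀ ∩ T).card = (T ∩ S₀).card := by rw [Finset.inter_comm]
    have h4 : (S₀ ∩ T).card ≤ S₀.card := Finset.card_le_card Finset.inter_subset_left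
    have h5 : (T ∩ S₀).card ≤ T.card := Finset.card_le_card Finset.inter_subset_left
    omega
  have hb1 : ∑ e ∈ S₀ \ T, a e ≤ (S₀ \ T).card • (b : WithTop ℝ) := by
    rw [← Finset.sum_const]
    exact Finset.sum_le_sum (fun e he =>
      le_of_lt (Finset.mem_filter.1 (Finset.mem_sdiff.1 he).1).2)
  have hb2 : (T \ S₀).card • (b : WithTop ℝ) ≤ ∑ e ∈ T \ S₀, a e := by
    rw [← Finset.sum_const]
    refine Finset.sum_le_sum (fun e he => ?_)
    obtain ⟨heT, heS⟩ := Finset.mem_sdiff.1 he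
    have heR : e ∈ Finset.range n := hTsub heT
    have : ¬ a e < (b : WithTop ℝ) := fun h => heS (Finset.mem_filter.2 ⟨heR, h⟩)
    exact not_lt.1 this
  have hint : ∑ e ∈ S₀ ∩ T, a e = ∑ e ∈ T ∩ S₀, a e := by rw [Finset.inter_comm]
  calc wsum a S₀ = ∑ e ∈ S₀ \ T, a e + ∑ e ∈ S₀ ∩ T, a e := e1.symm
    _ ≤ (S₀ \ T).card • (b : WithTop ℝ) + ∑ e ∈ S₀ ∩ T, a e := add_le_add hb1 le_rfl
    _ = (T \ S₀).card • (b : WithTop ℝ) + ∑ e ∈ T ∩ S₀, a e := by rw [hcard, hint]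
    _ ≤ ∑ e ∈ T \ S₀, a e + ∑ e ∈ T ∩ S₀, a e := add_le_add hb2 le_rfl
    _ = wsum a T := e2

lemma gsum_strict (b : ℝ) {T : Finset ℕ}
    (hT : T ∈ (Finset.range n).powersetCard
      ((Finset.range n).filter (fun e => a e < (b : WithTop ℝ))).card)
    (hne : T ≠ (Finset.range n).filter (fun e => a e < (b : WithTop ℝ))) :
    wsum a ((Finset.range n).filter (fun e => a e < (b : WithTop ℝ))) < wsum a T := by
  set S₀ := (Finset.range n).filter (fun e => a e < (b : WithTop ℝ)) with hS₀
  obtain ⟨hTsub, hTcard⟩ := Finset.mem_powersetCard.1 hT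
  have e1 : ∑ e ∈ S₀ \ T, a e + ∑ e ∈ S₀ ∩ T, a e = wsum a S₀ := by
    rw [← Finset.sdiff_inter_self_left S₀ T]
    exact Finset.sum_sdiff Finset.inter_subset_left
  have e2 : ∑ e ∈ T \ S₀, a e + ∑ e ∈ T ∩ S₀, a e = wsum a T := by
    rw [← Finset.sdiff_inter_self_left T S₀]
    exact Finset.sum_sdiff Finset.inter_subset_left
  have hcard : (S₀ \ T).card = (T \ S₀).card := by
    have h1 : (S₀ \ T).card = S₀.card - (S₀ ∩ T).card := by
      rw [← Finset.sdiff_inter_self_left S₀ T]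
      exact Finset.card_sdiff_of_subset Finset.inter_subset_left
    have h2 : (T \ S₀).card = T.card - (T ∩ S₀).card := by
      rw [← Finset.sdiff_inter_self_left T S₀]
      exact Finset.card_sdiff_of_subset Finset.inter_subset_left
    have h3 : (S₀ ∩ T).card = (T ∩ S₀).card := by rw [Finset.inter_comm]
    have h4 : (S₀ ∩ T).card ≤ S₀.card := Finset.card_le_card Finset.inter_subset_left
    have h5 : (T ∩ S₀).card ≤ T.card := Finset.card_le_card Finset.inter_subset_left
    omega
  have hnonempty : (S₀ \ T).Nonempty := by
    rw [Finset.nonempty_iff_ne_empty]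
    intro h
    have hsub : S₀ ⊆ T := Finset.sdiff_eq_empty_iff_subset.1 h
    exact hne (Finset.eq_of_subset_of_card_le hsub (le_of_eq hTcard)).symm
  have hfin : ∀ e ∈ S₀, a e ≠ ⊤ := by
    intro e he h
    have := (Finset.mem_filter.1 he).2
    rw [h] at this
    exact absurd this (not_lt.2 le_top)
  -- strict bound on the sdiff sum
  have hstrict : ∑ e ∈ S₀ \ T, a e < (S₀ \ T).card • (b : WithTop ℝ) := by
    have hco : ∑ e ∈ S₀ \ T, a e =
        ((∑ e ∈ S₀ \ T, WithTop.untopD 0 (a e) : ℝ) : WithTop ℝ) := by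
      rw [WithTop.coe_sum]
      exact Finset.sum_congr rfl (fun e he =>
        (coe_untop' (hfin e (Finset.mem_sdiff.1 he).1)).symm)
    have hreal : ∑ e ∈ S₀ \ T, WithTop.untopD 0 (a e) < (S₀ \ T).card • b := by
      rw [← Finset.sum_const]
      refine Finset.sum_lt_sum_of_nonempty hnonempty (fun e he => ?_)
      have h1 := (Finset.mem_filter.1 (Finset.mem_sdiff.1 he).1).2
      have h2 := coe_untop' (hfin e (Finset.mem_sdiff.1 he).1)
      rw [← h2] at h1
      exact WithTop.coe_lt_coe.1 h1
    rw [hco, smul_coe, ← nsmul_eq_mul]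
    exact WithTop.coe_lt_coe.2 hreal
  have hinttop : ∑ e ∈ S₀ ∩ T, a e ≠ ⊤ := by
    intro h
    obtain ⟨e, he, hetop⟩ := WithTop.sum_eq_top.1 h
    exact hfin e (Finset.mem_inter.1 he).1 hetop
  have hb2 : (T \ S₀).card • (b : WithTop ℝ) ≤ ∑ e ∈ T \ S₀, a e := by
    rw [← Finset.sum_const]
    refine Finset.sum_le_sum (fun e he => ?_)
    obtain ⟨heT, heS⟩ := Finset.mem_sdiff.1 he
    have heR : e ∈ Finset.range n := hTsub heT
    have : ¬ a e < (b : WithTop ℝ) := fun h => heS (Finset.mem_filter.2 ⟨heR, h⟩)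
    exact not_lt.1 this
  have hint : ∑ e ∈ S₀ ∩ T, a e = ∑ e ∈ T ∩ S₀, a e := by rw [Finset.inter_comm]
  calc wsum a S₀ = ∑ e ∈ S₀ \ T, a e + ∑ e ∈ S₀ ∩ T, a e := e1.symm
    _ < (S₀ \ T).card • (b : WithTop ℝ) + ∑ e ∈ S₀ ∩ T, a e :=
        WithTop.add_lt_add_right hinttop hstrict
    _ = (T \ S₀).card • (b : WithTop ℝ) + ∑ e ∈ T ∩ S₀, a e := by rw [hcard, hint]
    _ ≤ ∑ e ∈ T \ S₀, a e + ∑ e ∈ T ∩ S₀, a e := add_le_add hb2 le_rfl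
    _ = wsum a T := e2

lemma gsum_le (b : ℝ) {i : ℕ} (hin : i ≤ n) :
    ∑ e ∈ Finset.range n, min (b : WithTop ℝ) (a e) ≤ Mmin n a i + (n - i) • ((b : WithTop ℝ)) := by
  obtain ⟨T, hT, hTw⟩ := Mmin_exists (a := a) hin
  obtain ⟨hTsub, hTcard⟩ := Finset.mem_powersetCard.1 hT
  have hsplit : ∑ e ∈ Finset.range n \ T, min (b : WithTop ℝ) (a e) +
      ∑ e ∈ T, min (b : WithTop ℝ) (a e) = ∑ e ∈ Finset.range n, min (b : WithTop ℝ) (a e) :=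
    Finset.sum_sdiff hTsub
  have h1 : ∑ e ∈ T, min (b : WithTop ℝ) (a e) ≤ Mmin n a i := by
    rw [← hTw]
    exact Finset.sum_le_sum (fun e _ => min_le_right _ _)
  have h2 : ∑ e ∈ Finset.range n \ T, min (b : WithTop ℝ) (a e) ≤ (n - i) • (b : WithTop ℝ) := by
    have hc : (Finset.range n \ T).card = n - i := by
      rw [Finset.card_sdiff_of_subset hTsub, Finset.card_range, hTcard]
    rw [← hc, ← Finset.sum_const]
    exact Finset.sum_le_sum (fun e _ => min_le_left _ _)
  calc ∑ e ∈ Finset.range n, min (b : WithTop ℝ) (a e)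
      = ∑ e ∈ Finset.range n \ T, min (b : WithTop ℝ) (a e) +
        ∑ e ∈ T, min (b : WithTop ℝ) (a e) := hsplit.symm
    _ ≤ (n - i) • (b : WithTop ℝ) + Mmin n a i := add_le_add h2 h1
    _ = Mmin n a i + (n - i) • (b : WithTop ℝ) := add_comm _ _

end TropAux

section TropAux2
open scoped Classical
variable {n : ℕ} {a : ℕ → WithTop ℝ}

lemma Mmin_star {i : ℕ} {S : Finset ℕ} (hS : S ∈ (Finset.range n).powersetCard i)
    (hSw : wsum a S = Mmin n a i) (htop : Mmin n a i ≠ ⊤) (hne : S.Nonempty) :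
    ∀ e ∈ Finset.range n, e ∉ S → S.sup' hne a ≤ a e := by
  intro e he heS
  by_contra hlt
  push_neg at hlt
  obtain ⟨e₀, he₀, hsup⟩ := Finset.exists_mem_eq_sup' hne a
  have hle : a e ≤ a e₀ := le_of_lt (hsup ▸ hlt)
  have := (Mmin_exchange hS hSw htop he₀ he heS hle).1
  rw [this, hsup] at hlt
  exact lt_irrefl _ hlt

lemma Mmin_star_strict {i : ℕ} {S : Finset ℕ} (hS : S ∈ (Finset.range n).powersetCard i)
    (hSw : wsum a S = Mmin n a i) (htop : Mmin n a i ≠ ⊤) (hne : S.Nonempty)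
    (huniq : ∀ T ∈ (Finset.range n).powersetCard i, wsum a T = Mmin n a i → T = S) :
    ∀ e ∈ Finset.range n, e ∉ S → S.sup' hne a < a e := by
  intro e he heS
  rcases lt_or_eq_of_le (Mmin_star hS hSw htop hne e he heS) with h | h
  · exact h
  · exfalso
    obtain ⟨e₀, he₀, hsup⟩ := Finset.exists_mem_eq_sup' hne a
    have hle : a e ≤ a e₀ := le_of_eq (by rw [← h, hsup])
    obtain ⟨-, hT, hTw⟩ := Mmin_exchange hS hSw htop he₀ he heS hle
    have := huniq _ hT hTw
    have heT : e ∈ insert e (S.erase e₀) := Finset.mem_insert_self _ _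
    rw [this] at heT
    exact heS heT

lemma cmp_le {i k : ℕ} (hin : i ≤ n) (hkn : k ≤ n)
    {S : Finset ℕ} (hS : S ∈ (Finset.range n).powersetCard i)
    (hSw : wsum a S = Mmin n a i) (htop : Mmin n a i ≠ ⊤) (hne : S.Nonempty) :
    Mmin n a i + (n - i) • (S.sup' hne a) ≤ Mmin n a k + (n - k) • (S.sup' hne a) := by
  set β := S.sup' hne a with hβ
  rcases le_or_gt k i with hk | hk
  · have h := Mmin_low hin hk β hS (fun e he => Finset.le_sup' a he)
    have hnk : (i - k) + (n - i) = n - k := by omega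
    calc Mmin n a i + (n - i) • β ≤ (Mmin n a k + (i - k) • β) + (n - i) • β :=
          add_le_add h le_rfl
      _ = Mmin n a k + (n - k) • β := by rw [add_assoc, ← add_nsmul, hnk]
  · have h := Mmin_high hkn (le_of_lt hk) β hS (Mmin_star hS hSw htop hne)
    have hnk : (k - i) + (n - k) = n - i := by omega
    calc Mmin n a i + (n - i) • β = (Mmin n a i + (k - i) • β) + (n - k) • β := by
          rw [add_assoc, ← add_nsmul, hnk]
      _ ≤ Mmin n a k + (n - k) • β := add_le_add h le_rfl

lemma Mmin_high_strict {i k : ℕ} (hkn : k ≤ n) (hik : i < k)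
    (hMk : Mmin n a k ≠ ⊤) (hMi : Mmin n a i ≠ ⊤) (b : ℝ)
    {S : Finset ℕ} (hS : S ∈ (Finset.range n).powersetCard i)
    (hδ : ∀ e ∈ Finset.range n, e ∉ S → (b : WithTop ℝ) < a e) :
    Mmin n a i + (k - i) • ((b : WithTop ℝ)) < Mmin n a k := by
  obtain ⟨T, hT, hTw⟩ := Mmin_exists (a := a) hkn
  obtain ⟨hTsub, hTcard⟩ := Finset.mem_powersetCard.1 hT
  obtain ⟨hSsub, hScard⟩ := Finset.mem_powersetCard.1 hS
  obtain ⟨Y, hY, hYcard⟩ := Finset.exists_subset_card_eq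
    (show k - i ≤ (T \ S).card from le_trans (by rw [hTcard, hScard])
      (Finset.le_card_sdiff S T))
  have hYT : Y ⊆ T := le_trans hY Finset.sdiff_subset
  have hU : T \ Y ∈ (Finset.range n).powersetCard i := by
    rw [Finset.mem_powersetCard]
    exact ⟨le_trans Finset.sdiff_subset hTsub,
      by rw [Finset.card_sdiff_of_subset hYT, hTcard, hYcard]; omega⟩
  have hsplit : wsum a (T \ Y) + wsum a Y = wsum a T := Finset.sum_sdiff hYT
  have hfinT : ∀ e ∈ T, a e ≠ ⊤ := by
    intro e he h
    exact hMk (by rw [← hTw]; exact WithTop.sum_eq_top.2 ⟨e, he, h⟩)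
  have hYne : Y.Nonempty := Finset.card_pos.1 (by omega)
  have hstrict : (k - i) • ((b : WithTop ℝ)) < wsum a Y := by
    have hco : wsum a Y = ((∑ e ∈ Y, WithTop.untopD 0 (a e) : ℝ) : WithTop ℝ) := by
      rw [WithTop.coe_sum]
      exact Finset.sum_congr rfl (fun e he => (coe_untop' (hfinT e (hYT he))).symm)
    have hreal : (Y.card) • b < ∑ e ∈ Y, WithTop.untopD 0 (a e) := by
      rw [← Finset.sum_const]
      refine Finset.sum_lt_sum_of_nonempty hYne (fun e he => ?_)
      obtain ⟨heT, heS⟩ := Finset.mem_sdiff.1 (hY he)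
      have h1 := hδ e (hTsub heT) heS
      have h2 := coe_untop' (hfinT e heT)
      rw [← h2] at h1
      exact WithTop.coe_lt_coe.1 h1
    rw [hco, smul_coe, ← nsmul_eq_mul, ← hYcard]
    exact WithTop.coe_lt_coe.2 hreal
  calc Mmin n a i + (k - i) • ((b : WithTop ℝ)) < Mmin n a i + wsum a Y :=
        WithTop.add_lt_add_left hMi hstrict
    _ ≤ wsum a (T \ Y) + wsum a Y := add_le_add (Mmin_le hU) le_rfl
    _ = wsum a T := hsplit
    _ = Mmin n a k := hTw

end TropAux2

lemma Mmin_def (n : ℕ) (a : ℕ → WithTop ℝ) (i : ℕ) :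
    Mmin n a i = ((Finset.range n).powersetCard i).inf (wsum a) := rfl

/-- `TFactors n c a` expresses `p ∈ ∏_{e=0}^{n-1} (T + a_e)` for the monic polynomial
`p = Σ_{i=0}^n c_i T^i` over the tropical hyperfield: for each `i = 1, …, n`,
`c_{n-i}` lies in the hypersum, over all `i`-element subsets `S` of `{0, …, n-1}`, of the
tropical products `∑_{e ∈ S} a_e`. -/
noncomputable def TFactors (n : ℕ) (c : ℕ → WithTop ℝ) (a : ℕ → WithTop ℝ) : Prop :=
  ∀ i, 1 ≤ i → i ≤ n →
    c (n - i) ∈ thsum ((((Finset.range n).powersetCard i).toList).map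
      (fun S => ∑ e ∈ S, a e))

/-- A monic polynomial `p = Σ_{i=0}^n c_i T^i` over the tropical hyperfield satisfies
`p ∈ ∏_{e=0}^{n-1} (T + a_e)` if and only if the associated tropical polynomial functions
agree: for all `b ∈ ℝ`, `min_{0 ≤ i ≤ n} (c_i + i·b) = Σ_{e=0}^{n-1} min(b, a_e)`. -/
theorem tropical_factors_iff_function_eq (n : ℕ) (c : ℕ → WithTop ℝ) (hmonic : c n = 0)
    (a : ℕ → WithTop ℝ) :
    TFactors n c a ↔ ∀ b : ℝ,
      (Finset.range (n + 1)).inf (fun i => c i + (((i : ℝ) * b : ℝ) : WithTop ℝ)) =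
        ∑ e ∈ Finset.range n, min (b : WithTop ℝ) (a e) := by
  classical
  have hwf : (fun S => ∑ e ∈ S, a e) = wsum a := rfl
  have hchar : ∀ i : ℕ,
      (c (n - i) ∈ thsum ((((Finset.range n).powersetCard i).toList).map (wsum a)) ↔
        (Mmin n a i ≤ c (n - i) ∧ (c (n - i) = Mmin n a i ∨
          ∃ u ∈ (Finset.range n).powersetCard i, ∃ v ∈ (Finset.range n).powersetCard i,
            u ≠ v ∧ wsum a u = Mmin n a i ∧ wsum a v = Mmin n a i))) := by
    intro i
    rw [mem_thsum_iff, foldr_map_inf, two_le_count_map_toList]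
    simp only [← Mmin_def]
  constructor
  · -- TFactors → function equality
    intro hTF b
    have hcoef : ∀ i : ℕ, 1 ≤ i → i ≤ n →
        Mmin n a i ≤ c (n - i) ∧ (c (n - i) = Mmin n a i ∨
          ∃ u ∈ (Finset.range n).powersetCard i, ∃ v ∈ (Finset.range n).powersetCard i,
            u ≠ v ∧ wsum a u = Mmin n a i ∧ wsum a v = Mmin n a i) := by
      intro i h1 h2
      have h := hTF i h1 h2
      rw [hwf] at h
      exact (hchar i).1 h
    apply le_antisymm
    · -- F ≤ G
      set S₀ := (Finset.range n).filter (fun e => a e < (b : WithTop ℝ)) with hS₀def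
      have hk : S₀.card ≤ n := gsum_card_le b
      have hS₀P : S₀ ∈ (Finset.range n).powersetCard S₀.card :=
        Finset.mem_powersetCard.2 ⟨Finset.filter_subset _ _, rfl⟩
      have hMk : Mmin n a S₀.card = wsum a S₀ :=
        le_antisymm (Mmin_le hS₀P) (Finset.le_inf (fun T hT => gsum_min b hT))
      have hck : c (n - S₀.card) = Mmin n a S₀.card := by
        rcases Nat.eq_zero_or_pos S₀.card with h0 | hpos
        · rw [h0, Nat.sub_zero, hmonic, Mmin_zero]
        · obtain ⟨hle, heqc | htwo⟩ := hcoef S₀.card hpos hk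
          · exact heqc
          · exfalso
            obtain ⟨u, hu, v, hv, huv, hwu, hwv⟩ := htwo
            have hu' : u = S₀ := by
              by_contra hne
              have := gsum_strict b hu hne
              rw [← hMk, hwu] at this
              exact lt_irrefl _ this
            have hv' : v = S₀ := by
              by_contra hne
              have := gsum_strict b hv hne
              rw [← hMk, hwv] at this
              exact lt_irrefl _ this
            exact huv (hu'.trans hv'.symm)
      have hmem : n - S₀.card ∈ Finset.range (n + 1) := Finset.mem_range.2 (by omega)
      calc (Finset.range (n + 1)).inf (fun i => c i + (((i : ℝ) * b : ℝ) : WithTop ℝ))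
          ≤ c (n - S₀.card) + ((((n - S₀.card : ℕ) : ℝ) * b : ℝ) : WithTop ℝ) :=
            Finset.inf_le hmem
        _ = wsum a S₀ + (n - S₀.card) • ((b : WithTop ℝ)) := by
            rw [hck, hMk, ← smul_coe]
        _ = ∑ e ∈ Finset.range n, min (b : WithTop ℝ) (a e) := (gsum_eq b).symm
    · -- G ≤ F
      refine Finset.le_inf (fun j hj => ?_)
      have hjn : j ≤ n := by have := Finset.mem_range.1 hj; omega
      have hMc : Mmin n a (n - j) ≤ c j := by
        rcases eq_or_lt_of_le hjn with rfl | hlt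
        · rw [Nat.sub_self, Mmin_zero, hmonic]
        · have h1 : 1 ≤ n - j := by omega
          have h2 : n - j ≤ n := by omega
          have := (hcoef (n - j) h1 h2).1
          rwa [show n - (n - j) = j from by omega] at this
      calc ∑ e ∈ Finset.range n, min (b : WithTop ℝ) (a e)
          ≤ Mmin n a (n - j) + (n - (n - j)) • ((b : WithTop ℝ)) := gsum_le b (by omega)
        _ = Mmin n a (n - j) + (((j : ℝ) * b : ℝ) : WithTop ℝ) := by
            rw [show n - (n - j) = j from by omega, smul_coe]
        _ ≤ c j + (((j : ℝ) * b : ℝ) : WithTop ℝ) := add_le_add hMc le_rfl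
  · -- function equality → TFactors
    intro heq
    have hTOP : ∀ i : ℕ, 1 ≤ i → i ≤ n → Mmin n a i = ⊤ → c (n - i) = ⊤ := by
      intro i hi1 hin htop
      by_contra hc
      set cr := WithTop.untopD 0 (c (n - i)) with hcrdef
      have hcc : c (n - i) = ↑cr := (coe_untop' hc).symm
      have hki : ∀ b' : ℝ,
          ((Finset.range n).filter (fun e => a e < (b' : WithTop ℝ))).card < i := by
        intro b'
        by_contra h
        push_neg at h
        obtain ⟨X, hX, hXcard⟩ := Finset.exists_subset_card_eq h
        have hXP : X ∈ (Finset.range n).powersetCard i :=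
          Finset.mem_powersetCard.2 ⟨le_trans hX (Finset.filter_subset _ _), hXcard⟩
        have hXtop : wsum a X ≠ ⊤ := by
          intro hx
          obtain ⟨e, he, hetop⟩ := WithTop.sum_eq_top.1 hx
          have h2 := (Finset.mem_filter.1 (hX he)).2
          rw [hetop] at h2
          exact absurd h2 (not_lt.2 le_top)
        exact hXtop (top_le_iff.1 (htop ▸ Mmin_le hXP))
      have hine : (Finset.range i).Nonempty := ⟨0, Finset.mem_range.2 (by omega)⟩
      set B := ((Finset.range i).sup' hine (fun k' => cr - WithTop.untopD 0 (Mmin n a k'))) with hBdef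
      set b := 1 + max 0 B with hbdef
      have hb0 : 0 < b := by
        have := le_max_left 0 B
        rw [hbdef]; linarith
      set S₀ := (Finset.range n).filter (fun e => a e < (b : WithTop ℝ)) with hS₀def
      set k := S₀.card with hkdef
      have hkn : k ≤ n := gsum_card_le b
      have hklt : k < i := hki b
      have hS₀P : S₀ ∈ (Finset.range n).powersetCard k :=
        Finset.mem_powersetCard.2 ⟨Finset.filter_subset _ _, rfl⟩
      have hMk : Mmin n a k = wsum a S₀ :=
        le_antisymm (Mmin_le hS₀P) (Finset.le_inf (fun T hT => gsum_min b hT))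
      have hMktop : Mmin n a k ≠ ⊤ := by
        rw [hMk]
        intro hx
        obtain ⟨e, he, hetop⟩ := WithTop.sum_eq_top.1 hx
        have h2 := (Finset.mem_filter.1 he).2
        rw [hetop] at h2
        exact absurd h2 (not_lt.2 le_top)
      set mk := WithTop.untopD 0 (Mmin n a k) with hmkdef
      have hMkco : Mmin n a k = ↑mk := (coe_untop' hMktop).symm
      have hFle : (Finset.range (n + 1)).inf (fun j => c j + (((j : ℝ) * b : ℝ) : WithTop ℝ))
          ≤ ((cr + ((n - i : ℕ) : ℝ) * b : ℝ) : WithTop ℝ) := by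
        have hmem : n - i ∈ Finset.range (n + 1) := Finset.mem_range.2 (by omega)
        calc (Finset.range (n + 1)).inf (fun j => c j + (((j : ℝ) * b : ℝ) : WithTop ℝ))
            ≤ c (n - i) + ((((n - i : ℕ) : ℝ) * b : ℝ) : WithTop ℝ) := Finset.inf_le hmem
          _ = ((cr + ((n - i : ℕ) : ℝ) * b : ℝ) : WithTop ℝ) := by
              rw [hcc, WithTop.coe_add]
      have hGe : (∑ e ∈ Finset.range n, min (b : WithTop ℝ) (a e)) =
          ((mk + ((n - k : ℕ) : ℝ) * b : ℝ) : WithTop ℝ) := by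
        rw [gsum_eq b, ← hS₀def, ← hkdef, ← hMk, hMkco, smul_coe, ← WithTop.coe_add]
      rw [heq b, hGe] at hFle
      have hreal : mk + ((n - k : ℕ) : ℝ) * b ≤ cr + ((n - i : ℕ) : ℝ) * b :=
        WithTop.coe_le_coe.1 hFle
      have hBk : cr - mk ≤ B :=
        Finset.le_sup' (fun k' => cr - WithTop.untopD 0 (Mmin n a k')) (Finset.mem_range.2 hklt)
      have hcast1 : ((n - k : ℕ) : ℝ) = ((n - i : ℕ) : ℝ) + ((i - k : ℕ) : ℝ) := by
        rw [← Nat.cast_add]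
        congr 1
        omega
      have hik1 : (1 : ℝ) ≤ ((i - k : ℕ) : ℝ) := Nat.one_le_cast.2 (Nat.sub_pos_of_lt hklt)
      have hmax : B ≤ max 0 B := le_max_right _ _
      have hcast1b : ((n - k : ℕ) : ℝ) * b = ((n - i : ℕ) : ℝ) * b + ((i - k : ℕ) : ℝ) * b := by
        rw [hcast1]; ring
      have h1b : ((i - k : ℕ) : ℝ) * b ≤ cr - mk := by linarith
      have hb_le : b ≤ ((i - k : ℕ) : ℝ) * b := by nlinarith
      linarith
    have hLB : ∀ i : ℕ, 1 ≤ i → i ≤ n → Mmin n a i ≤ c (n - i) := by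
      intro i hi1 hin
      by_cases htop : Mmin n a i = ⊤
      · rw [hTOP i hi1 hin htop, htop]
      · obtain ⟨S, hS, hSw⟩ := Mmin_exists hin
        have hSne : S.Nonempty := Finset.card_pos.1
          (by rw [(Finset.mem_powersetCard.1 hS).2]; omega)
        have hβtop : S.sup' hSne a ≠ ⊤ := by
          obtain ⟨e₀, he₀, hsup⟩ := Finset.exists_mem_eq_sup' hSne a
          rw [hsup]
          intro h
          exact htop (by rw [← hSw]; exact WithTop.sum_eq_top.2 ⟨e₀, he₀, h⟩)
        obtain ⟨br, hbr⟩ := WithTop.ne_top_iff_exists.1 hβtop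
        set S₀ := (Finset.range n).filter (fun e => a e < (br : WithTop ℝ)) with hS₀def
        set k := S₀.card with hkdef
        have hkn : k ≤ n := gsum_card_le br
        have hS₀P : S₀ ∈ (Finset.range n).powersetCard k :=
          Finset.mem_powersetCard.2 ⟨Finset.filter_subset _ _, rfl⟩
        have hMk : Mmin n a k = wsum a S₀ :=
          le_antisymm (Mmin_le hS₀P) (Finset.le_inf (fun T hT => gsum_min br hT))
        have hG : (∑ e ∈ Finset.range n, min (br : WithTop ℝ) (a e)) =
            Mmin n a k + (n - k) • ((br : WithTop ℝ)) := by
          rw [gsum_eq br, ← hS₀def, ← hkdef, hMk]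
        have hcmp := cmp_le hin hkn hS hSw htop hSne
        rw [← hbr] at hcmp
        have hFle : (Finset.range (n + 1)).inf
              (fun j => c j + (((j : ℝ) * br : ℝ) : WithTop ℝ))
            ≤ c (n - i) + ((((n - i : ℕ) : ℝ) * br : ℝ) : WithTop ℝ) :=
          Finset.inf_le (Finset.mem_range.2 (by omega))
        rw [heq br, hG] at hFle
        have hfinal : Mmin n a i + ((((n - i : ℕ) : ℝ) * br : ℝ) : WithTop ℝ)
            ≤ c (n - i) + ((((n - i : ℕ) : ℝ) * br : ℝ) : WithTop ℝ) := by
          calc Mmin n a i + ((((n - i : ℕ) : ℝ) * br : ℝ) : WithTop ℝ)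
              = Mmin n a i + (n - i) • ((br : WithTop ℝ)) := by rw [smul_coe]
            _ ≤ Mmin n a k + (n - k) • ((br : WithTop ℝ)) := hcmp
            _ ≤ c (n - i) + ((((n - i : ℕ) : ℝ) * br : ℝ) : WithTop ℝ) := hFle
        exact (WithTop.add_le_add_iff_right WithTop.coe_ne_top).1 hfinal
    intro i hi1 hin
    rw [hwf, hchar i]
    refine ⟨hLB i hi1 hin, ?_⟩
    by_cases htwo : ∃ u ∈ (Finset.range n).powersetCard i,
        ∃ v ∈ (Finset.range n).powersetCard i,
          u ≠ v ∧ wsum a u = Mmin n a i ∧ wsum a v = Mmin n a i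
    · exact Or.inr htwo
    · left
      by_cases htop : Mmin n a i = ⊤
      · rw [hTOP i hi1 hin htop, htop]
      · obtain ⟨S, hS, hSw⟩ := Mmin_exists hin
        have hSne : S.Nonempty := Finset.card_pos.1
          (by rw [(Finset.mem_powersetCard.1 hS).2]; omega)
        have huniq : ∀ T ∈ (Finset.range n).powersetCard i,
            wsum a T = Mmin n a i → T = S := by
          intro T hT hTw
          by_contra hne
          exact htwo ⟨T, hT, S, hS, hne, hTw, hSw⟩
        have hstar := Mmin_star_strict hS hSw htop hSne huniq
        have hβtop : S.sup' hSne a ≠ ⊤ := by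
          obtain ⟨e₀, he₀, hsup⟩ := Finset.exists_mem_eq_sup' hSne a
          rw [hsup]
          intro h
          exact htop (by rw [← hSw]; exact WithTop.sum_eq_top.2 ⟨e₀, he₀, h⟩)
        obtain ⟨βr, hβr⟩ := WithTop.ne_top_iff_exists.1 hβtop
        have hβδ : S.sup' hSne a < ((Finset.range n) \ S).inf a := by
          refine (Finset.lt_inf_iff (lt_top_iff_ne_top.2 hβtop)).2 (fun e he => ?_)
          obtain ⟨he1, he2⟩ := Finset.mem_sdiff.1 he
          exact hstar e he1 he2
        obtain ⟨y, hy1, hy2⟩ := exists_between hβδ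
        obtain ⟨b, hb⟩ := WithTop.ne_top_iff_exists.1 (ne_top_of_lt hy2)
        rw [← hb] at hy1 hy2
        have hbout : ∀ e ∈ Finset.range n, e ∉ S → ((b : ℝ) : WithTop ℝ) < a e :=
          fun e he hes =>
            lt_of_lt_of_le hy2 (Finset.inf_le (Finset.mem_sdiff.2 ⟨he, hes⟩))
        have hβrb : βr < b := by
          rw [← hβr] at hy1
          exact WithTop.coe_lt_coe.1 hy1
        set mi := WithTop.untopD 0 (Mmin n a i) with hmidef
        have hMico : Mmin n a i = ↑mi := (coe_untop' htop).symm
        have hstrictcmp : ∀ k : ℕ, k ≤ n → k ≠ i → Mmin n a k ≠ ⊤ →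
            Mmin n a i + (n - i) • ((b : ℝ) : WithTop ℝ) <
              Mmin n a k + (n - k) • ((b : ℝ) : WithTop ℝ) := by
          intro k hkn hki hMktop
          set mkk := WithTop.untopD 0 (Mmin n a k) with hmkkdef
          have hMkco : Mmin n a k = ↑mkk := (coe_untop' hMktop).symm
          rcases lt_or_gt_of_ne hki with hlt | hgt
          · -- k < i
            have hlow := Mmin_low hin (le_of_lt hlt) (S.sup' hSne a) hS
              (fun e he => Finset.le_sup' a he)
            rw [hMico, hMkco, ← hβr, smul_coe, ← WithTop.coe_add] at hlow
            have hlowr : mi ≤ mkk + ((i - k : ℕ) : ℝ) * βr := WithTop.coe_le_coe.1 hlow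
            rw [hMico, hMkco, smul_coe, smul_coe, ← WithTop.coe_add, ← WithTop.coe_add]
            rw [WithTop.coe_lt_coe]
            have hik1 : (1 : ℝ) ≤ ((i - k : ℕ) : ℝ) := Nat.one_le_cast.2 (by omega)
            have hcast1 : ((n - k : ℕ) : ℝ) = ((i - k : ℕ) : ℝ) + ((n - i : ℕ) : ℝ) := by
              rw [← Nat.cast_add]; congr 1; omega
            have hprod : ((i - k : ℕ) : ℝ) * βr < ((i - k : ℕ) : ℝ) * b :=
              mul_lt_mul_of_pos_left hβrb (by linarith)
            have hcast1b : ((n - k : ℕ) : ℝ) * b =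
                ((i - k : ℕ) : ℝ) * b + ((n - i : ℕ) : ℝ) * b := by
              rw [hcast1]; ring
            linarith
          · -- i < k
            have h := Mmin_high_strict hkn hgt hMktop htop b hS hbout
            have hsmulne : ((n - k) • ((b : ℝ) : WithTop ℝ)) ≠ ⊤ := by
              rw [smul_coe]; exact WithTop.coe_ne_top
            have h2 := WithTop.add_lt_add_right hsmulne h
            have hre : (Mmin n a i + (k - i) • ((b : ℝ) : WithTop ℝ)) +
                (n - k) • ((b : ℝ) : WithTop ℝ) =
                Mmin n a i + (n - i) • ((b : ℝ) : WithTop ℝ) := by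
              rw [add_assoc, ← add_nsmul]
              congr 2
              omega
            rw [hre] at h2
            exact h2
        obtain ⟨j₀, hj₀, hFj⟩ := Finset.exists_mem_eq_inf (Finset.range (n + 1))
          ⟨0, Finset.mem_range.2 (by omega)⟩
          (fun j => c j + (((j : ℝ) * b : ℝ) : WithTop ℝ))
        have hj₀n : j₀ ≤ n := by have := Finset.mem_range.1 hj₀; omega
        have hc₀ : Mmin n a (n - j₀) ≤ c j₀ := by
          rcases Nat.eq_zero_or_pos (n - j₀) with h0 | hpos
          · rw [h0, Mmin_zero]
            have hj : j₀ = n := by omega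
            rw [hj, hmonic]
          · have h := hLB (n - j₀) hpos (by omega)
            rwa [show n - (n - j₀) = j₀ from by omega] at h
        have hGle := gsum_le (a := a) b hin
        have hchain : Mmin n a (n - j₀) + (n - (n - j₀)) • ((b : ℝ) : WithTop ℝ) ≤
            Mmin n a i + (n - i) • ((b : ℝ) : WithTop ℝ) := by
          calc Mmin n a (n - j₀) + (n - (n - j₀)) • ((b : ℝ) : WithTop ℝ)
              ≤ c j₀ + (n - (n - j₀)) • ((b : ℝ) : WithTop ℝ) := add_le_add hc₀ le_rfl
            _ = c j₀ + (((j₀ : ℝ) * b : ℝ) : WithTop ℝ) := by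
                rw [show n - (n - j₀) = j₀ from by omega, smul_coe]
            _ = (Finset.range (n + 1)).inf
                  (fun j => c j + (((j : ℝ) * b : ℝ) : WithTop ℝ)) := hFj.symm
            _ = ∑ e ∈ Finset.range n, min ((b : ℝ) : WithTop ℝ) (a e) := heq b
            _ ≤ Mmin n a i + (n - i) • ((b : ℝ) : WithTop ℝ) := hGle
        have hMi₀top : Mmin n a (n - j₀) ≠ ⊤ := by
          intro h
          rw [h, top_add] at hchain
          have h3 : Mmin n a i + (n - i) • ((b : ℝ) : WithTop ℝ) = ⊤ := top_le_iff.1 hchain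
          rw [smul_coe] at h3
          exact (WithTop.add_ne_top.2 ⟨htop, WithTop.coe_ne_top⟩) h3
        have hii : n - j₀ = i := by
          by_contra hne
          exact absurd hchain (not_le.2 (hstrictcmp (n - j₀) (by omega) hne hMi₀top))
        have hj₀val : j₀ = n - i := by omega
        have h1 : c (n - i) + ((((n - i : ℕ) : ℝ) * b : ℝ) : WithTop ℝ) ≤
            Mmin n a i + ((((n - i : ℕ) : ℝ) * b : ℝ) : WithTop ℝ) := by
          have h2 : c j₀ + (((j₀ : ℝ) * b : ℝ) : WithTop ℝ) ≤
              Mmin n a i + (n - i) • ((b : ℝ) : WithTop ℝ) := by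
            rw [← hFj, heq b]
            exact hGle
          rw [hj₀val] at h2
          rwa [smul_coe] at h2
        have hle2 := (WithTop.add_le_add_iff_right WithTop.coe_ne_top).1 h1
        exact le_antisymm hle2 (hLB i hi1 hin)
end

section
/- Fundamental theorem of tropical algebra: For every function f : ℝ → ℝ of the form f(b) = min_{0≤i≤n}(c̄_i + i·b) with c̄_n = 0 (extended reals c̄_i, not all ∞ needed beyond c̄_n), there is a sequence ā_1,…,ā_n ∈ ℝ ∪ {∞}, unique up to permutation, such that f(b) = Σ_{i=1}^n min(b, ā_i) for all b ∈ ℝ. -/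
namespace TropicalFTA

open Finset

lemma range_succ_eq (m : ℕ) :
    range (m + 2) = insert 0 ((range (m + 1)).image Nat.succ) := by
  ext k
  simp only [mem_range, mem_insert, mem_image, Nat.succ_eq_add_one]
  constructor
  · rintro h
    rcases k with _ | k
    · exact Or.inl rfl
    · exact Or.inr ⟨k, by omega, rfl⟩
  · rintro (rfl | ⟨j, hj, rfl⟩) <;> omega

lemma inf_split (m : ℕ) (f : ℕ → WithTop ℝ) :
    (range (m + 2)).inf f = min (f 0) ((range (m + 1)).inf fun j => f (j + 1)) := by
  rw [range_succ_eq, inf_insert, inf_image]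
  rfl

lemma inf_add_const {s : Finset ℕ} (hs : s.Nonempty) (g : ℕ → WithTop ℝ) (x : WithTop ℝ) :
    s.inf (fun j => g j + x) = s.inf g + x := by
  induction hs using Finset.Nonempty.cons_induction with
  | singleton a => simp
  | cons a s ha hs ih => rw [inf_cons, inf_cons, ih, min_add_add_right]


lemma coe_min_term (b : ℝ) (x : WithTop ℝ) :
    min (b : WithTop ℝ) x = ((if x = ⊤ then b else min b (x.untopD 0) : ℝ) : WithTop ℝ) := by
  split_ifs with h
  · simp [h]
  · lift x to ℝ using h
    simp [WithTop.coe_min]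

lemma exists_t (m : ℕ) (a' : Fin m → WithTop ℝ) (γ : ℝ) :
    ∃ t : ℝ, (t : WithTop ℝ) + ∑ e : Fin m, min (t : WithTop ℝ) (a' e) = (γ : WithTop ℝ) := by
  set r : Fin m → ℝ → ℝ := fun e b => if a' e = ⊤ then b else min b ((a' e).untopD 0) with hr
  set φ : ℝ → ℝ := fun b => b + ∑ e : Fin m, r e b with hφ
  have hφc : Continuous φ := by
    apply continuous_id.add
    apply continuous_finset_sum
    intro e _
    by_cases h : a' e = ⊤ <;> simp only [hr, h, if_true, if_false]
    · exact continuous_id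
    · exact continuous_id.min continuous_const
  have hrle : ∀ e b, r e b ≤ b := by
    intro e b
    by_cases h : a' e = ⊤ <;> simp [hr, h, min_le_left]
  have hrge : ∀ e b, min b ((a' e).untopD 0) ≤ r e b := by
    intro e b
    by_cases h : a' e = ⊤ <;> simp [hr, h, min_le_left]
  -- lower point
  set L : ℝ := min γ 0 with hL
  have hLle : φ L ≤ γ := by
    have h1 : ∑ e : Fin m, r e L ≤ ∑ e : Fin m, (0 : ℝ) :=
      Finset.sum_le_sum fun e _ => (hrle e L).trans (min_le_right _ _)
    simp only [Finset.sum_const_zero] at h1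
    have : φ L ≤ L + 0 := add_le_add_right h1 L
    simpa using this.trans (by simp [hL, min_le_left])
  set U : ℝ := max 0 (γ + ∑ e : Fin m, |(a' e).untopD 0|) with hU
  have hUge : γ ≤ φ U := by
    have h0U : (0:ℝ) ≤ U := le_max_left _ _
    have h1 : ∀ e : Fin m, -|(a' e).untopD 0| ≤ r e U := by
      intro e
      refine le_trans ?_ (hrge e U)
      rcases le_total U ((a' e).untopD 0) with h | h
      · rw [min_eq_left h]; exact le_trans (neg_nonpos.2 (abs_nonneg _)) h0U
      · rw [min_eq_right h]; exact neg_abs_le _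
    have h2 : ∑ e : Fin m, -|(a' e).untopD 0| ≤ ∑ e : Fin m, r e U :=
      Finset.sum_le_sum fun e _ => h1 e
    have h3 : U - ∑ e : Fin m, |(a' e).untopD 0| ≤ φ U := by
      rw [sub_eq_add_neg, ← Finset.sum_neg_distrib]
      exact add_le_add_right h2 U
    refine le_trans ?_ h3
    have : γ + ∑ e : Fin m, |(a' e).untopD 0| ≤ U := le_max_right _ _
    linarith
  have hLU : L ≤ U := (min_le_right _ _).trans (le_max_left _ _)
  obtain ⟨t, -, ht⟩ := intermediate_value_Icc hLU hφc.continuousOn ⟨hLle, hUge⟩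
  refine ⟨t, ?_⟩
  rw [← ht]
  simp only [hφ, WithTop.coe_add]
  congr 1
  rw [WithTop.coe_sum]
  exact Finset.sum_congr rfl fun e _ => coe_min_term t (a' e)


lemma existsFact (n : ℕ) (c : ℕ → WithTop ℝ) (hc : c n = 0) :
    ∃ a : Fin n → WithTop ℝ, ∀ b : ℝ,
      (range (n + 1)).inf (fun i => c i + (((i : ℝ) * b : ℝ) : WithTop ℝ)) =
        ∑ e : Fin n, min (b : WithTop ℝ) (a e) := by
  induction n generalizing c with
  | zero =>
    refine ⟨Fin.elim0, fun b => ?_⟩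
    simp [hc]
  | succ m ih =>
    obtain ⟨a', ha'⟩ := ih (fun j => c (j + 1)) hc
    have key : ∀ b : ℝ,
        (range (m + 1 + 1)).inf (fun i => c i + (((i : ℝ) * b : ℝ) : WithTop ℝ)) =
          min (c 0) ((b : WithTop ℝ) + ∑ e : Fin m, min (b : WithTop ℝ) (a' e)) := by
      intro b
      rw [inf_split]
      congr 1
      · norm_num
      · have h2 : ((range (m + 1)).inf fun j =>
              (fun i => c i + (((i : ℝ) * b : ℝ) : WithTop ℝ)) (j + 1)) =
            (range (m + 1)).inf fun j =>
              (c (j + 1) + (((j : ℝ) * b : ℝ) : WithTop ℝ)) + (b : WithTop ℝ) := by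
          refine Finset.inf_congr rfl fun j _ => ?_
          simp only
          have hcast : ((j + 1 : ℕ) : ℝ) * b = (j : ℝ) * b + b := by push_cast; ring
          rw [hcast, WithTop.coe_add, add_assoc]
        rw [h2, inf_add_const (nonempty_range_iff.2 (Nat.succ_ne_zero _)), ha' b, add_comm]
    by_cases hc0 : c 0 = ⊤
    · refine ⟨Fin.cons ⊤ a', fun b => ?_⟩
      rw [key b, hc0, Fin.sum_univ_succ]
      simp only [Fin.cons_zero, Fin.cons_succ]
      rw [min_eq_right le_top, min_eq_left le_top]
    · lift c 0 to ℝ using hc0 with γ hγ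
      obtain ⟨t, ht⟩ := exists_t m a' γ
      refine ⟨Fin.cons (↑t) (fun e => min (a' e) ↑t), fun b => ?_⟩
      rw [key b, Fin.sum_univ_succ]
      simp only [Fin.cons_zero, Fin.cons_succ]
      rcases le_total b t with hb | hb
      · have hbt : (b : WithTop ℝ) ≤ (t : WithTop ℝ) := WithTop.coe_le_coe.2 hb
        have e1 : ∀ e : Fin m, min (b : WithTop ℝ) (min (a' e) ↑t) = min (b : WithTop ℝ) (a' e) := by
          intro e
          rw [min_comm (a' e), ← min_assoc, min_eq_left hbt]
        have e3 : (b : WithTop ℝ) + ∑ e : Fin m, min (b : WithTop ℝ) (a' e) ≤ (γ : WithTop ℝ) := by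
          rw [← ht]
          exact add_le_add hbt (Finset.sum_le_sum fun e _ => min_le_min hbt le_rfl)
        rw [min_eq_right e3, min_eq_left hbt, Finset.sum_congr rfl fun e _ => e1 e]
      · have htb : (t : WithTop ℝ) ≤ (b : WithTop ℝ) := WithTop.coe_le_coe.2 hb
        have e1 : ∀ e : Fin m, min (b : WithTop ℝ) (min (a' e) ↑t) = min (t : WithTop ℝ) (a' e) := by
          intro e
          rw [min_eq_right ((min_le_right _ _).trans htb), min_comm]
        have e3 : (γ : WithTop ℝ) ≤ (b : WithTop ℝ) + ∑ e : Fin m, min (b : WithTop ℝ) (a' e) := by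
          rw [← ht]
          exact add_le_add htb (Finset.sum_le_sum fun e _ => min_le_min htb le_rfl)
        rw [min_eq_left e3, min_eq_right htb, Finset.sum_congr rfl fun e _ => e1 e, ht]


lemma sum_min_eq_const_iff (n : ℕ) (B : Fin n → WithTop ℝ) (b : ℝ) :
    (∑ e : Fin n, min (b : WithTop ℝ) (B e) = ∑ _e : Fin n, (b : WithTop ℝ)) ↔
      ∀ e, (b : WithTop ℝ) ≤ B e := by
  constructor
  · intro H e
    set y : Fin n → ℝ := fun e => if B e = ⊤ then b else min b ((B e).untopD 0) with hy
    have hcoe : ∀ e, min (b : WithTop ℝ) (B e) = ((y e : ℝ) : WithTop ℝ) :=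
      fun e => coe_min_term b (B e)
    rw [Finset.sum_congr rfl (fun e _ => hcoe e)] at H
    have H2 : ∑ e : Fin n, y e = ∑ _e : Fin n, b := by
      have := H
      rw [← WithTop.coe_sum, ← WithTop.coe_sum] at this
      exact_mod_cast this
    have hle : ∀ e ∈ Finset.univ, y e ≤ b := by
      intro e _
      by_cases h : B e = ⊤ <;> simp [hy, h, min_le_left]
    have := (Finset.sum_eq_sum_iff_of_le hle).1 H2 e (Finset.mem_univ e)
    have hmin : min (b : WithTop ℝ) (B e) = (b : WithTop ℝ) := by
      rw [hcoe e, this]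
    exact min_eq_left_iff.1 hmin
  · intro H
    exact Finset.sum_congr rfl fun e _ => min_eq_left (H e)

lemma eq_of_coe_le_iff (x y : WithTop ℝ) (h : ∀ b : ℝ, (b : WithTop ℝ) ≤ x ↔ (b : WithTop ℝ) ≤ y) :
    x = y := by
  have aux : ∀ x y : WithTop ℝ,
      (∀ b : ℝ, (b : WithTop ℝ) ≤ x → (b : WithTop ℝ) ≤ y) → x ≤ y := by
    intro x y hxy
    by_contra hlt
    rw [not_le] at hlt
    rcases eq_or_ne y ⊤ with rfl | hy
    · exact absurd hlt (not_lt.2 le_top)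
    · lift y to ℝ using hy
      rcases eq_or_ne x ⊤ with rfl | hx
      · have := hxy (y + 1) le_top
        rw [WithTop.coe_le_coe] at this
        linarith
      · lift x to ℝ using hx
        have := hxy x le_rfl
        rw [WithTop.coe_le_coe] at this
        rw [WithTop.coe_lt_coe] at hlt
        linarith
  exact le_antisymm (aux x y fun b hb => (h b).1 hb) (aux y x fun b hb => (h b).2 hb)

lemma mono_uniq (n : ℕ) (B B' : Fin n → WithTop ℝ) (hB : Monotone B) (hB' : Monotone B')
    (H : ∀ b : ℝ, ∑ e : Fin n, min (b : WithTop ℝ) (B e) = ∑ e : Fin n, min (b : WithTop ℝ) (B' e)) :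
    B = B' := by
  induction n with
  | zero => funext i; exact i.elim0
  | succ m ih =>
    have h0 : B 0 = B' 0 := by
      apply eq_of_coe_le_iff
      intro b
      have l1 : ((b : WithTop ℝ) ≤ B 0) ↔ ∀ e, (b : WithTop ℝ) ≤ B e :=
        ⟨fun h e => h.trans (hB (Fin.zero_le e)), fun h => h 0⟩
      have l2 : ((b : WithTop ℝ) ≤ B' 0) ↔ ∀ e, (b : WithTop ℝ) ≤ B' e :=
        ⟨fun h e => h.trans (hB' (Fin.zero_le e)), fun h => h 0⟩
      rw [l1, l2, ← sum_min_eq_const_iff, ← sum_min_eq_const_iff, H b]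
    have htail : ∀ b : ℝ, ∑ e : Fin m, min (b : WithTop ℝ) (B e.succ) =
        ∑ e : Fin m, min (b : WithTop ℝ) (B' e.succ) := by
      intro b
      have hb := H b
      rw [Fin.sum_univ_succ, Fin.sum_univ_succ, h0] at hb
      have hne : min (b : WithTop ℝ) (B' 0) ≠ ⊤ :=
        ne_top_of_le_ne_top (WithTop.coe_ne_top) (min_le_left _ _)
      exact WithTop.add_left_cancel hne hb
    have hmB : Monotone (fun e : Fin m => B e.succ) :=
      fun x y h => hB (Fin.succ_le_succ_iff.2 h)
    have hmB' : Monotone (fun e : Fin m => B' e.succ) :=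
      fun x y h => hB' (Fin.succ_le_succ_iff.2 h)
    have heq := ih _ _ hmB hmB' htail
    funext i
    refine Fin.cases ?_ ?_ i
    · exact h0
    · intro j
      exact congrFun heq j

lemma perm_uniq (n : ℕ) (A A' : Fin n → WithTop ℝ)
    (H : ∀ b : ℝ, ∑ e : Fin n, min (b : WithTop ℝ) (A e) = ∑ e : Fin n, min (b : WithTop ℝ) (A' e)) :
    ∃ σ : Equiv.Perm (Fin n), ∀ i : Fin n, A' i = A (σ i) := by
  set σ₁ := Tuple.sort A with hσ₁
  set σ₂ := Tuple.sort A' with hσ₂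
  have Hs : ∀ b : ℝ, ∑ e : Fin n, min (b : WithTop ℝ) ((A ∘ σ₁) e) =
      ∑ e : Fin n, min (b : WithTop ℝ) ((A' ∘ σ₂) e) := by
    intro b
    calc ∑ e : Fin n, min (b : WithTop ℝ) (A (σ₁ e))
        = ∑ e : Fin n, min (b : WithTop ℝ) (A e) :=
          Equiv.sum_comp σ₁ (fun i => min (b : WithTop ℝ) (A i))
      _ = ∑ e : Fin n, min (b : WithTop ℝ) (A' e) := H b
      _ = ∑ e : Fin n, min (b : WithTop ℝ) (A' (σ₂ e)) :=
          (Equiv.sum_comp σ₂ (fun i => min (b : WithTop ℝ) (A' i))).symm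
  have heq := mono_uniq n (A ∘ σ₁) (A' ∘ σ₂) (Tuple.monotone_sort A) (Tuple.monotone_sort A') Hs
  refine ⟨σ₂.symm.trans σ₁, fun i => ?_⟩
  have := congrFun heq (σ₂.symm i)
  simp only [Function.comp_apply, Equiv.apply_symm_apply] at this
  simpa using this.symm

end TropicalFTA

/-- Fundamental theorem of tropical algebra: every tropical polynomial function
`b ↦ min_{0 ≤ i ≤ n} (c̄_i + i·b)` with `c̄_i ∈ ℝ ∪ {∞}` and `c̄_n = 0` (monic) agrees on
`ℝ` with `b ↦ Σ_{e=0}^{n-1} min(b, ā_e)` for a sequence `ā_0, …, ā_{n-1} ∈ ℝ ∪ {∞}`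
which is unique up to permutation. -/
theorem fundamental_theorem_of_tropical_algebra (n : ℕ) (c : ℕ → WithTop ℝ)
    (hmonic : c n = 0) :
    ∃ a : Fin n → WithTop ℝ,
      (∀ b : ℝ,
        (Finset.range (n + 1)).inf (fun i => c i + (((i : ℝ) * b : ℝ) : WithTop ℝ)) =
          ∑ e : Fin n, min (b : WithTop ℝ) (a e)) ∧
      ∀ a' : Fin n → WithTop ℝ,
        (∀ b : ℝ,
          (Finset.range (n + 1)).inf (fun i => c i + (((i : ℝ) * b : ℝ) : WithTop ℝ)) =
            ∑ e : Fin n, min (b : WithTop ℝ) (a' e)) →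
        ∃ σ : Equiv.Perm (Fin n), ∀ i : Fin n, a' i = a (σ i) := by
  obtain ⟨a, ha⟩ := TropicalFTA.existsFact n c hmonic
  refine ⟨a, ha, ?_⟩
  intro a' ha'
  exact TropicalFTA.perm_uniq n a a' fun b => by rw [← ha b, ha' b]
end
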